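/- arXiv:1801.07171 — 9 statements merged into one kernel-verified Lean document; each statement's English description precedes it below -/
import Mathlib

section
/- Let σ = -1 and let q_1,…,q_n be a negative hyperbolic rotopulsator of the curved n-body problem such that the functions ρ_1,…,ρ_n are all equal to one common function ρ. Then all the constants β_1,…,β_n are equal, i.e., there is a constant β such that q_{i3}(t) = ρ(t)·sinh(φ(t)+β) and q_{i4}(t) = ρ(t)·cosh(φ(t)+β) for every i ∈ {1,…,n} and every t. -/
open Real Finset

/-- The "curved inner product" `x ⊙ y = x₁y₁ + x₂y₂ + x₃y₃ + σx₄y₄` on `ℝ⁴`. -/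
noncomputable def odot (σ : ℝ) (x y : Fin 4 → ℝ) : ℝ :=
  x 0 * y 0 + x 1 * y 1 + x 2 * y 2 + σ * x 3 * y 3

/-- If `q₁,…,qₙ` is a negative hyperbolic rotopulsator of the curved `n`-body problem
whose functions `ρ₁,…,ρₙ` are all equal to one common function `ρ`, then all the
constants `β₁,…,βₙ` are equal: there is a constant `b` with
`q_{i3} = ρ sinh(φ + b)` and `q_{i4} = ρ cosh(φ + b)` for all `i` and `t`. -/
theorem negative_hyperbolic_rotopulsator_common_rho_all_beta_equal
    (σ : ℝ) (hσ : σ = -1) (n : ℕ) (hn : 1 ≤ n)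
    (q : Fin n → ℝ → Fin 4 → ℝ) (m : Fin n → ℝ)
    (hm : ∀ i, 0 < m i)
    -- the curves are twice differentiable
    (hq1 : ∀ i k, Differentiable ℝ fun t => q i t k)
    (hq2 : ∀ i k, Differentiable ℝ (deriv fun t => q i t k))
    -- the bodies move on `M³_σ`
    (hsphere : ∀ i t, odot σ (q i t) (q i t) = σ)
    -- singularity avoidance: `σ - σ(q_i ⊙ q_j)² > 0` for `i ≠ j`
    (hsep : ∀ i j, i ≠ j → ∀ t, 0 < σ - σ * (odot σ (q i t) (q j t)) ^ 2)
    -- the equations of motion of the curved n-body problem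
    (heom : ∀ i t k,
      deriv (deriv fun s => q i s k) t =
        (∑ j ∈ Finset.univ.erase i,
          m j * (q j t k - σ * odot σ (q i t) (q j t) * q i t k) /
            (σ - σ * (odot σ (q i t) (q j t)) ^ 2) ^ ((3 : ℝ) / 2))
        - σ * odot σ (fun l => deriv (fun s => q i s l) t)
            (fun l => deriv (fun s => q i s l) t) * q i t k)
    -- negative hyperbolic rotopulsator structure with common `ρ`
    (ρ φ : ℝ → ℝ) (hρpos : ∀ t, 0 < ρ t)
    (hρ1 : Differentiable ℝ ρ) (hρ2 : Differentiable ℝ (deriv ρ))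
    (hφ1 : Differentiable ℝ φ) (hφ2 : Differentiable ℝ (deriv φ))
    (β : Fin n → ℝ)
    (hrep : ∀ i t, q i t 2 = ρ t * Real.sinh (φ t + β i) ∧
                   q i t 3 = ρ t * Real.cosh (φ t + β i)) :
    ∃ b : ℝ, ∀ i t, q i t 2 = ρ t * Real.sinh (φ t + b) ∧
                    q i t 3 = ρ t * Real.cosh (φ t + b) := by
  subst hσ
  -- abbreviations
  set D : Fin n → Fin n → ℝ → ℝ := fun i j t =>
    ((-1 : ℝ) - (-1) * (odot (-1) (q i t) (q j t)) ^ 2) ^ ((3 : ℝ) / 2) with hD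
  have hDpos : ∀ i j, i ≠ j → ∀ t, 0 < D i j t := by
    intro i j hij t
    exact Real.rpow_pos_of_pos (hsep i j hij t) _
  -- derivatives of components 2, 3 from the representation
  have hd2 : ∀ i, deriv (fun t => q i t 2) =
      fun t => deriv ρ t * Real.sinh (φ t + β i) +
        ρ t * (Real.cosh (φ t + β i) * deriv φ t) := by
    intro i
    have hfe : (fun t => q i t 2) = fun t => ρ t * Real.sinh (φ t + β i) :=
      funext fun t => (hrep i t).1
    funext t
    rw [hfe]
    exact (((hρ1 t).hasDerivAt.mul
      (((hφ1 t).hasDerivAt.add_const (β i)).sinh)).congr_deriv (by ring)).deriv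
  have hd3 : ∀ i, deriv (fun t => q i t 3) =
      fun t => deriv ρ t * Real.cosh (φ t + β i) +
        ρ t * (Real.sinh (φ t + β i) * deriv φ t) := by
    intro i
    have hfe : (fun t => q i t 3) = fun t => ρ t * Real.cosh (φ t + β i) :=
      funext fun t => (hrep i t).2
    funext t
    rw [hfe]
    exact (((hρ1 t).hasDerivAt.mul
      (((hφ1 t).hasDerivAt.add_const (β i)).cosh)).congr_deriv (by ring)).deriv
  -- the "angular momentum" W_i(t) = q₂'q₃ − q₃'q₂ = ρ²φ' is independent of i
  have hW : ∀ i, (fun t => deriv (fun s => q i s 2) t * q i t 3 -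
      deriv (fun s => q i s 3) t * q i t 2) = fun t => ρ t ^ 2 * deriv φ t := by
    intro i
    funext t
    rw [hd2 i, hd3 i, (hrep i t).1, (hrep i t).2]
    have h := Real.cosh_sq_sub_sinh_sq (φ t + β i)
    linear_combination (ρ t ^ 2 * deriv φ t) * h
  -- derivative of W_i equals q₂''q₃ − q₃''q₂
  have hDW : ∀ i t, deriv (fun s => deriv (fun u => q i u 2) s * q i s 3 -
      deriv (fun u => q i u 3) s * q i s 2) t =
      deriv (deriv fun s => q i s 2) t * q i t 3 -
        deriv (deriv fun s => q i s 3) t * q i t 2 := by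
    intro i t
    have h2' : HasDerivAt (fun s => deriv (fun u => q i u 2) s)
        (deriv (deriv fun u => q i u 2) t) t := ((hq2 i 2) t).hasDerivAt
    have h3' : HasDerivAt (fun s => deriv (fun u => q i u 3) s)
        (deriv (deriv fun u => q i u 3) t) t := ((hq2 i 3) t).hasDerivAt
    have h2 : HasDerivAt (fun s => q i s 2) (deriv (fun s => q i s 2) t) t :=
      ((hq1 i 2) t).hasDerivAt
    have h3 : HasDerivAt (fun s => q i s 3) (deriv (fun s => q i s 3) t) t :=
      ((hq1 i 3) t).hasDerivAt
    have := ((h2'.mul h3).sub (h3'.mul h2))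
    rw [HasDerivAt.deriv (f := fun s => deriv (fun u => q i u 2) s * q i s 3 -
      deriv (fun u => q i u 3) s * q i s 2) this]
    ring
  -- the equations of motion give the sum formula for q₂''q₃ − q₃''q₂
  have hA : ∀ i t, deriv (deriv fun s => q i s 2) t * q i t 3 -
      deriv (deriv fun s => q i s 3) t * q i t 2 =
      ∑ j ∈ Finset.univ.erase i,
        m j * (ρ t ^ 2 * Real.sinh (β j - β i)) / D i j t := by
    intro i t
    rw [heom i t 2, heom i t 3, sub_mul, sub_mul, Finset.sum_mul, Finset.sum_mul]
    have hterm : ∀ j ∈ Finset.univ.erase i,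
        m j * (q j t 2 - (-1) * odot (-1) (q i t) (q j t) * q i t 2) /
            ((-1) - (-1) * (odot (-1) (q i t) (q j t)) ^ 2) ^ ((3:ℝ)/2) * q i t 3 -
          m j * (q j t 3 - (-1) * odot (-1) (q i t) (q j t) * q i t 3) /
            ((-1) - (-1) * (odot (-1) (q i t) (q j t)) ^ 2) ^ ((3:ℝ)/2) * q i t 2 =
          m j * (ρ t ^ 2 * Real.sinh (β j - β i)) / D i j t := by
      intro j hj
      have key : q j t 2 * q i t 3 - q j t 3 * q i t 2 =
          ρ t ^ 2 * Real.sinh (β j - β i) := by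
        rw [(hrep i t).1, (hrep i t).2, (hrep j t).1, (hrep j t).2]
        have h := Real.sinh_sub (φ t + β j) (φ t + β i)
        have he : φ t + β j - (φ t + β i) = β j - β i := by ring
        rw [he] at h
        rw [h]; ring
      simp only [hD]
      linear_combination
        m j / (((-1 : ℝ) - (-1) * (odot (-1) (q i t) (q j t)) ^ 2) ^ ((3:ℝ)/2)) * key
    have hsum : (∑ j ∈ Finset.univ.erase i,
        m j * (q j t 2 - (-1) * odot (-1) (q i t) (q j t) * q i t 2) /
          ((-1) - (-1) * (odot (-1) (q i t) (q j t)) ^ 2) ^ ((3:ℝ)/2) * q i t 3) -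
        (∑ j ∈ Finset.univ.erase i,
        m j * (q j t 3 - (-1) * odot (-1) (q i t) (q j t) * q i t 3) /
          ((-1) - (-1) * (odot (-1) (q i t) (q j t)) ^ 2) ^ ((3:ℝ)/2) * q i t 2) =
        ∑ j ∈ Finset.univ.erase i,
          m j * (ρ t ^ 2 * Real.sinh (β j - β i)) / D i j t := by
      rw [← Finset.sum_sub_distrib]
      exact Finset.sum_congr rfl hterm
    linear_combination hsum
  -- hence the sums agree for all pairs of indices
  have hS : ∀ i i' t,
      (∑ j ∈ Finset.univ.erase i,
        m j * (ρ t ^ 2 * Real.sinh (β j - β i)) / D i j t) =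
      ∑ j ∈ Finset.univ.erase i',
        m j * (ρ t ^ 2 * Real.sinh (β j - β i')) / D i' j t := by
    intro i i' t
    rw [← hA i t, ← hA i' t, ← hDW i t, ← hDW i' t, hW i, hW i']
  -- pick indices where β is maximal and minimal
  have hne : (Finset.univ : Finset (Fin n)).Nonempty :=
    ⟨⟨0, hn⟩, Finset.mem_univ _⟩
  obtain ⟨i₀, -, hmax⟩ := Finset.exists_max_image Finset.univ β hne
  obtain ⟨i₁, -, hmin⟩ := Finset.exists_min_image Finset.univ β hne
  have hρ0 : (0 : ℝ) < ρ 0 ^ 2 := pow_pos (hρpos 0) 2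
  -- each term of the sum at i₀ is nonpositive
  have hnonpos : ∀ j ∈ Finset.univ.erase i₀,
      m j * (ρ 0 ^ 2 * Real.sinh (β j - β i₀)) / D i₀ j 0 ≤ 0 := by
    intro j hj
    have hji : j ≠ i₀ := Finset.ne_of_mem_erase hj
    have hDp := hDpos i₀ j (Ne.symm hji) 0
    have hs : Real.sinh (β j - β i₀) ≤ 0 := by
      have : β j - β i₀ ≤ 0 := by
        have := hmax j (Finset.mem_univ j); linarith
      calc Real.sinh (β j - β i₀) ≤ Real.sinh 0 := Real.sinh_le_sinh.2 this
        _ = 0 := Real.sinh_zero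
    have hnum : m j * (ρ 0 ^ 2 * Real.sinh (β j - β i₀)) ≤ 0 := by
      nlinarith [mul_nonneg (hm j).le hρ0.le, hs]
    exact div_nonpos_of_nonpos_of_nonneg hnum hDp.le
  -- the sum at i₁ is nonneg
  have hnonneg : (0:ℝ) ≤ ∑ j ∈ Finset.univ.erase i₁,
      m j * (ρ 0 ^ 2 * Real.sinh (β j - β i₁)) / D i₁ j 0 := by
    apply Finset.sum_nonneg
    intro j hj
    have hji : j ≠ i₁ := Finset.ne_of_mem_erase hj
    have hDp := hDpos i₁ j (Ne.symm hji) 0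
    have hs : 0 ≤ Real.sinh (β j - β i₁) := by
      have : (0:ℝ) ≤ β j - β i₁ := by
        have := hmin j (Finset.mem_univ j); linarith
      calc (0:ℝ) = Real.sinh 0 := Real.sinh_zero.symm
        _ ≤ Real.sinh (β j - β i₁) := Real.sinh_le_sinh.2 this
    have hρ0' : (0 : ℝ) ≤ ρ 0 ^ 2 := (pow_pos (hρpos 0) 2).le
    exact div_nonneg (mul_nonneg (hm j).le (mul_nonneg hρ0' hs)) hDp.le
  have hzero : ∑ j ∈ Finset.univ.erase i₀,
      m j * (ρ 0 ^ 2 * Real.sinh (β j - β i₀)) / D i₀ j 0 = 0 := by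
    have hle := Finset.sum_nonpos hnonpos
    have heq := hS i₀ i₁ 0
    linarith
  have hall : ∀ j, β j = β i₀ := by
    intro j
    by_cases hji : j = i₀
    · rw [hji]
    · have hj : j ∈ Finset.univ.erase i₀ :=
        Finset.mem_erase.2 ⟨hji, Finset.mem_univ j⟩
      have hz := (Finset.sum_eq_zero_iff_of_nonpos hnonpos).1 hzero j hj
      have hDp := hDpos i₀ j (fun h => hji h.symm) 0
      rcases div_eq_zero_iff.1 hz with h | h
      · have hs : Real.sinh (β j - β i₀) = 0 := by
          rcases mul_eq_zero.1 h with h' | h'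
          · exact absurd h' (hm j).ne'
          · rcases mul_eq_zero.1 h' with h'' | h''
            · exact absurd h'' hρ0.ne'
            · exact h''
        have := Real.sinh_eq_zero.1 hs
        linarith
      · exact absurd h hDp.ne'
  exact ⟨β i₀, fun i t => by rw [← hall i]; exact hrep i t⟩
end

section
/- Let σ = -1 and let q_1,…,q_n be a negative hyperbolic rotopulsator of the curved n-body problem such that the functions ρ_1,…,ρ_n are all equal to one common function ρ. Then the identity 2ρ'(t)φ'(t) + ρ(t)φ''(t) = 0 holds for all t. -/
open Real Finset

lemma aux_sinh (ρ φ : ℝ → ℝ)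
    (hρ1 : Differentiable ℝ ρ) (hρ2 : Differentiable ℝ (deriv ρ))
    (hφ1 : Differentiable ℝ φ) (hφ2 : Differentiable ℝ (deriv φ)) (b t : ℝ) :
    deriv (deriv (fun s => ρ s * Real.sinh (φ s + b))) t =
      deriv (deriv ρ) t * Real.sinh (φ t + b)
      + 2 * deriv ρ t * Real.cosh (φ t + b) * deriv φ t
      + ρ t * Real.sinh (φ t + b) * (deriv φ t) ^ 2
      + ρ t * Real.cosh (φ t + b) * deriv (deriv φ) t := by
  have hφb : ∀ x : ℝ, HasDerivAt (fun s => φ s + b) (deriv φ x) x := fun x =>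
    ((hφ1 x).hasDerivAt).add_const b
  have hs : ∀ x : ℝ, HasDerivAt (fun s => Real.sinh (φ s + b))
      (Real.cosh (φ x + b) * deriv φ x) x := fun x =>
    (hφb x).sinh
  have hc : ∀ x : ℝ, HasDerivAt (fun s => Real.cosh (φ s + b))
      (Real.sinh (φ x + b) * deriv φ x) x := fun x =>
    (hφb x).cosh
  have h1 : deriv (fun s => ρ s * Real.sinh (φ s + b)) =
      fun x => deriv ρ x * Real.sinh (φ x + b) + ρ x * (Real.cosh (φ x + b) * deriv φ x) := by
    funext x
    exact (((hρ1 x).hasDerivAt).mul (hs x)).deriv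
  rw [h1]
  have h2 : HasDerivAt
      (fun x => deriv ρ x * Real.sinh (φ x + b) + ρ x * (Real.cosh (φ x + b) * deriv φ x))
      (deriv (deriv ρ) t * Real.sinh (φ t + b)
        + deriv ρ t * (Real.cosh (φ t + b) * deriv φ t)
        + (deriv ρ t * (Real.cosh (φ t + b) * deriv φ t)
          + ρ t * (Real.sinh (φ t + b) * deriv φ t * deriv φ t
            + Real.cosh (φ t + b) * deriv (deriv φ) t))) t :=
    (((hρ2 t).hasDerivAt).mul (hs t)).add
      (((hρ1 t).hasDerivAt).mul ((hc t).mul ((hφ2 t).hasDerivAt)))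
  rw [h2.deriv]; ring

lemma aux_cosh (ρ φ : ℝ → ℝ)
    (hρ1 : Differentiable ℝ ρ) (hρ2 : Differentiable ℝ (deriv ρ))
    (hφ1 : Differentiable ℝ φ) (hφ2 : Differentiable ℝ (deriv φ)) (b t : ℝ) :
    deriv (deriv (fun s => ρ s * Real.cosh (φ s + b))) t =
      deriv (deriv ρ) t * Real.cosh (φ t + b)
      + 2 * deriv ρ t * Real.sinh (φ t + b) * deriv φ t
      + ρ t * Real.cosh (φ t + b) * (deriv φ t) ^ 2
      + ρ t * Real.sinh (φ t + b) * deriv (deriv φ) t := by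
  have hφb : ∀ x : ℝ, HasDerivAt (fun s => φ s + b) (deriv φ x) x := fun x =>
    ((hφ1 x).hasDerivAt).add_const b
  have hs : ∀ x : ℝ, HasDerivAt (fun s => Real.sinh (φ s + b))
      (Real.cosh (φ x + b) * deriv φ x) x := fun x =>
    (hφb x).sinh
  have hc : ∀ x : ℝ, HasDerivAt (fun s => Real.cosh (φ s + b))
      (Real.sinh (φ x + b) * deriv φ x) x := fun x =>
    (hφb x).cosh
  have h1 : deriv (fun s => ρ s * Real.cosh (φ s + b)) =
      fun x => deriv ρ x * Real.cosh (φ x + b) + ρ x * (Real.sinh (φ x + b) * deriv φ x) := by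
    funext x
    exact (((hρ1 x).hasDerivAt).mul (hc x)).deriv
  rw [h1]
  have h2 : HasDerivAt
      (fun x => deriv ρ x * Real.cosh (φ x + b) + ρ x * (Real.sinh (φ x + b) * deriv φ x))
      (deriv (deriv ρ) t * Real.cosh (φ t + b)
        + deriv ρ t * (Real.sinh (φ t + b) * deriv φ t)
        + (deriv ρ t * (Real.sinh (φ t + b) * deriv φ t)
          + ρ t * (Real.cosh (φ t + b) * deriv φ t * deriv φ t
            + Real.sinh (φ t + b) * deriv (deriv φ) t))) t :=
    (((hρ2 t).hasDerivAt).mul (hc t)).add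
      (((hρ1 t).hasDerivAt).mul ((hs t).mul ((hφ2 t).hasDerivAt)))
  rw [h2.deriv]; ring

lemma aux_antisymm {n : ℕ} (f : Fin n → Fin n → ℝ) (hf : ∀ i j, f j i = - f i j) :
    ∑ i, ∑ j ∈ Finset.univ.erase i, f i j = 0 := by
  have h0 : ∀ i, f i i = 0 := fun i => by have := hf i i; linarith
  have h1 : ∀ i : Fin n, ∑ j ∈ Finset.univ.erase i, f i j = ∑ j, f i j := fun i =>
    Finset.sum_erase _ (h0 i)
  simp_rw [h1]
  have h3 : ∑ i, ∑ j, f i j = - ∑ i, ∑ j, f i j := by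
    calc ∑ i, ∑ j, f i j = ∑ i, ∑ j, f j i := Finset.sum_comm
      _ = ∑ i, ∑ j, -(f i j) := Finset.sum_congr rfl fun i _ => Finset.sum_congr rfl fun j _ => hf i j
      _ = - ∑ i, ∑ j, f i j := by simp
  linarith

/-- If `q₁,…,qₙ` is a negative hyperbolic rotopulsator of the curved `n`-body problem
whose functions `ρ₁,…,ρₙ` are all equal to one common function `ρ`, then
`2ρ'(t)φ'(t) + ρ(t)φ''(t) = 0` holds for all `t`. -/
theorem negative_hyperbolic_rotopulsator_common_rho_angular_identity
    (σ : ℝ) (hσ : σ = -1) (n : ℕ) (hn : 1 ≤ n)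
    (q : Fin n → ℝ → Fin 4 → ℝ) (m : Fin n → ℝ)
    (hm : ∀ i, 0 < m i)
    -- the curves are twice differentiable
    (hq1 : ∀ i k, Differentiable ℝ fun t => q i t k)
    (hq2 : ∀ i k, Differentiable ℝ (deriv fun t => q i t k))
    -- the bodies move on `M³_σ`
    (hsphere : ∀ i t, odot σ (q i t) (q i t) = σ)
    -- singularity avoidance: `σ - σ(q_i ⊙ q_j)² > 0` for `i ≠ j`
    (hsep : ∀ i j, i ≠ j → ∀ t, 0 < σ - σ * (odot σ (q i t) (q j t)) ^ 2)
    -- the equations of motion of the curved n-body problem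
    (heom : ∀ i t k,
      deriv (deriv fun s => q i s k) t =
        (∑ j ∈ Finset.univ.erase i,
          m j * (q j t k - σ * odot σ (q i t) (q j t) * q i t k) /
            (σ - σ * (odot σ (q i t) (q j t)) ^ 2) ^ ((3 : ℝ) / 2))
        - σ * odot σ (fun l => deriv (fun s => q i s l) t)
            (fun l => deriv (fun s => q i s l) t) * q i t k)
    -- negative hyperbolic rotopulsator structure with common `ρ`
    (ρ φ : ℝ → ℝ) (hρpos : ∀ t, 0 < ρ t)
    (hρ1 : Differentiable ℝ ρ) (hρ2 : Differentiable ℝ (deriv ρ))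
    (hφ1 : Differentiable ℝ φ) (hφ2 : Differentiable ℝ (deriv φ))
    (β : Fin n → ℝ)
    (hrep : ∀ i t, q i t 2 = ρ t * Real.sinh (φ t + β i) ∧
                   q i t 3 = ρ t * Real.cosh (φ t + β i)) :
    ∀ t, 2 * deriv ρ t * deriv φ t + ρ t * deriv (deriv φ) t = 0 := by
  intro t
  -- abbreviation for the target expression
  set E := 2 * deriv ρ t * deriv φ t + ρ t * deriv (deriv φ) t with hE
  have hdsymm : ∀ i j : Fin n, odot σ (q i t) (q j t) = odot σ (q j t) (q i t) := by
    intro i j; unfold odot; ring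
  -- the key per-body identity
  have key : ∀ i : Fin n, ρ t * E =
      ∑ j ∈ Finset.univ.erase i,
        m j * (ρ t ^ 2 * Real.sinh (β j - β i)) /
          (σ - σ * (odot σ (q i t) (q j t)) ^ 2) ^ ((3 : ℝ) / 2) := by
    intro i
    have e2 : deriv (deriv fun s => q i s 2) t =
        deriv (deriv ρ) t * Real.sinh (φ t + β i)
        + 2 * deriv ρ t * Real.cosh (φ t + β i) * deriv φ t
        + ρ t * Real.sinh (φ t + β i) * (deriv φ t) ^ 2
        + ρ t * Real.cosh (φ t + β i) * deriv (deriv φ) t := by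
      have hfun : (fun s => q i s 2) = fun s => ρ s * Real.sinh (φ s + β i) :=
        funext fun s => (hrep i s).1
      rw [hfun]
      exact aux_sinh ρ φ hρ1 hρ2 hφ1 hφ2 (β i) t
    have e3 : deriv (deriv fun s => q i s 3) t =
        deriv (deriv ρ) t * Real.cosh (φ t + β i)
        + 2 * deriv ρ t * Real.sinh (φ t + β i) * deriv φ t
        + ρ t * Real.cosh (φ t + β i) * (deriv φ t) ^ 2
        + ρ t * Real.sinh (φ t + β i) * deriv (deriv φ) t := by
      have hfun : (fun s => q i s 3) = fun s => ρ s * Real.cosh (φ s + β i) :=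
        funext fun s => (hrep i s).2
      rw [hfun]
      exact aux_cosh ρ φ hρ1 hρ2 hφ1 hφ2 (β i) t
    have lhs_eq : q i t 3 * deriv (deriv fun s => q i s 2) t
        - q i t 2 * deriv (deriv fun s => q i s 3) t = ρ t * E := by
      rw [e2, e3, (hrep i t).1, (hrep i t).2, hE]
      have hcs := Real.cosh_sq_sub_sinh_sq (φ t + β i)
      linear_combination (ρ t * (2 * deriv ρ t * deriv φ t + ρ t * deriv (deriv φ) t)) * hcs
    have h2 := heom i t 2
    have h3 := heom i t 3
    have main : ρ t * E =
        q i t 3 * (∑ j ∈ Finset.univ.erase i,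
          m j * (q j t 2 - σ * odot σ (q i t) (q j t) * q i t 2) /
            (σ - σ * (odot σ (q i t) (q j t)) ^ 2) ^ ((3 : ℝ) / 2))
        - q i t 2 * (∑ j ∈ Finset.univ.erase i,
          m j * (q j t 3 - σ * odot σ (q i t) (q j t) * q i t 3) /
            (σ - σ * (odot σ (q i t) (q j t)) ^ 2) ^ ((3 : ℝ) / 2)) := by
      linear_combination (-1 : ℝ) * lhs_eq + q i t 3 * h2 - q i t 2 * h3
    rw [main, Finset.mul_sum, Finset.mul_sum, ← Finset.sum_sub_distrib]
    refine Finset.sum_congr rfl fun j hj => ?_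
    have hji : j ≠ i := Finset.ne_of_mem_erase hj
    have hd : (σ - σ * (odot σ (q i t) (q j t)) ^ 2) ^ ((3 : ℝ) / 2) ≠ 0 :=
      (Real.rpow_pos_of_pos (hsep i j (Ne.symm hji) t) ((3 : ℝ) / 2)).ne'
    have hsinh : Real.sinh (β j - β i) =
        Real.sinh (φ t + β j) * Real.cosh (φ t + β i)
        - Real.cosh (φ t + β j) * Real.sinh (φ t + β i) := by
      rw [show β j - β i = (φ t + β j) - (φ t + β i) by ring, Real.sinh_sub]
    obtain ⟨hi2, hi3⟩ := hrep i t
    obtain ⟨hj2, hj3⟩ := hrep j t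
    rw [hi2, hi3, hj2, hj3, hsinh]
    field_simp
    ring
  -- sum the key identity against the masses and use antisymmetry
  have hT := aux_antisymm (fun i j =>
      m i * (m j * (ρ t ^ 2 * Real.sinh (β j - β i)) /
        (σ - σ * (odot σ (q i t) (q j t)) ^ 2) ^ ((3 : ℝ) / 2)))
    (by
      intro i j
      beta_reduce
      rw [← hdsymm i j]
      have hs : Real.sinh (β i - β j) = -Real.sinh (β j - β i) := by
        rw [show β i - β j = -(β j - β i) by ring, Real.sinh_neg]
      rw [hs]; ring)
  have hsum : (∑ i, m i) * (ρ t * E) = 0 := by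
    calc (∑ i, m i) * (ρ t * E) = ∑ i, m i * (ρ t * E) := Finset.sum_mul _ _ _
      _ = ∑ i, ∑ j ∈ Finset.univ.erase i,
            m i * (m j * (ρ t ^ 2 * Real.sinh (β j - β i)) /
              (σ - σ * (odot σ (q i t) (q j t)) ^ 2) ^ ((3 : ℝ) / 2)) := by
          refine Finset.sum_congr rfl fun i _ => ?_
          rw [key i, Finset.mul_sum]
      _ = 0 := hT
  have hmpos : 0 < ∑ i, m i := by
    have hne : (Finset.univ : Finset (Fin n)).Nonempty := by
      have : Nonempty (Fin n) := Fin.pos_iff_nonempty.mp hn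
      exact Finset.univ_nonempty
    exact Finset.sum_pos (fun i _ => hm i) hne
  have h1 : ρ t * E = 0 := by
    rcases mul_eq_zero.mp hsum with h | h
    · exact absurd h hmpos.ne'
    · exact h
  rcases mul_eq_zero.mp h1 with h | h
  · exact absurd h (hρpos t).ne'
  · exact h
end

section
/- Let σ = -1 and let q_1,…,q_n be a negative hyperbolic rotopulsator of the curved n-body problem such that the functions ρ_1,…,ρ_n are all equal to one common function ρ. Then for every i ∈ {1,…,n} and every t, 2ρ'(t)φ'(t) + ρ(t)φ''(t) = Σ_{j≠i} m_j·ρ(t)·sinh(β_j − β_i) / ((q_i(t)⊙q_j(t))² − 1)^{3/2}. -/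
open Real Finset

private lemma deriv_rho_sinh (ρ φ : ℝ → ℝ)
    (hρ1 : Differentiable ℝ ρ) (hφ1 : Differentiable ℝ φ) (b : ℝ) :
    (deriv fun u => ρ u * Real.sinh (φ u + b)) =
      fun u => deriv ρ u * Real.sinh (φ u + b) +
        ρ u * (Real.cosh (φ u + b) * deriv φ u) := by
  funext u
  exact ((hρ1 u).hasDerivAt.mul
    (((hφ1 u).hasDerivAt.add_const b).sinh)).deriv

private lemma deriv_rho_cosh (ρ φ : ℝ → ℝ)
    (hρ1 : Differentiable ℝ ρ) (hφ1 : Differentiable ℝ φ) (b : ℝ) :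
    (deriv fun u => ρ u * Real.cosh (φ u + b)) =
      fun u => deriv ρ u * Real.cosh (φ u + b) +
        ρ u * (Real.sinh (φ u + b) * deriv φ u) := by
  funext u
  exact ((hρ1 u).hasDerivAt.mul
    (((hφ1 u).hasDerivAt.add_const b).cosh)).deriv

private lemma deriv2_rho_sinh (ρ φ : ℝ → ℝ)
    (hρ1 : Differentiable ℝ ρ) (hρ2 : Differentiable ℝ (deriv ρ))
    (hφ1 : Differentiable ℝ φ) (hφ2 : Differentiable ℝ (deriv φ)) (b t : ℝ) :
    deriv (deriv fun u => ρ u * Real.sinh (φ u + b)) t =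
      deriv (deriv ρ) t * Real.sinh (φ t + b) +
      2 * deriv ρ t * (Real.cosh (φ t + b) * deriv φ t) +
      ρ t * (Real.sinh (φ t + b) * deriv φ t * deriv φ t +
        Real.cosh (φ t + b) * deriv (deriv φ) t) := by
  rw [deriv_rho_sinh ρ φ hρ1 hφ1 b]
  have h1 : HasDerivAt (fun u => deriv ρ u * Real.sinh (φ u + b))
      (deriv (deriv ρ) t * Real.sinh (φ t + b) +
        deriv ρ t * (Real.cosh (φ t + b) * deriv φ t)) t :=
    (hρ2 t).hasDerivAt.mul (((hφ1 t).hasDerivAt.add_const b).sinh)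
  have h2 : HasDerivAt (fun u => ρ u * (Real.cosh (φ u + b) * deriv φ u))
      (deriv ρ t * (Real.cosh (φ t + b) * deriv φ t) +
        ρ t * ((Real.sinh (φ t + b) * deriv φ t) * deriv φ t +
          Real.cosh (φ t + b) * deriv (deriv φ) t)) t :=
    (hρ1 t).hasDerivAt.mul
      ((((hφ1 t).hasDerivAt.add_const b).cosh).mul (hφ2 t).hasDerivAt)
  have := (h1.add h2).deriv
  exact this.trans (by ring)

private lemma deriv2_rho_cosh (ρ φ : ℝ → ℝ)
    (hρ1 : Differentiable ℝ ρ) (hρ2 : Differentiable ℝ (deriv ρ))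
    (hφ1 : Differentiable ℝ φ) (hφ2 : Differentiable ℝ (deriv φ)) (b t : ℝ) :
    deriv (deriv fun u => ρ u * Real.cosh (φ u + b)) t =
      deriv (deriv ρ) t * Real.cosh (φ t + b) +
      2 * deriv ρ t * (Real.sinh (φ t + b) * deriv φ t) +
      ρ t * (Real.cosh (φ t + b) * deriv φ t * deriv φ t +
        Real.sinh (φ t + b) * deriv (deriv φ) t) := by
  rw [deriv_rho_cosh ρ φ hρ1 hφ1 b]
  have h1 : HasDerivAt (fun u => deriv ρ u * Real.cosh (φ u + b))
      (deriv (deriv ρ) t * Real.cosh (φ t + b) +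
        deriv ρ t * (Real.sinh (φ t + b) * deriv φ t)) t :=
    (hρ2 t).hasDerivAt.mul (((hφ1 t).hasDerivAt.add_const b).cosh)
  have h2 : HasDerivAt (fun u => ρ u * (Real.sinh (φ u + b) * deriv φ u))
      (deriv ρ t * (Real.sinh (φ t + b) * deriv φ t) +
        ρ t * ((Real.cosh (φ t + b) * deriv φ t) * deriv φ t +
          Real.sinh (φ t + b) * deriv (deriv φ) t)) t :=
    (hρ1 t).hasDerivAt.mul
      ((((hφ1 t).hasDerivAt.add_const b).sinh).mul (hφ2 t).hasDerivAt)
  have := (h1.add h2).deriv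
  exact this.trans (by ring)

/-- If `q₁,…,qₙ` is a negative hyperbolic rotopulsator of the curved `n`-body problem
whose functions `ρ₁,…,ρₙ` are all equal to one common function `ρ`, then for every
`i` and every `t`,
`2ρ'φ' + ρφ'' = Σ_{j≠i} m_j ρ sinh(β_j − β_i) / ((q_i ⊙ q_j)² − 1)^{3/2}`. -/
theorem negative_hyperbolic_rotopulsator_common_rho_sinh_sum_identity
    (σ : ℝ) (hσ : σ = -1) (n : ℕ) (hn : 1 ≤ n)
    (q : Fin n → ℝ → Fin 4 → ℝ) (m : Fin n → ℝ)
    (hm : ∀ i, 0 < m i)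
    -- the curves are twice differentiable
    (hq1 : ∀ i k, Differentiable ℝ fun t => q i t k)
    (hq2 : ∀ i k, Differentiable ℝ (deriv fun t => q i t k))
    -- the bodies move on `M³_σ`
    (hsphere : ∀ i t, odot σ (q i t) (q i t) = σ)
    -- singularity avoidance: `σ - σ(q_i ⊙ q_j)² > 0` for `i ≠ j`
    (hsep : ∀ i j, i ≠ j → ∀ t, 0 < σ - σ * (odot σ (q i t) (q j t)) ^ 2)
    -- the equations of motion of the curved n-body problem
    (heom : ∀ i t k,
      deriv (deriv fun s => q i s k) t =
        (∑ j ∈ Finset.univ.erase i,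
          m j * (q j t k - σ * odot σ (q i t) (q j t) * q i t k) /
            (σ - σ * (odot σ (q i t) (q j t)) ^ 2) ^ ((3 : ℝ) / 2))
        - σ * odot σ (fun l => deriv (fun s => q i s l) t)
            (fun l => deriv (fun s => q i s l) t) * q i t k)
    -- negative hyperbolic rotopulsator structure with common `ρ`
    (ρ φ : ℝ → ℝ) (hρpos : ∀ t, 0 < ρ t)
    (hρ1 : Differentiable ℝ ρ) (hρ2 : Differentiable ℝ (deriv ρ))
    (hφ1 : Differentiable ℝ φ) (hφ2 : Differentiable ℝ (deriv φ))
    (β : Fin n → ℝ)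
    (hrep : ∀ i t, q i t 2 = ρ t * Real.sinh (φ t + β i) ∧
                   q i t 3 = ρ t * Real.cosh (φ t + β i)) :
    ∀ (i : Fin n) (t : ℝ),
      2 * deriv ρ t * deriv φ t + ρ t * deriv (deriv φ) t =
        ∑ j ∈ Finset.univ.erase i,
          m j * ρ t * Real.sinh (β j - β i) /
            ((odot σ (q i t) (q j t)) ^ 2 - 1) ^ ((3 : ℝ) / 2) := by
  subst hσ
  intro i t
  obtain ⟨hi2, hi3⟩ := hrep i t
  have hq2fun : (fun u => q i u 2) = fun u => ρ u * Real.sinh (φ u + β i) := by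
    funext u; exact (hrep i u).1
  have hq3fun : (fun u => q i u 3) = fun u => ρ u * Real.cosh (φ u + β i) := by
    funext u; exact (hrep i u).2
  set c := Real.cosh (φ t + β i) with hc
  set s := Real.sinh (φ t + β i) with hs
  have hA2 : deriv (deriv fun u => q i u 2) t =
      deriv (deriv ρ) t * s + 2 * deriv ρ t * (c * deriv φ t) +
        ρ t * (s * deriv φ t * deriv φ t + c * deriv (deriv φ) t) := by
    rw [hq2fun]; exact deriv2_rho_sinh ρ φ hρ1 hρ2 hφ1 hφ2 (β i) t
  have hA3 : deriv (deriv fun u => q i u 3) t =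
      deriv (deriv ρ) t * c + 2 * deriv ρ t * (s * deriv φ t) +
        ρ t * (c * deriv φ t * deriv φ t + s * deriv (deriv φ) t) := by
    rw [hq3fun]; exact deriv2_rho_cosh ρ φ hρ1 hρ2 hφ1 hφ2 (β i) t
  have E2 := (hA2.symm.trans (heom i t 2))
  have E3 := (hA3.symm.trans (heom i t 3))
  have hcs : c ^ 2 - s ^ 2 = 1 := Real.cosh_sq_sub_sinh_sq _
  set K := odot (-1) (fun l => deriv (fun u => q i u l) t)
      (fun l => deriv (fun u => q i u l) t) with hK
  calc 2 * deriv ρ t * deriv φ t + ρ t * deriv (deriv φ) t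
      = c * (deriv (deriv ρ) t * s + 2 * deriv ρ t * (c * deriv φ t) +
          ρ t * (s * deriv φ t * deriv φ t + c * deriv (deriv φ) t))
        - s * (deriv (deriv ρ) t * c + 2 * deriv ρ t * (s * deriv φ t) +
          ρ t * (c * deriv φ t * deriv φ t + s * deriv (deriv φ) t)) := by
        linear_combination (-(2 * deriv ρ t * deriv φ t + ρ t * deriv (deriv φ) t)) * hcs
    _ = c * ((∑ j ∈ Finset.univ.erase i,
          m j * (q j t 2 - (-1) * odot (-1) (q i t) (q j t) * q i t 2) /
            ((-1) - (-1) * (odot (-1) (q i t) (q j t)) ^ 2) ^ ((3 : ℝ) / 2))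
          - (-1) * K * q i t 2)
        - s * ((∑ j ∈ Finset.univ.erase i,
          m j * (q j t 3 - (-1) * odot (-1) (q i t) (q j t) * q i t 3) /
            ((-1) - (-1) * (odot (-1) (q i t) (q j t)) ^ 2) ^ ((3 : ℝ) / 2))
          - (-1) * K * q i t 3) := by rw [E2, E3]
    _ = (∑ j ∈ Finset.univ.erase i,
          (c * (m j * (q j t 2 - (-1) * odot (-1) (q i t) (q j t) * q i t 2) /
            ((-1) - (-1) * (odot (-1) (q i t) (q j t)) ^ 2) ^ ((3 : ℝ) / 2))
          - s * (m j * (q j t 3 - (-1) * odot (-1) (q i t) (q j t) * q i t 3) /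
            ((-1) - (-1) * (odot (-1) (q i t) (q j t)) ^ 2) ^ ((3 : ℝ) / 2))))
        + (s * ((-1) * K * q i t 3) - c * ((-1) * K * q i t 2)) := by
        rw [Finset.sum_sub_distrib, ← Finset.mul_sum, ← Finset.mul_sum]
        ring
    _ = ∑ j ∈ Finset.univ.erase i,
          m j * ρ t * Real.sinh (β j - β i) /
            ((odot (-1) (q i t) (q j t)) ^ 2 - 1) ^ ((3 : ℝ) / 2) := by
        have h0 : s * ((-1) * K * q i t 3) - c * ((-1) * K * q i t 2) = 0 := by
          rw [hi2, hi3]; ring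
        rw [h0, add_zero]
        refine Finset.sum_congr rfl fun j hj => ?_
        obtain ⟨hj2, hj3⟩ := hrep j t
        set α := odot (-1) (q i t) (q j t) with hαd
        have hden : ((-1 : ℝ) - (-1) * α ^ 2) = α ^ 2 - 1 := by ring
        rw [hden]
        have hnum : c * (m j * (q j t 2 - (-1) * α * q i t 2))
            - s * (m j * (q j t 3 - (-1) * α * q i t 3))
            = m j * ρ t * Real.sinh (β j - β i) := by
          rw [hj2, hj3, hi2, hi3,
            show β j - β i = (φ t + β j) - (φ t + β i) by ring, Real.sinh_sub,
            hc, hs]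
          ring
        calc c * (m j * (q j t 2 - (-1) * α * q i t 2) / (α ^ 2 - 1) ^ ((3 : ℝ) / 2))
            - s * (m j * (q j t 3 - (-1) * α * q i t 3) / (α ^ 2 - 1) ^ ((3 : ℝ) / 2))
            = (c * (m j * (q j t 2 - (-1) * α * q i t 2))
              - s * (m j * (q j t 3 - (-1) * α * q i t 3))) / (α ^ 2 - 1) ^ ((3 : ℝ) / 2) := by
              ring
          _ = m j * ρ t * Real.sinh (β j - β i) / (α ^ 2 - 1) ^ ((3 : ℝ) / 2) := by
              rw [hnum]
end

section
/- Let σ ∈ {1,−1} and let q_1,…,q_n be a positive elliptic (σ=1) or negative elliptic (σ=−1) rotopulsator of the curved n-body problem for which the third coordinates q_{i3} = z₁ and the fourth coordinates q_{i4} = z₂ are independent of i for all i ∈ {1,…,n} (so that in particular the functions r_i are all equal to one common function r). If r is not a constant function, then the point masses form a regular polygon, i.e., α_j − α_i = (2π/n)(j − i) for all i,j ∈ {1,…,n}, and all masses are equal: m_1 = m_2 = … = m_n. -/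
open Real Finset

lemma indep_aux (U : Finset ℝ) : ∀ (c : ℝ → ℝ) (e : ℝ), 0 < e → ∀ (a b : ℝ), a < b →
    (∀ v ∈ U, ∀ ξ ∈ Set.Ioo a b, 0 < 2 - ξ * v) →
    (∀ ξ ∈ Set.Ioo a b, ∑ v ∈ U, c v * (2 - ξ * v) ^ (-e) = 0) →
    ∀ v ∈ U, c v = 0 := by
  induction U using Finset.strongInduction with
  | _ U ih =>
    intro c e he a b hab hpos hsum v hv
    -- the midpoint
    have hmid : (a + b) / 2 ∈ Set.Ioo a b := ⟨by linarith, by linarith⟩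
    -- derivative identity
    have hderiv : ∀ ξ ∈ Set.Ioo a b,
        ∑ w ∈ U, c w * (e * w * (2 - ξ * w) ^ (-e - 1)) = 0 := by
      intro ξ hξ
      have hF : HasDerivAt (fun x => ∑ w ∈ U, c w * (2 - x * w) ^ (-e))
          (∑ w ∈ U, c w * (e * w * (2 - ξ * w) ^ (-e - 1))) ξ := by
        apply HasDerivAt.fun_sum
        intro w hw
        have hbase : HasDerivAt (fun x : ℝ => 2 - x * w) (-w) ξ := by
          simpa using ((hasDerivAt_id ξ).mul_const w).const_sub 2
        have hpow := hbase.rpow_const (p := -e) (Or.inl (ne_of_gt (hpos w hw ξ hξ)))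
        have := hpow.const_mul (c w)
        rw [show c w * (e * w * (2 - ξ * w) ^ (-e - 1)) = c w * (-w * -e * (2 - ξ * w) ^ (-e - 1)) by ring]
        exact this
      have h0 : deriv (fun x => ∑ w ∈ U, c w * (2 - x * w) ^ (-e)) ξ = 0 := by
        have hev : (fun x => ∑ w ∈ U, c w * (2 - x * w) ^ (-e)) =ᶠ[nhds ξ]
            (fun _ => (0:ℝ)) :=
          Filter.eventuallyEq_of_mem ((isOpen_Ioo.mem_nhds hξ)) hsum
        rw [hev.deriv_eq, deriv_const]
      rw [← hF.deriv, h0]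
    -- combine to eliminate v
    have hcomb : ∀ ξ ∈ Set.Ioo a b,
        ∑ w ∈ U.erase v, (2 * e * (w - v) * c w) * (2 - ξ * w) ^ (-(e+1)) = 0 := by
      intro ξ hξ
      have key : ∑ w ∈ U, (2 * e * (w - v) * c w) * (2 - ξ * w) ^ (-(e+1)) = 0 := by
        have h1 := hderiv ξ hξ
        have h2 := hsum ξ hξ
        have expand : ∀ w ∈ U, c w * (2 - ξ * w) ^ (-e)
            = c w * (2 - ξ * w) * (2 - ξ * w) ^ (-(e+1)) := by
          intro w hw
          have hp := hpos w hw ξ hξ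
          rw [show (-e) = (-(e+1)) + 1 by ring, Real.rpow_add hp, Real.rpow_one]
          ring
        rw [Finset.sum_congr rfl expand] at h2
        have := sub_eq_zero.mpr (rfl :
          (2 - ξ * v) * ∑ w ∈ U, c w * (e * w * (2 - ξ * w) ^ (-e - 1))
          = (2 - ξ * v) * ∑ w ∈ U, c w * (e * w * (2 - ξ * w) ^ (-e - 1)))
        calc ∑ w ∈ U, (2 * e * (w - v) * c w) * (2 - ξ * w) ^ (-(e+1))
            = (2 - ξ * v) * (∑ w ∈ U, c w * (e * w * (2 - ξ * w) ^ (-e - 1)))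
              - e * v * (∑ w ∈ U, c w * (2 - ξ * w) * (2 - ξ * w) ^ (-(e+1))) := by
              rw [Finset.mul_sum, Finset.mul_sum, ← Finset.sum_sub_distrib]
              apply Finset.sum_congr rfl
              intro w hw
              have : (-e - 1) = (-(e+1)) := by ring
              rw [this]; ring
          _ = (2 - ξ * v) * 0 - e * v * 0 := by rw [h1, h2]
          _ = 0 := by ring
      rw [← key]
      have hzero : 2 * e * (v - v) * c v * (2 - ξ * v) ^ (-(e+1)) = 0 := by
        have : v - v = 0 := sub_self v
        rw [this]; ring
      exact Finset.sum_erase (f := fun w => 2 * e * (w - v) * c w * (2 - ξ * w) ^ (-(e+1))) U hzero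
    have herase : ∀ w ∈ U.erase v, (2 * e * (w - v) * c w) = 0 := by
      apply ih (U.erase v) (Finset.erase_ssubset hv) _ (e+1) (by linarith) a b hab
      · intro w hw ξ hξ; exact hpos w (Finset.mem_of_mem_erase hw) ξ hξ
      · exact hcomb
    have hcw : ∀ w ∈ U, w ≠ v → c w = 0 := by
      intro w hw hwv
      have := herase w (Finset.mem_erase.mpr ⟨hwv, hw⟩)
      have hwv' : w - v ≠ 0 := sub_ne_zero.mpr hwv
      have : 2 * e * (w - v) ≠ 0 := by positivity
      · exact (mul_eq_zero.mp (herase w (Finset.mem_erase.mpr ⟨hwv, hw⟩))).resolve_left this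
    -- now conclude c v = 0
    have hs := hsum ((a+b)/2) hmid
    have : ∑ w ∈ U, c w * (2 - (a+b)/2 * w) ^ (-e)
        = c v * (2 - (a+b)/2 * v) ^ (-e) := by
      apply Finset.sum_eq_single_of_mem v hv
      intro w hw hwv
      rw [hcw w hw hwv, zero_mul]
    rw [this] at hs
    have hp : (0:ℝ) < (2 - (a+b)/2 * v) ^ (-e) :=
      Real.rpow_pos_of_pos (hpos v hv _ hmid) _
    exact (mul_eq_zero.mp hs).resolve_right (ne_of_gt hp)

lemma deriv_mul_cos (r θ : ℝ → ℝ) (hr1 : Differentiable ℝ r) (hθ1 : Differentiable ℝ θ) (a : ℝ) :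
    deriv (fun s => r s * Real.cos (θ s + a)) =
      fun t => deriv r t * Real.cos (θ t + a) - r t * Real.sin (θ t + a) * deriv θ t := by
  funext t
  have h : HasDerivAt (fun s => r s * Real.cos (θ s + a))
      (deriv r t * Real.cos (θ t + a) + r t * (-Real.sin (θ t + a) * deriv θ t)) t :=
    (hr1 t).hasDerivAt.mul (((hθ1 t).hasDerivAt.add_const a).cos)
  rw [h.deriv]; ring

lemma deriv_mul_sin (r θ : ℝ → ℝ) (hr1 : Differentiable ℝ r) (hθ1 : Differentiable ℝ θ) (a : ℝ) :
    deriv (fun s => r s * Real.sin (θ s + a)) =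
      fun t => deriv r t * Real.sin (θ t + a) + r t * Real.cos (θ t + a) * deriv θ t := by
  funext t
  have h : HasDerivAt (fun s => r s * Real.sin (θ s + a))
      (deriv r t * Real.sin (θ t + a) + r t * (Real.cos (θ t + a) * deriv θ t)) t :=
    (hr1 t).hasDerivAt.mul (((hθ1 t).hasDerivAt.add_const a).sin)
  rw [h.deriv]; ring

lemma deriv2_mul_cos (r θ : ℝ → ℝ) (hr1 : Differentiable ℝ r) (hr2 : Differentiable ℝ (deriv r))
    (hθ1 : Differentiable ℝ θ) (hθ2 : Differentiable ℝ (deriv θ)) (a t : ℝ) :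
    deriv (deriv fun s => r s * Real.cos (θ s + a)) t =
      deriv (deriv r) t * Real.cos (θ t + a) - 2 * deriv r t * Real.sin (θ t + a) * deriv θ t
      - r t * Real.cos (θ t + a) * (deriv θ t)^2 - r t * Real.sin (θ t + a) * deriv (deriv θ) t := by
  rw [deriv_mul_cos r θ hr1 hθ1]
  have h : HasDerivAt (fun t => deriv r t * Real.cos (θ t + a) - r t * Real.sin (θ t + a) * deriv θ t)
      ((deriv (deriv r) t * Real.cos (θ t + a) + deriv r t * (-Real.sin (θ t + a) * deriv θ t))
        - (((deriv r t * Real.sin (θ t + a) + r t * (Real.cos (θ t + a) * deriv θ t)) * deriv θ t)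
          + (r t * Real.sin (θ t + a)) * deriv (deriv θ) t)) t := by
    exact ((hr2 t).hasDerivAt.mul (((hθ1 t).hasDerivAt.add_const a).cos)).sub
      ((((hr1 t).hasDerivAt.mul (((hθ1 t).hasDerivAt.add_const a).sin)).mul
        (hθ2 t).hasDerivAt))
  rw [h.deriv]; ring

lemma deriv2_mul_sin (r θ : ℝ → ℝ) (hr1 : Differentiable ℝ r) (hr2 : Differentiable ℝ (deriv r))
    (hθ1 : Differentiable ℝ θ) (hθ2 : Differentiable ℝ (deriv θ)) (a t : ℝ) :
    deriv (deriv fun s => r s * Real.sin (θ s + a)) t =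
      deriv (deriv r) t * Real.sin (θ t + a) + 2 * deriv r t * Real.cos (θ t + a) * deriv θ t
      - r t * Real.sin (θ t + a) * (deriv θ t)^2 + r t * Real.cos (θ t + a) * deriv (deriv θ) t := by
  rw [deriv_mul_sin r θ hr1 hθ1]
  have h : HasDerivAt (fun t => deriv r t * Real.sin (θ t + a) + r t * Real.cos (θ t + a) * deriv θ t)
      ((deriv (deriv r) t * Real.sin (θ t + a) + deriv r t * (Real.cos (θ t + a) * deriv θ t))
        + (((deriv r t * Real.cos (θ t + a) + r t * (-Real.sin (θ t + a) * deriv θ t)) * deriv θ t)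
          + (r t * Real.cos (θ t + a)) * deriv (deriv θ) t)) t := by
    exact ((hr2 t).hasDerivAt.mul (((hθ1 t).hasDerivAt.add_const a).sin)).add
      ((((hr1 t).hasDerivAt.mul (((hθ1 t).hasDerivAt.add_const a).cos)).mul
        (hθ2 t).hasDerivAt))
  rw [h.deriv]; ring

open scoped Classical in
lemma comb (n : ℕ) (hn : 1 ≤ n) (α : Fin n → ℝ) (m : Fin n → ℝ) (hm : ∀ i, 0 < m i)
    (hα0 : ∀ i, 0 ≤ α i) (hα2π : ∀ i, α i < 2 * π) (hαmono : StrictMono α)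
    (hP : ∀ d : Real.Angle, d ≠ 0 → ∀ i i' : Fin n,
      (∑ j ∈ univ.filter (fun j => (α j : Real.Angle) = (α i : Real.Angle) + d), m j) =
      (∑ j ∈ univ.filter (fun j => (α j : Real.Angle) = (α i' : Real.Angle) + d), m j)) :
    (∀ i j : Fin n, α j - α i = (2 * π / n) * (((j : ℕ) : ℝ) - ((i : ℕ) : ℝ))) ∧
    (∀ i j : Fin n, m i = m j) := by
  have hπ := Real.pi_pos
  set x : Fin n → Real.Angle := fun j => (α j : Real.Angle) with hx
  -- injectivity of x
  have hxinj : Function.Injective x := by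
    intro j k hjk
    have := Real.Angle.angle_eq_iff_two_pi_dvd_sub.mp hjk
    obtain ⟨l, hl⟩ := this
    have hb1 : α j - α k < 2 * π * 1 := by
      have := hα0 k; have := hα2π j; linarith
    have hb2 : 2 * π * (-1) < α j - α k := by
      have := hα0 j; have := hα2π k; linarith
    rw [hl] at hb1 hb2
    have hl1 : (l : ℝ) < 1 := by
      have h2 : (0:ℝ) < 2 * π := by linarith
      exact lt_of_mul_lt_mul_left (by linarith [hb1]) (le_of_lt h2)
    have hl2 : (-1 : ℝ) < (l : ℝ) := by
      have h2 : (0:ℝ) < 2 * π := by linarith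
      exact lt_of_mul_lt_mul_left (by linarith [hb2]) (le_of_lt h2)
    have : l = 0 := by exact_mod_cast (by constructor <;> [exact_mod_cast hl2; exact_mod_cast hl1] :
      (-1:ℤ) < l ∧ (l:ℤ) < 1).elim (fun h1 h2 => by omega)
    rw [this] at hl
    push_cast at hl
    exact hαmono.injective (by linarith)
  -- closure
  have hclosure : ∀ i j k : Fin n, ∃ l : Fin n, x l = x k + (x j - x i) := by
    intro i j k
    by_cases hij : x j = x i
    · exact ⟨k, by rw [hij]; simp⟩
    · have hd : x j - x i ≠ 0 := sub_ne_zero.mpr hij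
      have h1 := hP (x j - x i) hd i k
      have hjmem : j ∈ univ.filter (fun j' => x j' = x i + (x j - x i)) := by
        simp
      have hpos1 : 0 < ∑ j' ∈ univ.filter (fun j' => x j' = x i + (x j - x i)), m j' :=
        Finset.sum_pos (fun j' _ => hm j') ⟨j, hjmem⟩
      rw [h1] at hpos1
      obtain ⟨l, hl⟩ := Finset.nonempty_of_sum_ne_zero (ne_of_gt hpos1)
      exact ⟨l, (Finset.mem_filter.mp hl).2⟩
  -- equal masses
  have hmass : ∀ i j : Fin n, m i = m j := by
    rcases Nat.lt_or_ge 1 n with hn2 | hn1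
    swap
    · -- n = 1
      intro i j
      have : i = j := by
        have := i.isLt; have := j.isLt
        have : n = 1 := le_antisymm hn1 hn
        subst this
        exact Subsingleton.elim i j
      rw [this]
    · have h01 : (⟨0, by omega⟩ : Fin n) < ⟨1, by omega⟩ := by
        simp [Fin.lt_def]
      set d : Real.Angle := x ⟨1, by omega⟩ - x ⟨0, by omega⟩ with hd
      have hdne : d ≠ 0 := sub_ne_zero.mpr (fun h => absurd (hxinj h) (by simp [Fin.ext_iff]))
      -- define τ
      have hτ : ∀ k : Fin n, ∃ l : Fin n, x l = x k + d := by
        intro k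
        exact hclosure ⟨0, by omega⟩ ⟨1, by omega⟩ k
      choose τ hτeq using hτ
      have hfiber : ∀ k : Fin n, univ.filter (fun j => x j = x k + d) = {τ k} := by
        intro k
        ext l
        simp only [Finset.mem_filter, Finset.mem_univ, true_and, Finset.mem_singleton]
        constructor
        · intro hl; exact hxinj (hl.trans (hτeq k).symm)
        · intro hl; rw [hl]; exact hτeq k
      have hconst : ∀ k k' : Fin n, m (τ k) = m (τ k') := by
        intro k k'
        have := hP d hdne k k'
        rwa [hfiber k, hfiber k', Finset.sum_singleton, Finset.sum_singleton] at this
      have hτinj : Function.Injective τ := by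
        intro k k' h
        have : x k + d = x k' + d := by rw [← hτeq k, ← hτeq k', h]
        exact hxinj (by exact add_right_cancel this)
      have hτsurj : Function.Surjective τ := Finite.injective_iff_surjective.mp hτinj
      intro i j
      obtain ⟨k, hk⟩ := hτsurj i
      obtain ⟨k', hk'⟩ := hτsurj j
      rw [← hk, ← hk']
      exact hconst k k'
  refine ⟨?_, hmass⟩
  -- regular polygon
  set i₀ : Fin n := ⟨0, by omega⟩ with hi₀
  set f : Fin n → Real.Angle := fun j => x j - x i₀ with hf
  have hfinj : Function.Injective f := by
    intro j k h
    exact hxinj (by simpa [hf, sub_left_inj] using h)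
  have hsubmem : ∀ a ∈ Set.range f, ∀ b ∈ Set.range f, a - b ∈ Set.range f := by
    rintro _ ⟨j, rfl⟩ _ ⟨k, rfl⟩
    obtain ⟨l, hl⟩ := hclosure k j i₀
    exact ⟨l, by simp only [hf]; rw [hl]; abel⟩
  have hzeromem : (0 : Real.Angle) ∈ Set.range f := ⟨i₀, by simp [hf]⟩
  set H : AddSubgroup Real.Angle :=
    { carrier := Set.range f
      zero_mem' := hzeromem
      add_mem' := by
        intro a b ha hb
        have h1 : (0:Real.Angle) - b ∈ Set.range f := hsubmem 0 hzeromem b hb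
        have h2 := hsubmem a ha _ h1
        simpa using h2
      neg_mem' := by
        intro a ha
        have := hsubmem 0 hzeromem a ha
        simpa using this } with hH
  have hcard : Nat.card H = n := by
    have : Nat.card H = Nat.card (Set.range f) := rfl
    rw [this, Nat.card_range_of_injective hfinj, Nat.card_eq_fintype_card, Fintype.card_fin]
  -- Lagrange
  have hlag : ∀ j : Fin n, (n : ℕ) • (f j) = 0 := by
    intro j
    have hmem : f j ∈ H := ⟨j, rfl⟩
    have := card_nsmul_eq_zero' (G := H) (x := ⟨f j, hmem⟩)
    rw [hcard] at this
    have := congrArg (Subtype.val) this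
    simpa using this
  -- extract integers
  have hint : ∀ j : Fin n, ∃ k : ℤ, (n:ℝ) * (α j - α i₀) = 2 * π * k := by
    intro j
    have hcoe : (((n:ℝ) * (α j - α i₀) : ℝ) : Real.Angle) = ((0:ℝ) : Real.Angle) := by
      have e1 : ((n:ℝ) * (α j - α i₀)) = (n • (α j - α i₀) : ℝ) := by
        simp [nsmul_eq_mul]
      rw [e1, Real.Angle.coe_nsmul]
      have e2 : ((α j - α i₀ : ℝ) : Real.Angle) = f j := by
        simp only [hf, hx, Real.Angle.coe_sub]
      rw [e2, hlag j, Real.Angle.coe_zero]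
    have h3 := Real.Angle.angle_eq_iff_two_pi_dvd_sub.mp hcoe
    obtain ⟨k, hk⟩ := h3
    exact ⟨k, by linarith [hk]⟩
  -- bounds on k and strict monotonicity force k j = j
  choose k hk using hint
  have hα0' : ∀ j, 0 ≤ α j - α i₀ := by
    intro j
    have : α i₀ ≤ α j := hαmono.monotone (by simp [hi₀, Fin.le_def])
    linarith
  have hα2π' : ∀ j, α j - α i₀ < 2 * π := by
    intro j
    have := hα2π j; have := hα0 i₀; linarith
  have hkb : ∀ j : Fin n, 0 ≤ k j ∧ (k j : ℝ) < n := by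
    intro j
    constructor
    · by_contra hneg
      push_neg at hneg
      have hkle : k j ≤ -1 := by omega
      have : (k j : ℝ) ≤ -1 := by exact_mod_cast hkle
      have h1 : (n:ℝ) * (α j - α i₀) ≥ 0 := by
        have := hα0' j
        positivity
      nlinarith [hk j]
    · by_contra hge
      push_neg at hge
      have h1 : (n:ℝ) * (α j - α i₀) < (n:ℝ) * (2 * π) := by
        have h2 : (0:ℝ) < n := by exact_mod_cast hn
        exact mul_lt_mul_of_pos_left (hα2π' j) h2
      nlinarith [hk j]
  have hkval : ∀ j : Fin n, α j = α i₀ + 2 * π * k j / n := by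
    intro j
    have hn' : (0:ℝ) < n := by exact_mod_cast hn
    have := hk j
    field_simp
    linarith [hk j]
  -- strict monotonicity of k
  have hkmono : StrictMono k := by
    intro p q hpq
    have h1 : α p < α q := hαmono hpq
    rw [hkval p, hkval q] at h1
    have hn' : (0:ℝ) < n := by exact_mod_cast hn
    have : (k p : ℝ) < k q := by
      have h2 : 2 * π * k p / n < 2 * π * k q / n := by linarith
      have h3 : 2 * π * (k p:ℝ) < 2 * π * k q := by
        calc 2 * π * (k p:ℝ) = (2 * π * k p / n) * n := by field_simp
        _ < (2 * π * k q / n) * n := by exact mul_lt_mul_of_pos_right h2 hn'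
        _ = 2 * π * k q := by field_simp
      nlinarith
    exact_mod_cast this
  -- k j = j
  have hlast : ∀ p q : Fin n, p ≤ q → k q - k p ≥ (q:ℤ) - (p:ℤ) := by
    intro p q hpq
    have key : ∀ s : ℕ, ∀ hs : (p:ℕ) + s < n, k ⟨(p:ℕ) + s, hs⟩ - k p ≥ s := by
      intro s
      induction s with
      | zero => intro hs; simp [show (⟨(p:ℕ) + 0, hs⟩ : Fin n) = p by ext; simp]
      | succ s ihs =>
        intro hs
        have hs' : (p:ℕ) + s < n := by omega
        have hstep : k ⟨(p:ℕ)+s, hs'⟩ < k ⟨(p:ℕ)+(s+1), hs⟩ :=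
          hkmono (by simp [Fin.lt_def])
        have h4 := ihs hs'
        have h5 : ((s+1 : ℕ) : ℤ) = (s:ℤ) + 1 := by push_cast; ring
        rw [h5]
        omega
    have hq : (q:ℕ) = (p:ℕ) + ((q:ℕ) - (p:ℕ)) := by
      have := Fin.le_def.mp hpq; omega
    have h1 := key ((q:ℕ) - (p:ℕ)) (by omega)
    have heq : (⟨(p:ℕ) + ((q:ℕ) - (p:ℕ)), by omega⟩ : Fin n) = q := by
      ext; simp; omega
    rw [heq] at h1
    have := Fin.le_def.mp hpq
    push_cast at h1 ⊢
    omega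
  have hkeq : ∀ j : Fin n, (k j : ℝ) = ((j : ℕ) : ℝ) := by
    have hi₀le : ∀ j : Fin n, i₀ ≤ j := by intro j; simp [hi₀, Fin.le_def]
    have low : ∀ j : Fin n, (j : ℤ) ≤ k j := by
      intro j
      have h1 := hlast i₀ j (hi₀le j)
      have h2 := (hkb i₀).1
      simp only [hi₀] at h1 h2 ⊢
      omega
    have high : ∀ j : Fin n, k j ≤ (j : ℤ) := by
      intro j
      have hjn : j ≤ (⟨n-1, by omega⟩ : Fin n) := by
        simp [Fin.le_def]; omega
      have h1 := hlast j ⟨n-1, by omega⟩ hjn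
      have h2 : (k ⟨n-1, by omega⟩ : ℝ) < n := (hkb _).2
      have h2' : k ⟨n-1, by omega⟩ < (n:ℤ) := by exact_mod_cast h2
      have h3 := low j
      have hj := j.isLt
      simp only at h1
      omega
    intro j
    have heq := le_antisymm (high j) (low j)
    exact_mod_cast congrArg (fun z : ℤ => (z : ℝ)) heq
  intro i j
  rw [hkval i, hkval j]
  have hn' : (0:ℝ) < n := by exact_mod_cast hn
  rw [hkeq i, hkeq j]
  field_simp
  ring

lemma term_eq2 (M R u w v : ℝ) (hu : 0 < u) (hw : 0 < w) (hR : 0 < R) :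
    (R^2)^((3:ℝ)/2) * (M * (R * v) / ((R^2*u) * w) ^ ((3:ℝ)/2))
      = R * (M * v * u ^ (-((3:ℝ)/2)) * w ^ (-((3:ℝ)/2))) := by
  have hR2u : (0:ℝ) < R^2*u := by positivity
  rw [Real.mul_rpow hR2u.le hw.le, Real.mul_rpow (by positivity : (0:ℝ) ≤ R^2) hu.le,
    Real.rpow_neg hu.le, Real.rpow_neg hw.le]
  have h1 : u ^ ((3:ℝ)/2) ≠ 0 := ne_of_gt (Real.rpow_pos_of_pos hu _)
  have h2 : w ^ ((3:ℝ)/2) ≠ 0 := ne_of_gt (Real.rpow_pos_of_pos hw _)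
  have h3 : (R^2) ^ ((3:ℝ)/2) ≠ 0 := ne_of_gt (Real.rpow_pos_of_pos (by positivity) _)
  field_simp

lemma term_eq1 (M R u w s : ℝ) (hu : 0 < u) (hw : 0 < w) (hR : 0 < R) :
    (R^2)^((3:ℝ)/2) * (M * (R * (s * u)) / ((R^2*u) * w) ^ ((3:ℝ)/2))
      = s * R * (M * u ^ (-((1:ℝ)/2)) * w ^ (-((3:ℝ)/2))) := by
  rw [term_eq2 M R u w (s*u) hu hw hR]
  have key : u * u ^ (-((3:ℝ)/2)) = u ^ (-((1:ℝ)/2)) := by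
    nth_rewrite 1 [← Real.rpow_one u]
    rw [← Real.rpow_add hu]
    norm_num
  rw [← key]
  ring

lemma eom_combo (σ : ℝ) (hσ2 : σ^2 = 1) {n : ℕ} (m : Fin n → ℝ) (i : Fin n)
    (a u c : Fin n → ℝ) (R R' R'' Θ' Θ'' K φ : ℝ) (hR : 0 < R)
    (hu : ∀ j, u j = 1 - Real.cos (a j))
    (hc : ∀ j, c j = σ - R^2 * u j)
    (hupos : ∀ j ∈ univ.erase i, 0 < u j)
    (h2pos : ∀ j ∈ univ.erase i, 0 < 2 - R^2 * (σ * u j))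
    (E0 : R''*Real.cos φ - 2*R'*Real.sin φ*Θ' - R*Real.cos φ*Θ'^2 - R*Real.sin φ*Θ'' =
      (∑ j ∈ univ.erase i, m j * ((R * Real.cos (φ + a j)) - σ * c j * (R * Real.cos φ)) /
        (σ - σ * (c j)^2) ^ ((3:ℝ)/2)) - σ * K * (R * Real.cos φ))
    (E1 : R''*Real.sin φ + 2*R'*Real.cos φ*Θ' - R*Real.sin φ*Θ'^2 + R*Real.cos φ*Θ'' =
      (∑ j ∈ univ.erase i, m j * ((R * Real.sin (φ + a j)) - σ * c j * (R * Real.sin φ)) /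
        (σ - σ * (c j)^2) ^ ((3:ℝ)/2)) - σ * K * (R * Real.sin φ)) :
    ((σ*R^2 - 1) * R * (∑ j ∈ univ.erase i,
        m j * (u j)^(-((1:ℝ)/2)) * (2 - R^2*(σ*u j))^(-((3:ℝ)/2)))
       = (R^2)^((3:ℝ)/2) * (R'' - R*Θ'^2 + σ*K*R)) ∧
    (R * (∑ j ∈ univ.erase i,
        m j * Real.sin (a j) * (u j)^(-((3:ℝ)/2)) * (2 - R^2*(σ*u j))^(-((3:ℝ)/2)))
       = (R^2)^((3:ℝ)/2) * (2*R'*Θ' + R*Θ'')) := by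
  have hpyth := Real.sin_sq_add_cos_sq φ
  -- combined sums
  have hdist0 : Real.cos φ * (∑ j ∈ univ.erase i,
        m j * ((R * Real.cos (φ + a j)) - σ * c j * (R * Real.cos φ)) /
        (σ - σ * (c j)^2) ^ ((3:ℝ)/2))
      + Real.sin φ * (∑ j ∈ univ.erase i,
        m j * ((R * Real.sin (φ + a j)) - σ * c j * (R * Real.sin φ)) /
        (σ - σ * (c j)^2) ^ ((3:ℝ)/2))
      = ∑ j ∈ univ.erase i, m j * (R * (Real.cos (a j) - σ * c j)) /
          (σ - σ * (c j)^2) ^ ((3:ℝ)/2) := by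
    rw [Finset.mul_sum, Finset.mul_sum, ← Finset.sum_add_distrib]
    apply Finset.sum_congr rfl
    intro j hj
    rw [Real.cos_add, Real.sin_add]
    linear_combination (m j * (R * Real.cos (a j) - σ * c j * R) /
      (σ - σ * (c j)^2) ^ ((3:ℝ)/2)) * hpyth
  have hdist1 : Real.cos φ * (∑ j ∈ univ.erase i,
        m j * ((R * Real.sin (φ + a j)) - σ * c j * (R * Real.sin φ)) /
        (σ - σ * (c j)^2) ^ ((3:ℝ)/2))
      - Real.sin φ * (∑ j ∈ univ.erase i,
        m j * ((R * Real.cos (φ + a j)) - σ * c j * (R * Real.cos φ)) /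
        (σ - σ * (c j)^2) ^ ((3:ℝ)/2))
      = ∑ j ∈ univ.erase i, m j * (R * Real.sin (a j)) /
          (σ - σ * (c j)^2) ^ ((3:ℝ)/2) := by
    rw [Finset.mul_sum, Finset.mul_sum, ← Finset.sum_sub_distrib]
    apply Finset.sum_congr rfl
    intro j hj
    rw [Real.cos_add, Real.sin_add]
    linear_combination (m j * (R * Real.sin (a j)) /
      (σ - σ * (c j)^2) ^ ((3:ℝ)/2)) * hpyth
  have main1 : R'' - R*Θ'^2 + σ*K*R = ∑ j ∈ univ.erase i,
      m j * (R * (Real.cos (a j) - σ * c j)) / (σ - σ * (c j)^2) ^ ((3:ℝ)/2) := by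
    linear_combination Real.cos φ * E0 + Real.sin φ * E1 + hdist0 -
      (R'' - R*Θ'^2 + σ*K*R) * hpyth
  have main2 : 2*R'*Θ' + R*Θ'' = ∑ j ∈ univ.erase i,
      m j * (R * Real.sin (a j)) / (σ - σ * (c j)^2) ^ ((3:ℝ)/2) := by
    linear_combination Real.cos φ * E1 - Real.sin φ * E0 + hdist1 -
      (2*R'*Θ' + R*Θ'') * hpyth
  constructor
  · rw [main1, Finset.mul_sum, Finset.mul_sum]
    apply Finset.sum_congr rfl
    intro j hj
    have h1 : Real.cos (a j) - σ * c j = (σ*R^2 - 1) * u j := by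
      rw [hc j, hu j]
      linear_combination -hσ2
    have h2 : σ - σ * (c j)^2 = (R^2*(u j)) * (2 - R^2*(σ*(u j))) := by
      rw [hc j]
      linear_combination (2*R^2*(u j) - σ) * hσ2
    rw [h1, h2]
    have := term_eq1 (m j) R (u j) (2 - R^2*(σ*u j)) (σ*R^2 - 1) (hupos j hj) (h2pos j hj) hR
    calc (σ * R ^ 2 - 1) * R * (m j * u j ^ (-((1:ℝ)/2)) * (2 - R ^ 2 * (σ * u j)) ^ (-((3:ℝ)/2)))
        = (R^2)^((3:ℝ)/2) * (m j * (R * ((σ*R^2-1) * u j)) /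
            ((R^2*(u j)) * (2 - R^2*(σ*(u j)))) ^ ((3:ℝ)/2)) := this.symm
      _ = (R ^ 2) ^ ((3:ℝ)/2) * (m j * (R * ((σ * R ^ 2 - 1) * u j)) /
            (R ^ 2 * u j * (2 - R ^ 2 * (σ * u j))) ^ ((3:ℝ)/2)) := by ring_nf
  · rw [main2, Finset.mul_sum, Finset.mul_sum]
    apply Finset.sum_congr rfl
    intro j hj
    have h2 : σ - σ * (c j)^2 = (R^2*(u j)) * (2 - R^2*(σ*(u j))) := by
      rw [hc j]
      linear_combination (2*R^2*(u j) - σ) * hσ2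
    rw [h2]
    have := term_eq2 (m j) R (u j) (2 - R^2*(σ*u j)) (Real.sin (a j))
      (hupos j hj) (h2pos j hj) hR
    calc R * (m j * Real.sin (a j) * u j ^ (-((3:ℝ)/2)) * (2 - R ^ 2 * (σ * u j)) ^ (-((3:ℝ)/2)))
        = (R^2)^((3:ℝ)/2) * (m j * (R * Real.sin (a j)) /
            ((R^2*(u j)) * (2 - R^2*(σ*(u j)))) ^ ((3:ℝ)/2)) := by rw [this]; try ring
      _ = (R ^ 2) ^ ((3:ℝ)/2) * (m j * (R * Real.sin (a j)) /
            (R ^ 2 * u j * (2 - R ^ 2 * (σ * u j))) ^ ((3:ℝ)/2)) := by ring_nf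

/-- Let `q₁,…,qₙ` be a positive elliptic (`σ = 1`) or negative elliptic (`σ = −1`)
rotopulsator of the curved `n`-body problem for which `q_{i3} = z₁` and
`q_{i4} = z₂` are independent of `i` (so in particular all `rᵢ` equal a common
function `r`).  If `r` is not constant, then the configuration is a regular
polygon, i.e. `α_j − α_i = (2π/n)(j − i)` for all `i, j`, and all masses are
equal. -/
theorem elliptic_rotopulsator_nonconstant_size_regular_polygon_equal_masses
    (σ : ℝ) (hσ : σ = 1 ∨ σ = -1) (n : ℕ) (hn : 1 ≤ n)
    (q : Fin n → ℝ → Fin 4 → ℝ) (m : Fin n → ℝ)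
    (hm : ∀ i, 0 < m i)
    -- the curves are twice differentiable
    (hq1 : ∀ i k, Differentiable ℝ fun t => q i t k)
    (hq2 : ∀ i k, Differentiable ℝ (deriv fun t => q i t k))
    -- the bodies move on `M³_σ`
    (hsphere : ∀ i t, odot σ (q i t) (q i t) = σ)
    -- singularity avoidance: `σ - σ(q_i ⊙ q_j)² > 0` for `i ≠ j`
    (hsep : ∀ i j, i ≠ j → ∀ t, 0 < σ - σ * (odot σ (q i t) (q j t)) ^ 2)
    -- the equations of motion of the curved n-body problem
    (heom : ∀ i t k,
      deriv (deriv fun s => q i s k) t =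
        (∑ j ∈ Finset.univ.erase i,
          m j * (q j t k - σ * odot σ (q i t) (q j t) * q i t k) /
            (σ - σ * (odot σ (q i t) (q j t)) ^ 2) ^ ((3 : ℝ) / 2))
        - σ * odot σ (fun l => deriv (fun s => q i s l) t)
            (fun l => deriv (fun s => q i s l) t) * q i t k)
    -- elliptic rotopulsator structure with common size function `r`
    (r θ z₁ z₂ : ℝ → ℝ) (hrpos : ∀ t, 0 < r t)
    (hr1 : Differentiable ℝ r) (hr2 : Differentiable ℝ (deriv r))
    (hθ1 : Differentiable ℝ θ) (hθ2 : Differentiable ℝ (deriv θ))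
    (α : Fin n → ℝ) (hα0 : ∀ i, 0 ≤ α i) (hα2π : ∀ i, α i < 2 * π)
    (hαmono : StrictMono α)
    (hrep : ∀ i t, q i t 0 = r t * Real.cos (θ t + α i) ∧
                   q i t 1 = r t * Real.sin (θ t + α i) ∧
                   q i t 2 = z₁ t ∧ q i t 3 = z₂ t)
    -- the size `r` is not constant
    (hrnc : ¬ ∃ c : ℝ, ∀ t, r t = c) :
    (∀ i j : Fin n, α j - α i = (2 * π / n) * (((j : ℕ) : ℝ) - ((i : ℕ) : ℝ))) ∧
    (∀ i j : Fin n, m i = m j) := by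
  classical
  have hπ := Real.pi_pos
  have hσ2 : σ^2 = 1 := by rcases hσ with h|h <;> rw [h] <;> norm_num
  have hσ0 : σ ≠ 0 := by rcases hσ with h|h <;> rw [h] <;> norm_num
  set u : Fin n → Fin n → ℝ := fun i j => 1 - Real.cos (α j - α i) with hudef
  have i0 : Fin n := ⟨0, hn⟩
  have hz1fun : (fun t => q ⟨0,hn⟩ t 2) = z₁ := funext fun t => (hrep _ t).2.2.1
  have hz2fun : (fun t => q ⟨0,hn⟩ t 3) = z₂ := funext fun t => (hrep _ t).2.2.2
  have hz1d : Differentiable ℝ z₁ := hz1fun ▸ hq1 _ 2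
  have hz2d : Differentiable ℝ z₂ := hz2fun ▸ hq1 _ 3
  set K : ℝ → ℝ := fun t => (deriv r t)^2 + (r t)^2*(deriv θ t)^2
      + (deriv z₁ t)^2 + σ*(deriv z₂ t)^2 with hKdef
  -- consequence of the sphere constraint
  have hzz : ∀ t, (z₁ t)^2 + σ*(z₂ t)^2 = σ - (r t)^2 := by
    intro t
    have h := hsphere ⟨0,hn⟩ t
    simp only [odot] at h
    rw [(hrep _ t).1, (hrep _ t).2.1, (hrep _ t).2.2.1, (hrep _ t).2.2.2] at h
    have hp := Real.sin_sq_add_cos_sq (θ t + α ⟨0,hn⟩)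
    linear_combination h - (r t)^2 * hp
  -- the inner products
  have hodot : ∀ i j t, odot σ (q i t) (q j t) = σ - (r t)^2 * u i j := by
    intro i j t
    simp only [odot]
    rw [(hrep i t).1, (hrep i t).2.1, (hrep i t).2.2.1, (hrep i t).2.2.2,
      (hrep j t).1, (hrep j t).2.1, (hrep j t).2.2.1, (hrep j t).2.2.2]
    have hcs := Real.cos_sub (θ t + α j) (θ t + α i)
    rw [show θ t + α j - (θ t + α i) = α j - α i from by ring] at hcs
    simp only [hudef]
    linear_combination -(r t)^2 * hcs + hzz t
  have hDval : ∀ i j t, σ - σ*(odot σ (q i t) (q j t))^2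
      = ((r t)^2 * u i j) * (2 - (r t)^2*(σ*u i j)) := by
    intro i j t
    rw [hodot i j t]
    linear_combination (2*(r t)^2*(u i j) - σ) * hσ2
  have hupos : ∀ i j, i ≠ j → 0 < u i j := by
    intro i j hij
    have h := hsep i j hij 0
    rw [hDval i j 0] at h
    have h0 : 0 ≤ u i j := by
      simp only [hudef]
      have := Real.cos_le_one (α j - α i)
      linarith
    rcases lt_or_eq_of_le h0 with h1 | h1
    · exact h1
    · rw [← h1] at h; norm_num at h
  have h2pos : ∀ i j, i ≠ j → ∀ t, 0 < 2 - (r t)^2*(σ*u i j) := by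
    intro i j hij t
    have h := hsep i j hij t
    rw [hDval i j t] at h
    have h1 : 0 < (r t)^2 * u i j := mul_pos (pow_pos (hrpos t) 2) (hupos i j hij)
    nlinarith
  -- the function equalities
  have hq0fun : ∀ i, (fun s => q i s 0) = fun s => r s * Real.cos (θ s + α i) :=
    fun i => funext fun s => (hrep i s).1
  have hq1fun : ∀ i, (fun s => q i s 1) = fun s => r s * Real.sin (θ s + α i) :=
    fun i => funext fun s => (hrep i s).2.1
  have hq2fun : ∀ i, (fun s => q i s 2) = z₁ := fun i => funext fun s => (hrep i s).2.2.1
  have hq3fun : ∀ i, (fun s => q i s 3) = z₂ := fun i => funext fun s => (hrep i s).2.2.2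
  -- kinetic term
  have hKval : ∀ i t, odot σ (fun l => deriv (fun s => q i s l) t)
      (fun l => deriv (fun s => q i s l) t) = K t := by
    intro i t
    simp only [odot]
    rw [hq0fun i, hq1fun i, hq2fun i, hq3fun i,
      deriv_mul_cos r θ hr1 hθ1 (α i), deriv_mul_sin r θ hr1 hθ1 (α i)]
    have hp := Real.sin_sq_add_cos_sq (θ t + α i)
    simp only [hKdef]
    linear_combination ((deriv r t)^2 + (r t)^2*(deriv θ t)^2) * hp
  -- the key combination
  have hcombo : ∀ i t,
      ((σ*(r t)^2 - 1) * (r t) * (∑ j ∈ Finset.univ.erase i,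
          m j * (u i j)^(-((1:ℝ)/2)) * (2 - (r t)^2*(σ*u i j))^(-((3:ℝ)/2)))
        = ((r t)^2)^((3:ℝ)/2) * (deriv (deriv r) t - (r t)*(deriv θ t)^2 + σ*(K t)*(r t))) ∧
      ((r t) * (∑ j ∈ Finset.univ.erase i,
          m j * Real.sin (α j - α i) * (u i j)^(-((3:ℝ)/2)) * (2 - (r t)^2*(σ*u i j))^(-((3:ℝ)/2)))
        = ((r t)^2)^((3:ℝ)/2) * (2*(deriv r t)*(deriv θ t) + (r t)*(deriv (deriv θ) t))) := by
    intro i t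
    have E0 : deriv (deriv r) t * Real.cos (θ t + α i)
        - 2 * deriv r t * Real.sin (θ t + α i) * deriv θ t
        - r t * Real.cos (θ t + α i) * (deriv θ t)^2
        - r t * Real.sin (θ t + α i) * deriv (deriv θ) t =
        (∑ j ∈ Finset.univ.erase i, m j * ((r t * Real.cos ((θ t + α i) + (α j - α i)))
            - σ * (σ - (r t)^2 * u i j) * (r t * Real.cos (θ t + α i))) /
          (σ - σ * (σ - (r t)^2 * u i j)^2) ^ ((3:ℝ)/2))
        - σ * (K t) * (r t * Real.cos (θ t + α i)) := by
      have h := heom i t 0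
      rw [hq0fun i, deriv2_mul_cos r θ hr1 hr2 hθ1 hθ2 (α i) t, hKval i t, (hrep i t).1] at h
      rw [h]
      congr 1
      apply Finset.sum_congr rfl
      intro j hj
      rw [hodot i j t, (hrep j t).1,
        show θ t + α j = (θ t + α i) + (α j - α i) from by ring]
    have E1 : deriv (deriv r) t * Real.sin (θ t + α i)
        + 2 * deriv r t * Real.cos (θ t + α i) * deriv θ t
        - r t * Real.sin (θ t + α i) * (deriv θ t)^2
        + r t * Real.cos (θ t + α i) * deriv (deriv θ) t =
        (∑ j ∈ Finset.univ.erase i, m j * ((r t * Real.sin ((θ t + α i) + (α j - α i)))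
            - σ * (σ - (r t)^2 * u i j) * (r t * Real.sin (θ t + α i))) /
          (σ - σ * (σ - (r t)^2 * u i j)^2) ^ ((3:ℝ)/2))
        - σ * (K t) * (r t * Real.sin (θ t + α i)) := by
      have h := heom i t 1
      rw [hq1fun i, deriv2_mul_sin r θ hr1 hr2 hθ1 hθ2 (α i) t, hKval i t, (hrep i t).2.1] at h
      rw [h]
      congr 1
      apply Finset.sum_congr rfl
      intro j hj
      rw [hodot i j t, (hrep j t).2.1,
        show θ t + α j = (θ t + α i) + (α j - α i) from by ring]
    exact eom_combo σ hσ2 m i (fun j => α j - α i) (fun j => u i j)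
      (fun j => σ - (r t)^2 * u i j) (r t) (deriv r t) (deriv (deriv r) t)
      (deriv θ t) (deriv (deriv θ) t) (K t) (θ t + α i) (hrpos t)
      (fun j => rfl) (fun j => rfl)
      (fun j hj => hupos i j (Ne.symm (Finset.mem_erase.mp hj).1))
      (fun j hj => h2pos i j (Ne.symm (Finset.mem_erase.mp hj).1) t)
      E0 E1
  -- identities independent of the index
  have key1 : ∀ (t : ℝ) (i i' : Fin n),
      (σ*(r t)^2 - 1) * (r t) * (∑ j ∈ Finset.univ.erase i,
          m j * (u i j)^(-((1:ℝ)/2)) * (2 - (r t)^2*(σ*u i j))^(-((3:ℝ)/2)))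
      = (σ*(r t)^2 - 1) * (r t) * (∑ j ∈ Finset.univ.erase i',
          m j * (u i' j)^(-((1:ℝ)/2)) * (2 - (r t)^2*(σ*u i' j))^(-((3:ℝ)/2))) := by
    intro t i i'
    rw [(hcombo i t).1, (hcombo i' t).1]
  have key2 : ∀ (t : ℝ) (i i' : Fin n),
      (r t) * (∑ j ∈ Finset.univ.erase i,
          m j * Real.sin (α j - α i) * (u i j)^(-((3:ℝ)/2)) * (2 - (r t)^2*(σ*u i j))^(-((3:ℝ)/2)))
      = (r t) * (∑ j ∈ Finset.univ.erase i',
          m j * Real.sin (α j - α i') * (u i' j)^(-((3:ℝ)/2)) * (2 - (r t)^2*(σ*u i' j))^(-((3:ℝ)/2))) := by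
    intro t i i'
    rw [(hcombo i t).2, (hcombo i' t).2]
  -- nonconstant size gives an interval of values of r²
  push_neg at hrnc
  obtain ⟨t₁, ht₁⟩ := hrnc (r 0)
  obtain ⟨s₀, s₁, hss⟩ : ∃ s₀ s₁ : ℝ, r s₀^2 < r s₁^2 := by
    rcases Ne.lt_or_gt ht₁ with h|h
    · exact ⟨t₁, 0, by nlinarith [hrpos 0, hrpos t₁]⟩
    · exact ⟨0, t₁, by nlinarith [hrpos 0, hrpos t₁]⟩
  have hIVT : ∀ ξ ∈ Set.Icc (r s₀^2) (r s₁^2), ∃ s, r s^2 = ξ := by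
    intro ξ hξ
    have hcont : ContinuousOn (fun s => r s^2) (Set.uIcc s₀ s₁) :=
      ((hr1.continuous).pow 2).continuousOn
    have himg := intermediate_value_uIcc hcont
    have hmem : ξ ∈ Set.uIcc (r s₀^2) (r s₁^2) := by
      rw [Set.uIcc_of_le hss.le]; exact hξ
    obtain ⟨s, _, hs⟩ := himg hmem
    exact ⟨s, hs⟩
  obtain ⟨a, b, hab, hsubI, hneσ⟩ : ∃ a b : ℝ, a < b ∧
      Set.Ioo a b ⊆ Set.Icc (r s₀^2) (r s₁^2) ∧ ∀ ξ ∈ Set.Ioo a b, ξ ≠ σ := by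
    rcases le_or_gt σ ((r s₀^2 + r s₁^2)/2) with hc|hc
    · exact ⟨(r s₀^2 + r s₁^2)/2, r s₁^2, by linarith,
        fun ξ hξ => ⟨by linarith [hξ.1], le_of_lt hξ.2⟩,
        fun ξ hξ => ne_of_gt (lt_of_le_of_lt hc hξ.1)⟩
    · exact ⟨r s₀^2, (r s₀^2 + r s₁^2)/2, by linarith,
        fun ξ hξ => ⟨le_of_lt hξ.1, by linarith [hξ.2]⟩,
        fun ξ hξ => ne_of_lt (lt_trans hξ.2 hc)⟩
  have hSeq : ∀ ξ ∈ Set.Ioo a b, ∀ i i' : Fin n,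
      (∑ j ∈ Finset.univ.erase i, m j * (u i j)^(-((1:ℝ)/2)) * (2 - ξ*(σ*u i j))^(-((3:ℝ)/2)))
      = ∑ j ∈ Finset.univ.erase i', m j * (u i' j)^(-((1:ℝ)/2)) * (2 - ξ*(σ*u i' j))^(-((3:ℝ)/2)) := by
    intro ξ hξ i i'
    obtain ⟨s, hs⟩ := hIVT ξ (hsubI hξ)
    have h := key1 s i i'
    rw [hs] at h
    have hσξ : σ*ξ - 1 ≠ 0 := by
      intro h0
      exact hneσ ξ hξ (by linear_combination σ * h0 - ξ * hσ2)
    exact mul_left_cancel₀ (mul_ne_zero hσξ (ne_of_gt (hrpos s))) h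
  have hTeq : ∀ ξ ∈ Set.Ioo a b, ∀ i i' : Fin n,
      (∑ j ∈ Finset.univ.erase i,
        m j * Real.sin (α j - α i) * (u i j)^(-((3:ℝ)/2)) * (2 - ξ*(σ*u i j))^(-((3:ℝ)/2)))
      = ∑ j ∈ Finset.univ.erase i',
        m j * Real.sin (α j - α i') * (u i' j)^(-((3:ℝ)/2)) * (2 - ξ*(σ*u i' j))^(-((3:ℝ)/2)) := by
    intro ξ hξ i i'
    obtain ⟨s, hs⟩ := hIVT ξ (hsubI hξ)
    have h := key2 s i i'
    rw [hs] at h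
    exact mul_left_cancel₀ (ne_of_gt (hrpos s)) h
  have hposI : ∀ (i j : Fin n), i ≠ j → ∀ ξ ∈ Set.Ioo a b, 0 < 2 - ξ*(σ*u i j) := by
    intro i j hij ξ hξ
    obtain ⟨s, hs⟩ := hIVT ξ (hsubI hξ)
    have h := h2pos i j hij s
    rwa [hs] at h
  -- the general fiberwise separation
  have hGen : ∀ (c : Fin n → Fin n → ℝ),
      (∀ ξ ∈ Set.Ioo a b, ∀ i i' : Fin n,
        (∑ j ∈ Finset.univ.erase i, c i j * (2 - ξ*(σ*u i j))^(-((3:ℝ)/2)))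
        = ∑ j ∈ Finset.univ.erase i', c i' j * (2 - ξ*(σ*u i' j))^(-((3:ℝ)/2))) →
      ∀ (v : ℝ) (i i' : Fin n),
        (∑ j ∈ (Finset.univ.erase i).filter (fun j => σ * u i j = v), c i j)
        = ∑ j ∈ (Finset.univ.erase i').filter (fun j => σ * u i' j = v), c i' j := by
    intro c hEq v i i'
    set U : Finset ℝ := ((Finset.univ.erase i).image fun j => σ * u i j)
        ∪ ((Finset.univ.erase i').image fun j => σ * u i' j) with hU
    set cf : ℝ → ℝ := fun w =>
        (∑ j ∈ (Finset.univ.erase i).filter (fun j => σ * u i j = w), c i j)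
        - (∑ j ∈ (Finset.univ.erase i').filter (fun j => σ * u i' j = w), c i' j) with hcf
    have hposU : ∀ w ∈ U, ∀ ξ ∈ Set.Ioo a b, 0 < 2 - ξ * w := by
      intro w hw ξ hξ
      rcases Finset.mem_union.mp hw with h|h <;>
      · obtain ⟨j, hj, rfl⟩ := Finset.mem_image.mp h
        exact hposI _ j (Ne.symm (Finset.mem_erase.mp hj).1) ξ hξ
    have hfib : ∀ (i₁ : Fin n), (∀ j ∈ Finset.univ.erase i₁, σ * u i₁ j ∈ U) →
        ∀ ξ : ℝ, (∑ w ∈ U, (∑ j ∈ (Finset.univ.erase i₁).filter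
            (fun j => σ * u i₁ j = w), c i₁ j) * (2 - ξ*w)^(-((3:ℝ)/2)))
        = ∑ j ∈ Finset.univ.erase i₁, c i₁ j * (2 - ξ*(σ*u i₁ j))^(-((3:ℝ)/2)) := by
      intro i₁ hmaps ξ
      rw [← Finset.sum_fiberwise_of_maps_to hmaps
        (fun j => c i₁ j * (2 - ξ*(σ*u i₁ j))^(-((3:ℝ)/2)))]
      apply Finset.sum_congr rfl
      intro w hw
      rw [Finset.sum_mul]
      apply Finset.sum_congr rfl
      intro j hj
      rw [(Finset.mem_filter.mp hj).2]
    have hsumU : ∀ ξ ∈ Set.Ioo a b, ∑ w ∈ U, cf w * (2 - ξ*w)^(-((3:ℝ)/2)) = 0 := by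
      intro ξ hξ
      have hsplit : ∑ w ∈ U, cf w * (2 - ξ*w)^(-((3:ℝ)/2))
          = (∑ w ∈ U, (∑ j ∈ (Finset.univ.erase i).filter
              (fun j => σ * u i j = w), c i j) * (2 - ξ*w)^(-((3:ℝ)/2)))
            - ∑ w ∈ U, (∑ j ∈ (Finset.univ.erase i').filter
              (fun j => σ * u i' j = w), c i' j) * (2 - ξ*w)^(-((3:ℝ)/2)) := by
        rw [← Finset.sum_sub_distrib]
        apply Finset.sum_congr rfl
        intro w hw
        simp only [hcf]
        ring
      rw [hsplit,
        hfib i (fun j hj => Finset.mem_union_left _ (Finset.mem_image_of_mem _ hj)) ξ,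
        hfib i' (fun j hj => Finset.mem_union_right _ (Finset.mem_image_of_mem _ hj)) ξ,
        hEq ξ hξ i i', sub_self]
    have hzero := indep_aux U cf ((3:ℝ)/2) (by norm_num) a b hab hposU hsumU
    by_cases hv : v ∈ U
    · have h := hzero v hv
      simp only [hcf] at h
      exact sub_eq_zero.mp h
    · have hemp : ∀ (i₁ : Fin n),
          (Finset.univ.erase i₁).image (fun j => σ * u i₁ j) ⊆ U →
          (Finset.univ.erase i₁).filter (fun j => σ * u i₁ j = v) = ∅ := by
        intro i₁ hsub
        rw [Finset.filter_eq_empty_iff]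
        intro j hj h
        exact hv (hsub (h ▸ Finset.mem_image_of_mem _ hj))
      rw [hemp i Finset.subset_union_left, hemp i' Finset.subset_union_right]
      try simp
  -- fiberwise mass sums
  have hP1 : ∀ (γ : ℝ) (i i' : Fin n),
      (∑ j ∈ (Finset.univ.erase i).filter (fun j => Real.cos (α j - α i) = γ), m j)
      = ∑ j ∈ (Finset.univ.erase i').filter (fun j => Real.cos (α j - α i') = γ), m j := by
    intro γ i i'
    have h := hGen (fun i j => m j * (u i j)^(-((1:ℝ)/2))) (hSeq · · · ·) (σ*(1-γ)) i i'
    have hfilt : ∀ (i₁ : Fin n),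
        (Finset.univ.erase i₁).filter (fun j => σ * u i₁ j = σ*(1-γ))
        = (Finset.univ.erase i₁).filter (fun j => Real.cos (α j - α i₁) = γ) := by
      intro i₁
      apply Finset.filter_congr
      intro j hj
      simp only [hudef]
      constructor
      · intro hh
        have := mul_left_cancel₀ hσ0 hh
        linarith
      · intro hh
        rw [hh]
    rw [hfilt i, hfilt i'] at h
    by_cases hγ : (0:ℝ) < 1 - γ
    · have hci : ∀ i₁ : Fin n,
          (∑ j ∈ (Finset.univ.erase i₁).filter (fun j => Real.cos (α j - α i₁) = γ),
            m j * (u i₁ j)^(-((1:ℝ)/2)))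
          = (∑ j ∈ (Finset.univ.erase i₁).filter (fun j => Real.cos (α j - α i₁) = γ),
            m j) * (1-γ)^(-((1:ℝ)/2)) := by
        intro i₁
        rw [Finset.sum_mul]
        apply Finset.sum_congr rfl
        intro j hj
        have hcos := (Finset.mem_filter.mp hj).2
        have : u i₁ j = 1 - γ := by simp only [hudef]; rw [hcos]
        rw [this]
      rw [hci i, hci i'] at h
      exact mul_right_cancel₀ (ne_of_gt (Real.rpow_pos_of_pos hγ _)) h
    · push_neg at hγ
      have hempty : ∀ i₁ : Fin n,
          (Finset.univ.erase i₁).filter (fun j => Real.cos (α j - α i₁) = γ) = ∅ := by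
        intro i₁
        rw [Finset.filter_eq_empty_iff]
        intro j hj hcos
        have h1 := hupos i₁ j (Ne.symm (Finset.mem_erase.mp hj).1)
        simp only [hudef] at h1
        rw [hcos] at h1
        linarith
      rw [hempty i, hempty i']
      try simp
  have hP2 : ∀ (γ : ℝ) (i i' : Fin n),
      (∑ j ∈ (Finset.univ.erase i).filter (fun j => Real.cos (α j - α i) = γ),
        m j * Real.sin (α j - α i))
      = ∑ j ∈ (Finset.univ.erase i').filter (fun j => Real.cos (α j - α i') = γ),
        m j * Real.sin (α j - α i') := by
    intro γ i i'
    have h := hGen (fun i j => m j * Real.sin (α j - α i) * (u i j)^(-((3:ℝ)/2)))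
      (hTeq · · · ·) (σ*(1-γ)) i i'
    have hfilt : ∀ (i₁ : Fin n),
        (Finset.univ.erase i₁).filter (fun j => σ * u i₁ j = σ*(1-γ))
        = (Finset.univ.erase i₁).filter (fun j => Real.cos (α j - α i₁) = γ) := by
      intro i₁
      apply Finset.filter_congr
      intro j hj
      simp only [hudef]
      constructor
      · intro hh
        have := mul_left_cancel₀ hσ0 hh
        linarith
      · intro hh
        rw [hh]
    rw [hfilt i, hfilt i'] at h
    by_cases hγ : (0:ℝ) < 1 - γ
    · have hci : ∀ i₁ : Fin n,
          (∑ j ∈ (Finset.univ.erase i₁).filter (fun j => Real.cos (α j - α i₁) = γ),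
            m j * Real.sin (α j - α i₁) * (u i₁ j)^(-((3:ℝ)/2)))
          = (∑ j ∈ (Finset.univ.erase i₁).filter (fun j => Real.cos (α j - α i₁) = γ),
            m j * Real.sin (α j - α i₁)) * (1-γ)^(-((3:ℝ)/2)) := by
        intro i₁
        rw [Finset.sum_mul]
        apply Finset.sum_congr rfl
        intro j hj
        have hcos := (Finset.mem_filter.mp hj).2
        have : u i₁ j = 1 - γ := by simp only [hudef]; rw [hcos]
        rw [this]
      rw [hci i, hci i'] at h
      exact mul_right_cancel₀ (ne_of_gt (Real.rpow_pos_of_pos hγ _)) h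
    · push_neg at hγ
      have hempty : ∀ i₁ : Fin n,
          (Finset.univ.erase i₁).filter (fun j => Real.cos (α j - α i₁) = γ) = ∅ := by
        intro i₁
        rw [Finset.filter_eq_empty_iff]
        intro j hj hcos
        have h1 := hupos i₁ j (Ne.symm (Finset.mem_erase.mp hj).1)
        simp only [hudef] at h1
        rw [hcos] at h1
        linarith
      rw [hempty i, hempty i']
      try simp
  -- translate to Real.Angle
  have hmemiff : ∀ (i j : Fin n) (a' : ℝ),
      ((α j : Real.Angle) = (α i : Real.Angle) + (a' : Real.Angle)) ↔
      (Real.cos (α j - α i) = Real.cos a' ∧ Real.sin (α j - α i) = Real.sin a') := by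
    intro i j a'
    constructor
    · intro h
      have h2 : ((α j - α i : ℝ) : Real.Angle) = (a' : Real.Angle) := by
        rw [Real.Angle.coe_sub, h]
        abel
      constructor
      · have := congrArg Real.Angle.cos h2
        rwa [Real.Angle.cos_coe, Real.Angle.cos_coe] at this
      · have := congrArg Real.Angle.sin h2
        rwa [Real.Angle.sin_coe, Real.Angle.sin_coe] at this
    · rintro ⟨h1, h2⟩
      have h3 := Real.Angle.cos_sin_inj h1 h2
      rw [Real.Angle.coe_sub] at h3
      exact (eq_add_of_sub_eq h3).trans (add_comm _ _)
  have hP : ∀ d : Real.Angle, d ≠ 0 → ∀ i i' : Fin n,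
      (∑ j ∈ Finset.univ.filter (fun j => (α j : Real.Angle) = (α i : Real.Angle) + d), m j)
      = ∑ j ∈ Finset.univ.filter (fun j => (α j : Real.Angle) = (α i' : Real.Angle) + d), m j := by
    intro d
    refine Real.Angle.induction_on d ?_
    intro a' hd i i'
    have hpy : Real.sin a'^2 + Real.cos a'^2 = 1 := Real.sin_sq_add_cos_sq a'
    have hcosne1 : Real.cos a' = 1 → False := by
      intro hc
      obtain ⟨k, hk⟩ := (Real.cos_eq_one_iff a').mp hc
      apply hd
      rw [← hk]
      have h5 : ((k * (2*π) : ℝ) : Real.Angle) = ((0:ℝ) : Real.Angle) :=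
        Real.Angle.angle_eq_iff_two_pi_dvd_sub.mpr ⟨k, by ring⟩
      rw [h5, Real.Angle.coe_zero]
    by_cases hs : Real.sin a' = 0
    · -- cos a' = −1
      have hc : Real.cos a' = -1 := by
        have h4 : (Real.cos a' - 1) * (Real.cos a' + 1) = 0 := by nlinarith [hpy]
        rcases mul_eq_zero.mp h4 with h5|h5
        · exact absurd (by linarith) hcosne1
        · linarith
      have hset : ∀ i₁ : Fin n,
          Finset.univ.filter (fun j => (α j : Real.Angle) = (α i₁ : Real.Angle) + (a' : Real.Angle))
          = (Finset.univ.erase i₁).filter (fun j => Real.cos (α j - α i₁) = Real.cos a') := by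
        intro i₁
        ext j
        simp only [Finset.mem_filter, Finset.mem_univ, true_and, Finset.mem_erase]
        constructor
        · intro h
          refine ⟨⟨?_, trivial⟩, ((hmemiff i₁ j a').mp h).1⟩
          rintro rfl
          exact hd (left_eq_add.mp h)
        · rintro ⟨⟨hji, -⟩, hcos⟩
          apply (hmemiff i₁ j a').mpr
          refine ⟨hcos, ?_⟩
          have hp2 := Real.sin_sq_add_cos_sq (α j - α i₁)
          rw [hcos, hc] at hp2
          have h0 : Real.sin (α j - α i₁) = 0 := by nlinarith
          rw [h0, hs]
      rw [hset i, hset i']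
      exact hP1 (Real.cos a') i i'
    · -- sin a' ≠ 0
      have hsub : ∀ i₁ : Fin n,
          Finset.univ.filter (fun j => (α j : Real.Angle) = (α i₁ : Real.Angle) + (a' : Real.Angle))
          = ((Finset.univ.erase i₁).filter (fun j => Real.cos (α j - α i₁) = Real.cos a')).filter
              (fun j => Real.sin (α j - α i₁) = Real.sin a') := by
        intro i₁
        ext j
        simp only [Finset.mem_filter, Finset.mem_univ, true_and, Finset.mem_erase]
        constructor
        · intro h
          have hij := (hmemiff i₁ j a').mp h
          refine ⟨⟨⟨?_, trivial⟩, hij.1⟩, hij.2⟩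
          rintro rfl
          exact hd (left_eq_add.mp h)
        · rintro ⟨⟨⟨hji, -⟩, hcos⟩, hsin⟩
          exact (hmemiff i₁ j a').mpr ⟨hcos, hsin⟩
      set F : Fin n → Finset (Fin n) :=
        fun i₁ => (Finset.univ.erase i₁).filter (fun j => Real.cos (α j - α i₁) = Real.cos a') with hF
      have hsinval : ∀ i₁ : Fin n, ∀ j ∈ F i₁, ¬ Real.sin (α j - α i₁) = Real.sin a' →
          Real.sin (α j - α i₁) = -Real.sin a' := by
        intro i₁ j hj hne
        have hcos := (Finset.mem_filter.mp hj).2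
        have hp2 := Real.sin_sq_add_cos_sq (α j - α i₁)
        have h4 : (Real.sin (α j - α i₁) - Real.sin a') * (Real.sin (α j - α i₁) + Real.sin a') = 0 := by
          linear_combination hp2 - hpy - (Real.cos (α j - α i₁) + Real.cos a') * hcos
        rcases mul_eq_zero.mp h4 with h5|h5
        · exact absurd (by linarith) hne
        · linarith
      have hsplitm : ∀ i₁ : Fin n, (∑ j ∈ F i₁, m j) =
          (∑ j ∈ (F i₁).filter (fun j => Real.sin (α j - α i₁) = Real.sin a'), m j)
          + ∑ j ∈ (F i₁).filter (fun j => ¬ Real.sin (α j - α i₁) = Real.sin a'), m j :=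
        fun i₁ => (Finset.sum_filter_add_sum_filter_not _ _ _).symm
      have hsplits : ∀ i₁ : Fin n, (∑ j ∈ F i₁, m j * Real.sin (α j - α i₁)) =
          Real.sin a' * (∑ j ∈ (F i₁).filter (fun j => Real.sin (α j - α i₁) = Real.sin a'), m j)
          - Real.sin a' * (∑ j ∈ (F i₁).filter (fun j => ¬ Real.sin (α j - α i₁) = Real.sin a'), m j) := by
        intro i₁
        rw [← Finset.sum_filter_add_sum_filter_not (F i₁)
          (fun j => Real.sin (α j - α i₁) = Real.sin a') (fun j => m j * Real.sin (α j - α i₁))]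
        have hA : (∑ j ∈ (F i₁).filter (fun j => Real.sin (α j - α i₁) = Real.sin a'),
            m j * Real.sin (α j - α i₁))
            = Real.sin a' * ∑ j ∈ (F i₁).filter (fun j => Real.sin (α j - α i₁) = Real.sin a'), m j := by
          rw [Finset.mul_sum]
          apply Finset.sum_congr rfl
          intro j hj
          rw [(Finset.mem_filter.mp hj).2]
          ring
        have hB : (∑ j ∈ (F i₁).filter (fun j => ¬ Real.sin (α j - α i₁) = Real.sin a'),
            m j * Real.sin (α j - α i₁))
            = -(Real.sin a' * ∑ j ∈ (F i₁).filter (fun j => ¬ Real.sin (α j - α i₁) = Real.sin a'), m j) := by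
          rw [Finset.mul_sum, ← Finset.sum_neg_distrib]
          apply Finset.sum_congr rfl
          intro j hj
          have hmem := Finset.mem_filter.mp hj
          rw [hsinval i₁ j (Finset.mem_filter.mp hj).1 hmem.2]
          ring
        rw [hA, hB]
        ring
      have e1 := hP1 (Real.cos a') i i'
      have e2 := hP2 (Real.cos a') i i'
      rw [show ((Finset.univ.erase i).filter (fun j => Real.cos (α j - α i) = Real.cos a')) = F i from rfl,
        show ((Finset.univ.erase i').filter (fun j => Real.cos (α j - α i') = Real.cos a')) = F i' from rfl] at e1 e2
      rw [hsplitm i, hsplitm i'] at e1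
      rw [hsplits i, hsplits i'] at e2
      have e3 : Real.sin a' * ((∑ j ∈ (F i).filter (fun j => Real.sin (α j - α i) = Real.sin a'), m j)
            - ∑ j ∈ (F i).filter (fun j => ¬ Real.sin (α j - α i) = Real.sin a'), m j)
          = Real.sin a' * ((∑ j ∈ (F i').filter (fun j => Real.sin (α j - α i') = Real.sin a'), m j)
            - ∑ j ∈ (F i').filter (fun j => ¬ Real.sin (α j - α i') = Real.sin a'), m j) := by
        linear_combination e2
      have e4 := mul_left_cancel₀ hs e3
      rw [hsub i, hsub i']
      rw [show ((Finset.univ.erase i).filter (fun j => Real.cos (α j - α i) = Real.cos a')) = F i from rfl,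
        show ((Finset.univ.erase i').filter (fun j => Real.cos (α j - α i') = Real.cos a')) = F i' from rfl]
      linarith
  exact comb n hn α m hm hα0 hα2π hαmono hP
end

section
/- Let σ ∈ {1,−1}, let n ≥ 2, let m_1,…,m_n > 0 be masses extended n-periodically (m_{j+kn} = m_j for k ∈ ℤ), and fix i ∈ {1,…,n}. Suppose there is a nonempty open interval I ⊂ (0,∞) such that for every r ∈ I one has 2 − σr²(1−cos(2πj/n)) > 0 for all j ∈ {1,…,n−1} and Σ_{j=1}^{n−1} m_{j+i}·sin(2πj/n) / ((1−cos(2πj/n))^{3/2}·(2 − σr²(1−cos(2πj/n)))^{3/2}) = 0. Then (m_{j+i} − m_{n−j+i})·sin(2πj/n) = 0 for every j ∈ {1,…,n−1}; in particular m_{i+1} = m_{i−1}. -/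
open Real Finset

lemma vandermonde_aux (J : Finset ℤ) (b e : ℤ → ℝ) (hb : Set.InjOn b J)
    (h : ∀ k : ℕ, ∑ j ∈ J, e j * b j ^ k = 0) : ∀ j ∈ J, e j = 0 := by
  have hP : ∀ p : Polynomial ℝ, ∑ j ∈ J, e j * p.eval (b j) = 0 := by
    intro p
    induction p using Polynomial.induction_on' with
    | add p q hp hq =>
        simp only [Polynomial.eval_add, mul_add, Finset.sum_add_distrib, hp, hq, add_zero]
    | monomial k c =>
        simp only [Polynomial.eval_monomial]
        calc ∑ j ∈ J, e j * (c * b j ^ k) = c * ∑ j ∈ J, e j * b j ^ k := by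
              rw [Finset.mul_sum]; exact Finset.sum_congr rfl fun j _ => by ring
          _ = 0 := by rw [h k, mul_zero]
  intro j0 hj0
  set p : Polynomial ℝ := ∏ l ∈ J.erase j0, (Polynomial.X - Polynomial.C (b l)) with hp
  have hev : ∀ j, p.eval (b j) = ∏ l ∈ J.erase j0, (b j - b l) := by
    intro j; simp [hp, Polynomial.eval_prod]
  have hsum := hP p
  rw [Finset.sum_eq_single_of_mem j0 hj0 (fun j hj hne => by
    rw [hev]; exact mul_eq_zero_of_right _
      (Finset.prod_eq_zero (Finset.mem_erase.mpr ⟨hne, hj⟩) (sub_self (b j))))] at hsum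
  have hne : p.eval (b j0) ≠ 0 := by
    rw [hev]
    refine Finset.prod_ne_zero_iff.mpr fun l hl => ?_
    have hlJ := Finset.mem_of_mem_erase hl
    have hlne := Finset.ne_of_mem_erase hl
    exact sub_ne_zero_of_ne fun h' => hlne (hb hlJ hj0 h'.symm)
  rcases mul_eq_zero.mp hsum with h' | h'
  · exact h'
  · exact absurd h' hne

lemma indep_aux_s5 (σ : ℝ) (hσ0 : σ ≠ 0) (J : Finset ℤ) (a d : ℤ → ℝ)
    (ha : Set.InjOn a J)
    (U : Set ℝ) (hUo : IsOpen U) (hUne : U.Nonempty) (hUsub : U ⊆ Set.Ioi 0)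
    (hposU : ∀ r ∈ U, ∀ j ∈ J, 0 < 2 - σ * a j * r ^ 2)
    (hsum : ∀ r ∈ U, ∑ j ∈ J, d j * (2 - σ * a j * r ^ 2) ^ (-(3 / 2 : ℝ)) = 0) :
    ∀ j ∈ J, d j = 0 := by
  have claim : ∀ k : ℕ, ∀ r ∈ U,
      ∑ j ∈ J, d j * (σ * a j) ^ k * (2 - σ * a j * r ^ 2) ^ (-(3 / 2 : ℝ) - (k : ℕ)) = 0 := by
    intro k
    induction k with
    | zero =>
        intro r hr
        have := hsum r hr
        simpa using this
    | succ k ih =>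
        intro r hr
        set p : ℝ := -(3 / 2 : ℝ) - (k : ℕ) with hpdef
        have hder : ∀ j ∈ J, HasDerivAt
            (fun x => d j * (σ * a j) ^ k * (2 - σ * a j * x ^ 2) ^ p)
            (d j * (σ * a j) ^ k *
              (p * (2 - σ * a j * r ^ 2) ^ (p - 1) * (-(σ * a j * (2 * r))))) r := by
          intro j hj
          have hinner : HasDerivAt (fun x : ℝ => 2 - σ * a j * x ^ 2)
              (-(σ * a j * (2 * r))) r := by
            have h1 := ((hasDerivAt_pow 2 r).const_mul (σ * a j)).const_sub 2
            simpa using h1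
          have houter : HasDerivAt (fun y : ℝ => y ^ p)
              (p * (2 - σ * a j * r ^ 2) ^ (p - 1)) (2 - σ * a j * r ^ 2) :=
            Real.hasDerivAt_rpow_const (Or.inl (ne_of_gt (hposU r hr j hj)))
          have hcomp := houter.comp r hinner
          have := hcomp.const_mul (d j * (σ * a j) ^ k)
          simpa [Function.comp, mul_assoc] using this
        have hF := HasDerivAt.fun_sum hder
        have heq : (fun x => ∑ j ∈ J, d j * (σ * a j) ^ k * (2 - σ * a j * x ^ 2) ^ p)
            =ᶠ[nhds r] fun _ => (0 : ℝ) :=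
          Filter.eventuallyEq_of_mem (hUo.mem_nhds hr) (fun x hx => ih x hx)
        have h0 : HasDerivAt
            (fun x => ∑ j ∈ J, d j * (σ * a j) ^ k * (2 - σ * a j * x ^ 2) ^ p) 0 r :=
          (hasDerivAt_const r (0 : ℝ)).congr_of_eventuallyEq heq
        have huniq := hF.unique h0
        have hr0 : (0 : ℝ) < r := hUsub hr
        have hpneg : p < 0 := by
          rw [hpdef]
          have : (0:ℝ) ≤ (k : ℕ) := Nat.cast_nonneg k
          linarith
        have hexp : ∀ j ∈ J,
            d j * (σ * a j) ^ k *
              (p * (2 - σ * a j * r ^ 2) ^ (p - 1) * (-(σ * a j * (2 * r))))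
            = (-2 * r * p) *
              (d j * (σ * a j) ^ (k + 1) *
                (2 - σ * a j * r ^ 2) ^ (-(3 / 2 : ℝ) - ((k + 1 : ℕ) : ℝ))) := by
          intro j hj
          have hpe : p - 1 = -(3 / 2 : ℝ) - ((k + 1 : ℕ) : ℝ) := by
            rw [hpdef]; push_cast; ring
          rw [hpe]; ring
        rw [Finset.sum_congr rfl hexp, ← Finset.mul_sum] at huniq
        have hc : (-2 * r * p) ≠ 0 := by
          apply mul_ne_zero (mul_ne_zero (by norm_num) (ne_of_gt hr0)) (ne_of_lt hpneg)
        have := (mul_eq_zero.mp huniq).resolve_left hc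
        simpa using this
  obtain ⟨r0, hr0U⟩ := hUne
  have hr0pos : (0:ℝ) < r0 := hUsub hr0U
  set b : ℤ → ℝ := fun j => σ * a j / (2 - σ * a j * r0 ^ 2) with hbdef
  set e : ℤ → ℝ := fun j => d j * (2 - σ * a j * r0 ^ 2) ^ (-(3 / 2 : ℝ)) with hedef
  have hbinj : Set.InjOn b J := by
    intro j1 h1 j2 h2 h
    have x1 := hposU r0 hr0U j1 h1
    have x2 := hposU r0 hr0U j2 h2
    apply ha h1 h2
    rw [hbdef] at h
    simp only at h
    rw [div_eq_div_iff (ne_of_gt x1) (ne_of_gt x2)] at h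
    have hσa : σ * a j1 = σ * a j2 := by nlinarith [h]
    exact mul_left_cancel₀ hσ0 hσa
  have hk : ∀ k : ℕ, ∑ j ∈ J, e j * b j ^ k = 0 := by
    intro k
    rw [← claim k r0 hr0U]
    refine Finset.sum_congr rfl fun j hj => ?_
    have hx : (0:ℝ) < 2 - σ * a j * r0 ^ 2 := hposU r0 hr0U j hj
    rw [hedef, hbdef]
    simp only
    rw [show -(3 / 2 : ℝ) - (k : ℕ) = -(3/2 : ℝ) - ((k:ℕ):ℝ) from rfl,
      Real.rpow_sub hx, Real.rpow_natCast, div_pow]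
    field_simp
  intro j hj
  have he := vandermonde_aux J b e hbinj hk j hj
  have hx : (0:ℝ) < (2 - σ * a j * r0 ^ 2) ^ (-(3 / 2 : ℝ)) :=
    Real.rpow_pos_of_pos (hposU r0 hr0U j hj) _
  rw [hedef] at he
  simp only at he
  exact (mul_eq_zero.mp he).resolve_right (ne_of_gt hx)

/-- Let `σ = ±1`, `n ≥ 2`, and let `m : ℤ → ℝ` be positive masses extended
`n`-periodically. Fix `i ∈ {1,…,n}`. If on some nonempty open interval
`I ⊆ (0,∞)` of values of `r` one has `2 − σr²(1−cos(2πj/n)) > 0` for all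
`j ∈ {1,…,n−1}` and
`Σ_{j=1}^{n−1} m_{j+i} sin(2πj/n) / ((1−cos(2πj/n))^{3/2} (2 − σr²(1−cos(2πj/n)))^{3/2}) = 0`,
then `(m_{j+i} − m_{n−j+i}) sin(2πj/n) = 0` for every `j ∈ {1,…,n−1}`; in
particular `m_{i+1} = m_{i−1}`. -/
theorem polygonal_balance_forces_mass_symmetry
    (σ : ℝ) (hσ : σ = 1 ∨ σ = -1) (n : ℕ) (hn : 2 ≤ n)
    (m : ℤ → ℝ) (hmpos : ∀ j, 0 < m j) (hper : ∀ j : ℤ, m (j + n) = m j)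
    (i : ℤ) (hi : 1 ≤ i ∧ i ≤ n)
    (I : Set ℝ) (hIo : IsOpen I) (hIne : I.Nonempty) (hIsub : I ⊆ Set.Ioi 0)
    (hpos : ∀ r ∈ I, ∀ j ∈ Finset.Icc (1 : ℤ) (n - 1),
      0 < 2 - σ * r ^ 2 * (1 - Real.cos (2 * π * j / n)))
    (hsum : ∀ r ∈ I,
      ∑ j ∈ Finset.Icc (1 : ℤ) (n - 1),
        m (j + i) * Real.sin (2 * π * j / n) /
          ((1 - Real.cos (2 * π * j / n)) ^ ((3 : ℝ) / 2) *
            (2 - σ * r ^ 2 * (1 - Real.cos (2 * π * j / n))) ^ ((3 : ℝ) / 2)) = 0) :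
    (∀ j ∈ Finset.Icc (1 : ℤ) (n - 1),
      (m (j + i) - m (n - j + i)) * Real.sin (2 * π * j / n) = 0) ∧
    m (i + 1) = m (i - 1) := by
  have hπ := Real.pi_pos
  have hn0 : (0:ℝ) < n := by
    have : 0 < n := by omega
    exact_mod_cast this
  have hσ0 : σ ≠ 0 := by rcases hσ with h | h <;> rw [h] <;> norm_num
  -- symmetry of the angle functions
  have hcossym : ∀ j : ℤ, Real.cos (2 * π * (((n:ℤ) - j : ℤ) : ℝ) / n) = Real.cos (2 * π * j / n) := by
    intro j
    have harg : 2 * π * (((n:ℤ) - j : ℤ) : ℝ) / n = 2 * π - 2 * π * j / n := by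
      push_cast
      field_simp
    rw [harg, Real.cos_two_pi_sub]
  have hsinsym : ∀ j : ℤ, Real.sin (2 * π * (((n:ℤ) - j : ℤ) : ℝ) / n) = -Real.sin (2 * π * j / n) := by
    intro j
    have harg : 2 * π * (((n:ℤ) - j : ℤ) : ℝ) / n = 2 * π - 2 * π * j / n := by
      push_cast
      field_simp
    rw [harg, Real.sin_two_pi_sub]
  have hmemmap : ∀ j ∈ Finset.Icc (1:ℤ) (n-1), (n:ℤ) - j ∈ Finset.Icc (1:ℤ) (n-1) := by
    intro j hj
    simp only [Finset.mem_Icc] at hj ⊢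
    omega
  have hinv : ∀ j ∈ Finset.Icc (1:ℤ) (n-1), (n:ℤ) - ((n:ℤ) - j) = j := fun j _ => by ring
  -- angle bounds
  have hθpos : ∀ j ∈ Finset.Icc (1:ℤ) (n-1), 0 < 2 * π * (j:ℝ) / n := by
    intro j hj
    simp only [Finset.mem_Icc] at hj
    have h1 : (1:ℝ) ≤ (j:ℝ) := by exact_mod_cast hj.1
    positivity
  have hθlt : ∀ j ∈ Finset.Icc (1:ℤ) (n-1), 2 * π * (j:ℝ) / n < 2 * π := by
    intro j hj
    simp only [Finset.mem_Icc] at hj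
    have h2 : (j:ℝ) ≤ (n:ℝ) - 1 := by
      have : (j:ℝ) ≤ ((n:ℤ):ℝ) - 1 := by exact_mod_cast hj.2
      simpa using this
    rw [div_lt_iff₀ hn0]
    nlinarith
  have hapos : ∀ j ∈ Finset.Icc (1:ℤ) (n-1), 0 < 1 - Real.cos (2 * π * j / n) := by
    intro j hj
    have hle := Real.cos_le_one (2 * π * (j:ℝ) / n)
    have hne : Real.cos (2 * π * (j:ℝ) / n) ≠ 1 := by
      intro h
      have := (Real.cos_eq_one_iff_of_lt_of_lt
        (by linarith [hθpos j hj]) (hθlt j hj)).mp h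
      linarith [hθpos j hj]
    have := lt_of_le_of_ne hle hne
    linarith
  -- step 1: symmetrized sum
  have hkey : ∀ r ∈ I, ∑ j ∈ Finset.Icc (1:ℤ) (n-1),
      (m (j+i) - m ((n:ℤ) - j + i)) * Real.sin (2*π*j/n) /
        ((1 - Real.cos (2*π*j/n)) ^ ((3:ℝ)/2) *
          (2 - σ*r^2*(1 - Real.cos (2*π*j/n))) ^ ((3:ℝ)/2)) = 0 := by
    intro r hr
    have h1 := hsum r hr
    have h2 : ∑ j ∈ Finset.Icc (1:ℤ) (n-1),
        m ((n:ℤ) - j + i) * Real.sin (2*π*j/n) /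
          ((1 - Real.cos (2*π*j/n)) ^ ((3:ℝ)/2) *
            (2 - σ*r^2*(1 - Real.cos (2*π*j/n))) ^ ((3:ℝ)/2))
        = ∑ j ∈ Finset.Icc (1:ℤ) (n-1),
          -(m (j+i) * Real.sin (2*π*j/n) /
            ((1 - Real.cos (2*π*j/n)) ^ ((3:ℝ)/2) *
              (2 - σ*r^2*(1 - Real.cos (2*π*j/n))) ^ ((3:ℝ)/2))) := by
      refine Finset.sum_nbij' (fun j => (n:ℤ) - j) (fun j => (n:ℤ) - j)
        hmemmap hmemmap hinv hinv ?_
      intro j hj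
      simp only [hcossym j, hsinsym j]
      ring
    calc ∑ j ∈ Finset.Icc (1:ℤ) (n-1),
          (m (j+i) - m ((n:ℤ) - j + i)) * Real.sin (2*π*j/n) /
            ((1 - Real.cos (2*π*j/n)) ^ ((3:ℝ)/2) *
              (2 - σ*r^2*(1 - Real.cos (2*π*j/n))) ^ ((3:ℝ)/2))
        = ∑ j ∈ Finset.Icc (1:ℤ) (n-1),
          (m (j+i) * Real.sin (2*π*j/n) /
            ((1 - Real.cos (2*π*j/n)) ^ ((3:ℝ)/2) *
              (2 - σ*r^2*(1 - Real.cos (2*π*j/n))) ^ ((3:ℝ)/2))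
          - m ((n:ℤ) - j + i) * Real.sin (2*π*j/n) /
            ((1 - Real.cos (2*π*j/n)) ^ ((3:ℝ)/2) *
              (2 - σ*r^2*(1 - Real.cos (2*π*j/n))) ^ ((3:ℝ)/2))) :=
          Finset.sum_congr rfl fun j _ => by ring
      _ = 0 := by
          rw [Finset.sum_sub_distrib, h1, h2]
          simp [h1]
  -- step 2: reduce to the half range
  set H : Finset ℤ := (Finset.Icc (1:ℤ) (n-1)).filter (fun j => 2*j < (n:ℤ)) with hHdef
  have hHsub : H ⊆ Finset.Icc (1:ℤ) (n-1) := Finset.filter_subset _ _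
  have hhalf : ∀ r ∈ I, ∑ j ∈ H,
      (m (j+i) - m ((n:ℤ) - j + i)) * Real.sin (2*π*j/n) /
        ((1 - Real.cos (2*π*j/n)) ^ ((3:ℝ)/2) *
          (2 - σ*r^2*(1 - Real.cos (2*π*j/n))) ^ ((3:ℝ)/2)) = 0 := by
    intro r hr
    have h := hkey r hr
    rw [← Finset.sum_filter_add_sum_filter_not (Finset.Icc (1:ℤ) (n-1))
      (fun j => 2*j < (n:ℤ))] at h
    have hmid : ∑ j ∈ (Finset.Icc (1:ℤ) (n-1)).filter (fun j => ¬(2*j < (n:ℤ))),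
        (m (j+i) - m ((n:ℤ) - j + i)) * Real.sin (2*π*j/n) /
          ((1 - Real.cos (2*π*j/n)) ^ ((3:ℝ)/2) *
            (2 - σ*r^2*(1 - Real.cos (2*π*j/n))) ^ ((3:ℝ)/2))
        = ∑ j ∈ (Finset.Icc (1:ℤ) (n-1)).filter (fun j => (n:ℤ) < 2*j),
          (m (j+i) - m ((n:ℤ) - j + i)) * Real.sin (2*π*j/n) /
            ((1 - Real.cos (2*π*j/n)) ^ ((3:ℝ)/2) *
              (2 - σ*r^2*(1 - Real.cos (2*π*j/n))) ^ ((3:ℝ)/2)) := by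
      symm
      apply Finset.sum_subset
      · intro x hx
        simp only [Finset.mem_filter, Finset.mem_Icc] at hx ⊢
        omega
      · intro x hx hnx
        simp only [Finset.mem_filter, Finset.mem_Icc] at hx hnx
        have h2x : 2 * x = (n:ℤ) := by omega
        have hsin : Real.sin (2*π*(x:ℝ)/n) = 0 := by
          have hxr : 2 * (x:ℝ) = (n:ℝ) := by exact_mod_cast h2x
          have : 2*π*(x:ℝ)/n = π := by
            rw [div_eq_iff (ne_of_gt hn0)]
            linear_combination π * hxr
          rw [this, Real.sin_pi]
        rw [hsin]
        simp
    rw [hmid] at h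
    have hswap : ∑ j ∈ (Finset.Icc (1:ℤ) (n-1)).filter (fun j => (n:ℤ) < 2*j),
        (m (j+i) - m ((n:ℤ) - j + i)) * Real.sin (2*π*j/n) /
          ((1 - Real.cos (2*π*j/n)) ^ ((3:ℝ)/2) *
            (2 - σ*r^2*(1 - Real.cos (2*π*j/n))) ^ ((3:ℝ)/2))
        = ∑ j ∈ H,
          (m (j+i) - m ((n:ℤ) - j + i)) * Real.sin (2*π*j/n) /
            ((1 - Real.cos (2*π*j/n)) ^ ((3:ℝ)/2) *
              (2 - σ*r^2*(1 - Real.cos (2*π*j/n))) ^ ((3:ℝ)/2)) := by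
      refine Finset.sum_nbij' (fun j => (n:ℤ) - j) (fun j => (n:ℤ) - j) ?_ ?_ ?_ ?_ ?_
      · intro x hx; simp only [hHdef, Finset.mem_filter, Finset.mem_Icc] at hx ⊢; omega
      · intro x hx; simp only [hHdef, Finset.mem_filter, Finset.mem_Icc] at hx ⊢; omega
      · intro x _; ring
      · intro x _; ring
      · intro x hx
        rw [hcossym x, hsinsym x, show (n:ℤ) - ((n:ℤ) - x) = x from by ring]
        ring
    rw [hswap] at h
    linarith
  -- step 3: apply the independence lemma
  have hd0 : ∀ j ∈ H,
      (m (j+i) - m ((n:ℤ) - j + i)) * Real.sin (2*π*j/n) /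
        (1 - Real.cos (2*π*j/n)) ^ ((3:ℝ)/2) = 0 := by
    apply indep_aux_s5 σ hσ0 H (fun j => 1 - Real.cos (2*π*j/n))
      (fun j => (m (j+i) - m ((n:ℤ) - j + i)) * Real.sin (2*π*j/n) /
        (1 - Real.cos (2*π*j/n)) ^ ((3:ℝ)/2))
      ?_ I hIo hIne hIsub ?_ ?_
    · -- injectivity
      intro j1 h1 j2 h2 hEq
      simp only [hHdef, Finset.coe_filter, Set.mem_setOf_eq, Finset.mem_Icc] at h1 h2
      have hc : Real.cos (2*π*(j1:ℝ)/n) = Real.cos (2*π*(j2:ℝ)/n) := by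
        simp only at hEq; linarith [hEq]
      have hb1 : 0 ≤ 2*π*(j1:ℝ)/n := by
        have h1' : (1:ℝ) ≤ (j1:ℝ) := by exact_mod_cast h1.1.1
        positivity
      have hb2 : 0 ≤ 2*π*(j2:ℝ)/n := by
        have h2' : (1:ℝ) ≤ (j2:ℝ) := by exact_mod_cast h2.1.1
        positivity
      have hu1 : 2*π*(j1:ℝ)/n ≤ π := by
        have : 2*(j1:ℝ) ≤ (n:ℝ) := by exact_mod_cast le_of_lt h1.2
        rw [div_le_iff₀ hn0]; nlinarith
      have hu2 : 2*π*(j2:ℝ)/n ≤ π := by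
        have : 2*(j2:ℝ) ≤ (n:ℝ) := by exact_mod_cast le_of_lt h2.2
        rw [div_le_iff₀ hn0]; nlinarith
      have hθeq := Real.injOn_cos ⟨hb1, hu1⟩ ⟨hb2, hu2⟩ hc
      have hjr : (j1:ℝ) = (j2:ℝ) := by
        have hne1 : (n:ℝ) ≠ 0 := ne_of_gt hn0
        have hne2 : (2*π:ℝ) ≠ 0 := by positivity
        rw [div_eq_div_iff hne1 hne1] at hθeq
        have h' := mul_right_cancel₀ hne1 hθeq
        exact mul_left_cancel₀ hne2 h'
      exact_mod_cast hjr
    · -- positivity of 2 - σ a r²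
      intro r hr j hj
      have h := hpos r hr j (hHsub hj)
      have : σ * (1 - Real.cos (2*π*(j:ℝ)/n)) * r^2 = σ * r^2 * (1 - Real.cos (2*π*(j:ℝ)/n)) := by
        ring
      linarith [h, this.ge.trans_eq rfl]
    · -- the sum hypothesis
      intro r hr
      rw [← hhalf r hr]
      refine Finset.sum_congr rfl fun j hj => ?_
      have hA : 0 < 1 - Real.cos (2*π*(j:ℝ)/n) := hapos j (hHsub hj)
      have hB : 0 < 2 - σ*r^2*(1 - Real.cos (2*π*(j:ℝ)/n)) := hpos r hr j (hHsub hj)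
      have hbase : 2 - σ * (1 - Real.cos (2*π*(j:ℝ)/n)) * r^2
          = 2 - σ*r^2*(1 - Real.cos (2*π*(j:ℝ)/n)) := by ring
      rw [hbase, Real.rpow_neg hB.le]
      rw [show (3/2 : ℝ) = (3:ℝ)/2 from by norm_num]
      ring
  -- conclusion 1
  have hconc1 : ∀ j ∈ Finset.Icc (1:ℤ) (n-1),
      (m (j + i) - m ((n:ℤ) - j + i)) * Real.sin (2 * π * j / n) = 0 := by
    have hH0 : ∀ j ∈ H, (m (j + i) - m ((n:ℤ) - j + i)) * Real.sin (2 * π * j / n) = 0 := by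
      intro j hj
      have h := hd0 j hj
      have hA : (1 - Real.cos (2*π*(j:ℝ)/n)) ^ ((3:ℝ)/2) ≠ 0 :=
        ne_of_gt (Real.rpow_pos_of_pos (hapos j (hHsub hj)) _)
      exact (div_eq_zero_iff.mp h).resolve_right hA
    intro j hj
    have hjIcc := hj
    simp only [Finset.mem_Icc] at hjIcc
    rcases lt_trichotomy (2*j) (n:ℤ) with hlt | heq | hgt
    · exact hH0 j (Finset.mem_filter.mpr ⟨hj, hlt⟩)
    · have hxr : 2 * (j:ℝ) = (n:ℝ) := by exact_mod_cast heq
      have : 2*π*(j:ℝ)/n = π := by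
        rw [div_eq_iff (ne_of_gt hn0)]
        linear_combination π * hxr
      rw [this, Real.sin_pi, mul_zero]
    · have hmem : (n:ℤ) - j ∈ H := by
        simp only [hHdef, Finset.mem_filter, Finset.mem_Icc]
        omega
      have h := hH0 _ hmem
      rw [hsinsym j, show (n:ℤ) - ((n:ℤ) - j) = j from by ring] at h
      linear_combination h
  refine ⟨hconc1, ?_⟩
  -- conclusion 2
  rcases eq_or_lt_of_le hn with h2 | h3
  · -- n = 2
    have hn2 : (n:ℤ) = 2 := by exact_mod_cast h2.symm
    have := hper (i - 1)
    rw [hn2] at this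
    rw [show i + 1 = i - 1 + 2 from by ring]
    exact this
  · -- n ≥ 3
    have h1mem : (1:ℤ) ∈ Finset.Icc (1:ℤ) (n-1) := by
      simp only [Finset.mem_Icc]
      omega
    have h := hconc1 1 h1mem
    have hsin1 : 0 < Real.sin (2 * π * ((1:ℤ):ℝ) / n) := by
      apply Real.sin_pos_of_pos_of_lt_pi
      · push_cast; positivity
      · push_cast
        rw [div_lt_iff₀ hn0]
        have hn3 : (3:ℝ) ≤ n := by exact_mod_cast h3
        nlinarith
    have hm : m (1 + i) = m ((n:ℤ) - 1 + i) := by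
      have := (mul_eq_zero.mp h).resolve_right (ne_of_gt hsin1)
      linarith
    rw [show i + 1 = 1 + i from by ring, hm,
      show (n:ℤ) - 1 + i = (i - 1) + (n:ℤ) from by ring]
    exact hper (i - 1)
end

section
/- Let σ ∈ {1,−1} and let n ≥ 2 be even. Then there is no nonempty open interval I ⊂ (0,∞) on which 2 − σr²(1−cos(2πj/n)) > 0 for all j ∈ {1,…,n−1} and Σ_{j∈{1,…,n−1}, j even} (1−cos(2πj/n))^{−1/2}·(2 − σr²(1−cos(2πj/n)))^{−3/2} = Σ_{j∈{1,…,n−1}, j odd} (1−cos(2πj/n))^{−1/2}·(2 − σr²(1−cos(2πj/n)))^{−3/2} holds identically for all r ∈ I. Consequently, if masses alternate between the values m (even-indexed bodies) and M (odd-indexed bodies) and the quantities b_i(r) = Σ_{j=1}^{n−1} m_{j+i}(1−cos(2πj/n))^{−1/2}(2−σr²(1−cos(2πj/n)))^{−3/2} satisfy b_1(r) = b_2(r) for all r in such an interval, then M = m. -/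
open Real Finset

open Filter Topology Set ContDiff

private lemma analyticAt_rpow_const_aux {x : ℝ} (hx : 0 < x) (p : ℝ) :
    AnalyticAt ℝ (fun y : ℝ => y ^ p) x := by
  have hlog : AnalyticAt ℝ Real.log x := ((Real.contDiffAt_log (n := ω)).2 hx.ne').analyticAt
  have h1 : AnalyticAt ℝ (Real.exp ∘ (fun y : ℝ => Real.log y * p)) x :=
    AnalyticAt.comp (g := Real.exp) (f := fun y : ℝ => Real.log y * p)
      analyticAt_rexp (hlog.mul analyticAt_const)
  have h1' : AnalyticAt ℝ (fun y : ℝ => Real.exp (Real.log y * p)) x := by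
    simpa [Function.comp_def] using h1
  apply h1'.congr
  filter_upwards [isOpen_Ioi.eventually_mem hx] with y hy
  rw [Real.rpow_def_of_pos hy]

private lemma analyticAt_affine_rpow {cc : ℝ} (p : ℝ) {u : ℝ} (h : 0 < 2 - u * cc) :
    AnalyticAt ℝ (fun v : ℝ => (2 - v * cc) ^ p) u := by
  have h2 : AnalyticAt ℝ (fun v : ℝ => 2 - v * cc) u :=
    analyticAt_const.sub (analyticAt_id.mul analyticAt_const)
  have := AnalyticAt.comp (g := fun y : ℝ => y ^ p) (f := fun v : ℝ => 2 - v * cc)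
    (analyticAt_rpow_const_aux h p) h2
  simpa [Function.comp_def] using this

private lemma continuousAt_affine_rpow {cc : ℝ} (p : ℝ) {u : ℝ} (h : 2 - u * cc ≠ 0) :
    ContinuousAt (fun v : ℝ => (2 - v * cc) ^ p) u := by
  have h2 : ContinuousAt (fun v : ℝ => 2 - v * cc) u := by fun_prop
  have := ContinuousAt.comp (g := fun y : ℝ => y ^ p) (f := fun v : ℝ => 2 - v * cc)
    (Real.continuousAt_rpow_const _ p (Or.inl h)) h2
  simpa [Function.comp_def] using this

private lemma tendsto_crit : Tendsto (fun u : ℝ => (2 - u * 2) ^ (-(3:ℝ)/2)) (𝓝[<] (1:ℝ)) atTop := by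
  have h1 : Tendsto (fun u : ℝ => (2 - u * 2) ^ ((3:ℝ)/2)) (𝓝[<] (1:ℝ)) (𝓝[>] 0) := by
    rw [tendsto_nhdsWithin_iff]
    constructor
    · have hb : Tendsto (fun u : ℝ => 2 - u * 2) (𝓝[<] (1:ℝ)) (𝓝 (2 - 1 * 2)) :=
        ((by fun_prop : Continuous fun u : ℝ => 2 - u * 2).continuousAt).mono_left
          nhdsWithin_le_nhds
      have hb' : Tendsto (fun u : ℝ => 2 - u * 2) (𝓝[<] (1:ℝ)) (𝓝 0) := by
        convert hb using 2; norm_num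
      have hc : ContinuousAt (fun x : ℝ => x ^ ((3:ℝ)/2)) 0 :=
        Real.continuousAt_rpow_const 0 _ (Or.inr (by norm_num))
      have := hc.tendsto.comp hb'
      simpa [Real.zero_rpow (by norm_num : ((3:ℝ)/2) ≠ 0), Function.comp_def] using this
    · filter_upwards [self_mem_nhdsWithin] with u hu
      have hu' : u < 1 := hu
      have : (0:ℝ) < 2 - u * 2 := by linarith
      exact Real.rpow_pos_of_pos this _
  have h2 := h1.inv_tendsto_nhdsGT_zero
  apply h2.congr'
  filter_upwards [self_mem_nhdsWithin] with u hu
  have hu' : u < 1 := hu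
  have hpos : (0:ℝ) < 2 - u * 2 := by linarith
  simp only [Pi.inv_apply]
  rw [← Real.rpow_neg hpos.le]
  norm_num

set_option maxHeartbeats 2000000 in
private lemma main1 (σ : ℝ) (hσ : σ = 1 ∨ σ = -1) (n : ℕ) (hn : 2 ≤ n) (hne : Even n) :
    ¬ ∃ I : Set ℝ, IsOpen I ∧ I.Nonempty ∧ I ⊆ Set.Ioi 0 ∧
      ∀ r ∈ I,
        (∀ j ∈ Finset.Icc (1 : ℤ) (n - 1),
          0 < 2 - σ * r ^ 2 * (1 - Real.cos (2 * π * j / n))) ∧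
        ∑ j ∈ (Finset.Icc (1 : ℤ) (n - 1)).filter (fun j => Even j),
            (1 - Real.cos (2 * π * j / n)) ^ (-(1 : ℝ) / 2) *
              (2 - σ * r ^ 2 * (1 - Real.cos (2 * π * j / n))) ^ (-(3 : ℝ) / 2)
          = ∑ j ∈ (Finset.Icc (1 : ℤ) (n - 1)).filter (fun j => Odd j),
            (1 - Real.cos (2 * π * j / n)) ^ (-(1 : ℝ) / 2) *
              (2 - σ * r ^ 2 * (1 - Real.cos (2 * π * j / n))) ^ (-(3 : ℝ) / 2) := by
  rintro ⟨I, hIo, ⟨r₀, hr₀⟩, hIpos, hI⟩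
  obtain ⟨k, hk⟩ := hne
  set S : Finset ℤ := Finset.Icc (1:ℤ) ((n:ℤ) - 1) with hS
  set c : ℤ → ℝ := fun j => 1 - Real.cos (2 * π * (j:ℝ) / (n:ℝ)) with hc
  set f : ℤ → ℝ → ℝ := fun j u => c j ^ (-(1:ℝ)/2) * (2 - u * c j) ^ (-(3:ℝ)/2) with hf
  have hk1 : 1 ≤ k := by omega
  have hn0 : (0:ℝ) < n := by positivity
  have hkS : ((k:ℤ)) ∈ S := by
    rw [hS, Finset.mem_Icc]; omega
  have hkR : ((k:ℝ)) ≠ 0 := by positivity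
  have hck : c ((k:ℕ):ℤ) = 2 := by
    have hnk : (n:ℝ) = 2 * k := by
      rw [hk]; push_cast; ring
    have hθ : 2 * π * (((k:ℕ):ℤ):ℝ) / (n:ℝ) = π := by
      push_cast
      rw [hnk]; field_simp
    rw [hc]; simp only [hθ, Real.cos_pi]; norm_num
  have hθmem : ∀ j ∈ S, 0 < 2 * π * (j:ℝ) / n ∧ 2 * π * (j:ℝ) / n < 2 * π := by
    intro j hj
    rw [hS, Finset.mem_Icc] at hj
    have h1 : (1:ℝ) ≤ (j:ℝ) := by exact_mod_cast hj.1
    have h2 : (j:ℝ) ≤ (n:ℝ) - 1 := by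
      have h := hj.2
      have h' : ((j:ℝ)) ≤ (((n:ℤ) - 1 : ℤ) : ℝ) := by exact_mod_cast h
      push_cast at h'; linarith
    constructor
    · apply div_pos _ hn0; nlinarith [pi_pos]
    · rw [div_lt_iff₀ hn0]; nlinarith [pi_pos]
  have hcpos : ∀ j ∈ S, 0 < c j := by
    intro j hj
    obtain ⟨hθ1, hθ2⟩ := hθmem j hj
    have hne1 : Real.cos (2 * π * (j:ℝ) / n) ≠ 1 := by
      intro h
      rw [Real.cos_eq_one_iff_of_lt_of_lt (by linarith) hθ2] at h
      linarith
    have hle := Real.cos_le_one (2 * π * (j:ℝ) / n)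
    have := lt_of_le_of_ne hle hne1
    rw [hc]; simp only; linarith
  have hcle : ∀ j : ℤ, c j ≤ 2 := by
    intro j
    have := Real.neg_one_le_cos (2 * π * (j:ℝ) / n)
    rw [hc]; simp only; linarith
  have hclt : ∀ j ∈ S, j ≠ ((k:ℕ):ℤ) → c j < 2 := by
    intro j hj hjk
    refine lt_of_le_of_ne (hcle j) (fun h => hjk ?_)
    have hcosm1 : Real.cos (2 * π * (j:ℝ) / n) = -1 := by
      rw [hc] at h; simp only at h; linarith
    obtain ⟨m, hm⟩ := Real.cos_eq_neg_one_iff.1 hcosm1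
    obtain ⟨hθ1, hθ2⟩ := hθmem j hj
    have hm0 : m = 0 := by
      rcases lt_trichotomy m 0 with hlt | heq | hgt
      · have : (m:ℝ) ≤ -1 := by exact_mod_cast (by omega : m ≤ -1)
        nlinarith [pi_pos]
      · exact heq
      · have : (1:ℝ) ≤ (m:ℝ) := by exact_mod_cast (by omega : 1 ≤ m)
        nlinarith [pi_pos]
    rw [hm0] at hm
    push_cast at hm
    have hπj : 2 * π * (j:ℝ) = π * (n:ℝ) := by
      field_simp at hm; linear_combination (-π) * hm
    have h2j : (2 * j : ℝ) = (n:ℝ) := by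
      have hπ := Real.pi_ne_zero
      have : π * (2 * (j:ℝ)) = π * (n:ℝ) := by ring_nf; ring_nf at hπj; linarith
      exact mul_left_cancel₀ hπ this
    have : (2 * j : ℤ) = (n:ℤ) := by exact_mod_cast h2j
    omega
  have hpos1 : ∀ u : ℝ, u < 1 → ∀ j ∈ S, 0 < 2 - u * c j := by
    intro u hu j hj
    rcases le_or_gt u 0 with h | h
    · have : u * c j ≤ 0 := mul_nonpos_of_nonpos_of_nonneg h (hcpos j hj).le
      linarith
    · nlinarith [hcle j, hcpos j hj]
  set F : ℝ → ℝ := fun u => (∑ j ∈ S.filter (fun j => Even j), f j u)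
      - ∑ j ∈ S.filter (fun j => Odd j), f j u with hF
  have hfanal : ∀ j ∈ S, ∀ u ∈ Set.Iio (1:ℝ), AnalyticAt ℝ (f j) u := by
    intro j hj u hu
    exact analyticAt_const.mul (analyticAt_affine_rpow _ (hpos1 u hu j hj))
  have hFanal : AnalyticOnNhd ℝ F (Set.Iio 1) := by
    intro u hu
    exact (Finset.analyticAt_fun_sum _ (fun j hj => hfanal j (Finset.mem_filter.1 hj).1 u hu)).sub
      (Finset.analyticAt_fun_sum _ (fun j hj => hfanal j (Finset.mem_filter.1 hj).1 u hu))
  have hr₀pos : 0 < r₀ := hIpos hr₀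
  have hσσ : σ * σ = 1 := by rcases hσ with h | h <;> rw [h] <;> norm_num
  have hu₀lt : σ * r₀ ^ 2 ∈ Set.Iio (1:ℝ) := by
    have h2 := (hI r₀ hr₀).1 ((k:ℕ):ℤ) hkS
    have : (1 : ℝ) - Real.cos (2 * π * (((k:ℕ):ℤ):ℝ) / n) = 2 := hck
    rw [this] at h2
    simp only [Set.mem_Iio]; linarith
  have hFev : ∀ᶠ u in 𝓝 (σ * r₀ ^ 2), F u = 0 := by
    obtain ⟨ε, hε, hball⟩ := Metric.isOpen_iff.1 hIo r₀ hr₀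
    set a := max (r₀ - ε/2) (r₀/2) with ha
    set b := r₀ + ε/2 with hb
    have hapos : 0 < a := lt_max_of_lt_right (by linarith)
    have har : a < r₀ := max_lt (by linarith) (by linarith)
    have hrb : r₀ < b := by rw [hb]; linarith
    have hIoo : Set.Ioo a b ⊆ I := by
      intro x hx
      apply hball
      rw [Metric.mem_ball, Real.dist_eq, abs_sub_lt_iff]
      have h1 := hx.1
      have h2 := hx.2
      have h3 : r₀ - ε/2 ≤ a := le_max_left _ _
      constructor <;> [rw [hb] at h2; skip] <;> [linarith; linarith]
    have hopen : IsOpen {u : ℝ | σ * u ∈ Set.Ioo (a^2) (b^2)} :=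
      isOpen_Ioo.preimage (by fun_prop)
    have hmem : σ * r₀ ^ 2 ∈ {u : ℝ | σ * u ∈ Set.Ioo (a^2) (b^2)} := by
      have : σ * (σ * r₀ ^ 2) = r₀ ^ 2 := by rw [← mul_assoc, hσσ, one_mul]
      simp only [Set.mem_setOf_eq, this, Set.mem_Ioo]
      constructor <;> nlinarith
    filter_upwards [hopen.mem_nhds hmem] with u hu
    simp only [Set.mem_setOf_eq, Set.mem_Ioo] at hu
    set r := Real.sqrt (σ * u) with hr
    have hσu0 : 0 < σ * u := lt_trans (by positivity) hu.1
    have hra : a < r := by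
      rw [hr, ← Real.sqrt_sq hapos.le]
      exact Real.sqrt_lt_sqrt (by positivity) hu.1
    have hrbb : r < b := by
      rw [hr, ← Real.sqrt_sq (by linarith : (0:ℝ) ≤ b)]
      exact Real.sqrt_lt_sqrt hσu0.le hu.2
    have hrI : r ∈ I := hIoo ⟨hra, hrbb⟩
    have hru : σ * r ^ 2 = u := by
      rw [hr, Real.sq_sqrt hσu0.le, ← mul_assoc, hσσ, one_mul]
    have heq := (hI r hrI).2
    rw [hru] at heq
    rw [hF]
    simp only [sub_eq_zero]
    exact heq
  have hF0 : Set.EqOn F 0 (Set.Iio 1) :=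
    hFanal.eqOn_zero_of_preconnected_of_eventuallyEq_zero (convex_Iio _).isPreconnected
      hu₀lt hFev
  have final : ∀ A B : Finset ℤ, ((k:ℤ) ∉ A) → ((k:ℤ) ∉ B) → A ⊆ S → B ⊆ S →
      (∀ u ∈ Set.Iio (1:ℝ), f ((k:ℕ):ℤ) u = (∑ j ∈ A, f j u) - ∑ j ∈ B, f j u) → False := by
    intro A B hkA hkB hAS hBS hid
    have hcont : ∀ j, j ∈ A ∨ j ∈ B → Tendsto (f j) (𝓝[<] (1:ℝ)) (𝓝 (f j 1)) := by
      intro j hj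
      have hjS : j ∈ S := by rcases hj with h | h; exacts [hAS h, hBS h]
      have hjk : j ≠ ((k:ℕ):ℤ) := by
        rintro rfl; rcases hj with h | h; exacts [hkA h, hkB h]
      have hpos : (0:ℝ) < 2 - 1 * c j := by
        have := hclt j hjS hjk; linarith
      have hca : ContinuousAt (f j) 1 :=
        continuousAt_const.mul (continuousAt_affine_rpow _ hpos.ne')
      exact hca.tendsto.mono_left nhdsWithin_le_nhds
    have hG : Tendsto (fun u => (∑ j ∈ A, f j u) - ∑ j ∈ B, f j u) (𝓝[<] (1:ℝ))
        (𝓝 ((∑ j ∈ A, f j 1) - ∑ j ∈ B, f j 1)) :=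
      (tendsto_finset_sum _ fun j hj => hcont j (Or.inl hj)).sub
        (tendsto_finset_sum _ fun j hj => hcont j (Or.inr hj))
    have hfk : Tendsto (f ((k:ℕ):ℤ)) (𝓝[<] (1:ℝ))
        (𝓝 ((∑ j ∈ A, f j 1) - ∑ j ∈ B, f j 1)) := by
      apply hG.congr'
      filter_upwards [self_mem_nhdsWithin] with u hu using (hid u hu).symm
    have htop : Tendsto (f ((k:ℕ):ℤ)) (𝓝[<] (1:ℝ)) atTop := by
      have h2 : f ((k:ℕ):ℤ) = fun u => c ((k:ℕ):ℤ) ^ (-(1:ℝ)/2) * (2 - u * 2) ^ (-(3:ℝ)/2) := by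
        funext u; rw [hf]; simp only [hck]
      rw [h2]
      have hcpos' : (0:ℝ) < c ((k:ℕ):ℤ) ^ (-(1:ℝ)/2) := by
        rw [hck]; exact Real.rpow_pos_of_pos (by norm_num) _
      exact Tendsto.const_mul_atTop hcpos' tendsto_crit
    exact not_tendsto_atTop_of_tendsto_nhds hfk htop
  by_cases hkE : Even ((k:ℕ):ℤ)
  · have hkmemE : ((k:ℕ):ℤ) ∈ S.filter (fun j => Even j) := Finset.mem_filter.2 ⟨hkS, hkE⟩
    apply final (S.filter (fun j => Odd j)) ((S.filter (fun j => Even j)).erase ((k:ℕ):ℤ))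
    · intro h
      exact (Int.not_odd_iff_even.2 hkE) (Finset.mem_filter.1 h).2
    · exact Finset.notMem_erase _ _
    · exact fun j hj => (Finset.mem_filter.1 hj).1
    · exact fun j hj => (Finset.mem_filter.1 (Finset.mem_of_mem_erase hj)).1
    · intro u hu
      have h0 : F u = 0 := hF0 hu
      rw [hF] at h0
      simp only [sub_eq_zero] at h0
      have hsplit : ∑ j ∈ S.filter (fun j => Even j), f j u
          = f ((k:ℕ):ℤ) u + ∑ j ∈ (S.filter (fun j => Even j)).erase ((k:ℕ):ℤ), f j u :=
        (Finset.add_sum_erase _ _ hkmemE).symm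
      rw [hsplit] at h0
      linarith
  · have hkO : Odd ((k:ℕ):ℤ) := Int.not_even_iff_odd.1 hkE
    have hkmemO : ((k:ℕ):ℤ) ∈ S.filter (fun j => Odd j) := Finset.mem_filter.2 ⟨hkS, hkO⟩
    apply final (S.filter (fun j => Even j)) ((S.filter (fun j => Odd j)).erase ((k:ℕ):ℤ))
    · intro h
      exact hkE (Finset.mem_filter.1 h).2
    · exact Finset.notMem_erase _ _
    · exact fun j hj => (Finset.mem_filter.1 hj).1
    · exact fun j hj => (Finset.mem_filter.1 (Finset.mem_of_mem_erase hj)).1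
    · intro u hu
      have h0 : F u = 0 := hF0 hu
      rw [hF] at h0
      simp only [sub_eq_zero] at h0
      have hsplit : ∑ j ∈ S.filter (fun j => Odd j), f j u
          = f ((k:ℕ):ℤ) u + ∑ j ∈ (S.filter (fun j => Odd j)).erase ((k:ℕ):ℤ), f j u :=
        (Finset.add_sum_erase _ _ hkmemO).symm
      rw [hsplit] at h0
      linarith

/-- Let `σ = ±1` and `n ≥ 2` even. There is no nonempty open interval
`I ⊆ (0,∞)` on which `2 − σr²(1−cos(2πj/n)) > 0` for all `j ∈ {1,…,n−1}` and
the sum over even `j` of `(1−cos(2πj/n))^{−1/2} (2−σr²(1−cos(2πj/n)))^{−3/2}`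
equals the corresponding sum over odd `j` identically in `r`.  Consequently,
if the masses alternate between `mm` (even-indexed) and `MM` (odd-indexed) and
`b₁(r) = b₂(r)` on such an interval, then `MM = mm`. -/
theorem polygonal_even_odd_sums_not_identically_equal_and_alternating_masses_equal
    (σ : ℝ) (hσ : σ = 1 ∨ σ = -1) (n : ℕ) (hn : 2 ≤ n) (hne : Even n) :
    (¬ ∃ I : Set ℝ, IsOpen I ∧ I.Nonempty ∧ I ⊆ Set.Ioi 0 ∧
      ∀ r ∈ I,
        (∀ j ∈ Finset.Icc (1 : ℤ) (n - 1),
          0 < 2 - σ * r ^ 2 * (1 - Real.cos (2 * π * j / n))) ∧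
        ∑ j ∈ (Finset.Icc (1 : ℤ) (n - 1)).filter (fun j => Even j),
            (1 - Real.cos (2 * π * j / n)) ^ (-(1 : ℝ) / 2) *
              (2 - σ * r ^ 2 * (1 - Real.cos (2 * π * j / n))) ^ (-(3 : ℝ) / 2)
          = ∑ j ∈ (Finset.Icc (1 : ℤ) (n - 1)).filter (fun j => Odd j),
            (1 - Real.cos (2 * π * j / n)) ^ (-(1 : ℝ) / 2) *
              (2 - σ * r ^ 2 * (1 - Real.cos (2 * π * j / n))) ^ (-(3 : ℝ) / 2)) ∧
    (∀ (mm MM : ℝ) (masses : ℤ → ℝ), 0 < mm → 0 < MM →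
      (∀ j : ℤ, Even j → masses j = mm) →
      (∀ j : ℤ, Odd j → masses j = MM) →
      ∀ I : Set ℝ, IsOpen I → I.Nonempty → I ⊆ Set.Ioi 0 →
        (∀ r ∈ I,
          (∀ j ∈ Finset.Icc (1 : ℤ) (n - 1),
            0 < 2 - σ * r ^ 2 * (1 - Real.cos (2 * π * j / n))) ∧
          ∑ j ∈ Finset.Icc (1 : ℤ) (n - 1),
              masses (j + 1) * (1 - Real.cos (2 * π * j / n)) ^ (-(1 : ℝ) / 2) *
                (2 - σ * r ^ 2 * (1 - Real.cos (2 * π * j / n))) ^ (-(3 : ℝ) / 2)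
            = ∑ j ∈ Finset.Icc (1 : ℤ) (n - 1),
              masses (j + 2) * (1 - Real.cos (2 * π * j / n)) ^ (-(1 : ℝ) / 2) *
                (2 - σ * r ^ 2 * (1 - Real.cos (2 * π * j / n))) ^ (-(3 : ℝ) / 2)) →
        MM = mm) := by
  refine ⟨main1 σ hσ n hn hne, ?_⟩
  intro mm MM masses hmm hMM hEv hOd I hIo hIne hIpos hb
  by_contra hMm
  apply main1 σ hσ n hn hne
  refine ⟨I, hIo, hIne, hIpos, fun r hr => ⟨(hb r hr).1, ?_⟩⟩
  have heq := (hb r hr).2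
  set S := Finset.Icc (1:ℤ) ((n:ℤ) - 1) with hS
  set g : ℤ → ℝ := fun j => (1 - Real.cos (2 * π * (j:ℝ) / n)) ^ (-(1:ℝ) / 2) *
      (2 - σ * r ^ 2 * (1 - Real.cos (2 * π * (j:ℝ) / n))) ^ (-(3:ℝ) / 2) with hg
  have h1 : ∀ j ∈ S, masses (j + 1) * (1 - Real.cos (2 * π * (j:ℝ) / n)) ^ (-(1:ℝ) / 2) *
      (2 - σ * r ^ 2 * (1 - Real.cos (2 * π * (j:ℝ) / n))) ^ (-(3:ℝ) / 2)
      = (if Even j then MM else mm) * g j := by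
    intro j _
    rw [mul_assoc, hg]
    by_cases h : Even j
    · rw [if_pos h, hOd _ (Even.add_one h)]
    · rw [if_neg h, hEv _ (Odd.add_one (Int.not_even_iff_odd.1 h))]
  have h2 : ∀ j ∈ S, masses (j + 2) * (1 - Real.cos (2 * π * (j:ℝ) / n)) ^ (-(1:ℝ) / 2) *
      (2 - σ * r ^ 2 * (1 - Real.cos (2 * π * (j:ℝ) / n))) ^ (-(3:ℝ) / 2)
      = (if Even j then mm else MM) * g j := by
    intro j _
    rw [mul_assoc, hg]
    by_cases h : Even j
    · rw [if_pos h, hEv _ (h.add even_two)]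
    · rw [if_neg h, hOd _ ((Int.not_even_iff_odd.1 h).add_even even_two)]
  rw [Finset.sum_congr rfl h1, Finset.sum_congr rfl h2] at heq
  simp only [ite_mul] at heq
  rw [Finset.sum_ite, Finset.sum_ite, ← Finset.mul_sum, ← Finset.mul_sum, ← Finset.mul_sum,
    ← Finset.mul_sum] at heq
  have hfe : S.filter (fun j => Odd j) = S.filter (fun j => ¬ Even j) :=
    Finset.filter_congr fun x _ => (Int.not_even_iff_odd).symm
  rw [hfe]
  exact mul_left_cancel₀ (sub_ne_zero.2 hMm) (by linear_combination heq)
end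

section
/- Let σ ∈ {1,−1}, let c_1,…,c_m be pairwise distinct positive real numbers and a_1,…,a_m ∈ ℝ. If there is a nonempty open interval I ⊂ (0,∞) such that 2 − σr²c_k > 0 for all k and all r ∈ I, and Σ_{k=1}^{m} a_k·(2 − σr²c_k)^{−3/2} = 0 for all r ∈ I, then a_1 = a_2 = … = a_m = 0. -/
open Real Finset

/-- Vandermonde-type lemma: if `∑ b k * x k ^ n = 0` for all `n` and the `x k`
are distinct, then all `b k` vanish. -/
lemma aux_vandermonde {M : ℕ} (b x : Fin M → ℝ) (hx : Function.Injective x)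
    (h : ∀ n : ℕ, ∑ k, b k * x k ^ n = 0) : ∀ k, b k = 0 := by
  have hdet : (Matrix.vandermonde x).det ≠ 0 := by
    rw [Ne, Matrix.det_vandermonde_eq_zero_iff]
    rintro ⟨i, j, hij, hne⟩
    exact hne (hx hij)
  have hdet' : ((Matrix.vandermonde x).transpose).det ≠ 0 := by
    rwa [Matrix.det_transpose]
  have hmv : ((Matrix.vandermonde x).transpose).mulVec b = 0 := by
    funext n
    have := h n
    simpa [Matrix.mulVec, Matrix.vandermonde, dotProduct, mul_comm] using this
  have := Matrix.eq_zero_of_mulVec_eq_zero hdet' hmv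
  intro k; rw [this]; rfl

/-- Linear independence of the family `r ↦ (2 − σr²c)^{−3/2}` for pairwise
distinct positive parameters `c`: if a linear combination vanishes identically
on a nonempty open interval `I ⊆ (0,∞)` on which all `2 − σr²cₖ` are positive,
then all coefficients vanish. -/
theorem linear_independence_of_inverse_power_family
    (σ : ℝ) (hσ : σ = 1 ∨ σ = -1) (M : ℕ) (c a : Fin M → ℝ)
    (hcpos : ∀ k, 0 < c k) (hcinj : Function.Injective c)
    (I : Set ℝ) (hIo : IsOpen I) (hIne : I.Nonempty) (hIsub : I ⊆ Set.Ioi 0)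
    (hpos : ∀ r ∈ I, ∀ k, 0 < 2 - σ * r ^ 2 * c k)
    (hsum : ∀ r ∈ I, ∑ k, a k * (2 - σ * r ^ 2 * c k) ^ (-(3 : ℝ) / 2) = 0) :
    ∀ k, a k = 0 := by
  have hσ0 : σ ≠ 0 := by rcases hσ with h | h <;> rw [h] <;> norm_num
  -- exponent family
  set e : ℕ → ℝ := fun n => -(3 : ℝ) / 2 - n with he
  have hen : ∀ n : ℕ, e n ≠ 0 := by
    intro n
    have : (n : ℝ) ≥ 0 := Nat.cast_nonneg n
    simp only [he]
    nlinarith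
  -- key induction: all "derived" sums vanish on I
  have key : ∀ n : ℕ, ∀ r ∈ I, ∑ k, a k * c k ^ n * (2 - σ * r ^ 2 * c k) ^ (e n) = 0 := by
    intro n
    induction n with
    | zero =>
      intro r hr
      have := hsum r hr
      simpa [he] using this
    | succ n ih =>
      -- the function F vanishes on I, so its derivative vanishes on I
      intro r hr
      set F : ℝ → ℝ := fun r => ∑ k, a k * c k ^ n * (2 - σ * r ^ 2 * c k) ^ (e n) with hF
      have hderiv : HasDerivAt F
          (∑ k, a k * c k ^ n * ((-(σ * (2 * r) * c k)) * e n *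
            (2 - σ * r ^ 2 * c k) ^ (e n - 1))) r := by
        apply HasDerivAt.fun_sum
        intro k _
        have h1 : HasDerivAt (fun r : ℝ => 2 - σ * r ^ 2 * c k) (-(σ * (2 * r) * c k)) r := by
          have h2 : HasDerivAt (fun r : ℝ => σ * r ^ 2 * c k) (σ * (2 * r) * c k) r := by
            have := (hasDerivAt_pow 2 r).const_mul σ
            simpa [pow_one, mul_comm, mul_assoc, mul_left_comm] using this.mul_const (c k)
          simpa using (hasDerivAt_const r (2 : ℝ)).fun_sub h2
        have hne : (2 - σ * r ^ 2 * c k) ≠ 0 := ne_of_gt (hpos r hr k)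
        exact (h1.rpow_const (Or.inl hne)).const_mul _
      -- F is zero in a neighborhood of r
      have hzero : F =ᶠ[nhds r] fun _ => (0 : ℝ) := by
        filter_upwards [hIo.mem_nhds hr] with s hs
        exact ih s hs
      have hderiv0 : HasDerivAt F 0 r := by
        have : HasDerivAt (fun _ : ℝ => (0 : ℝ)) 0 r := hasDerivAt_const r 0
        exact this.congr_of_eventuallyEq hzero
      have hsum0 : (∑ k, a k * c k ^ n * ((-(σ * (2 * r) * c k)) * e n *
            (2 - σ * r ^ 2 * c k) ^ (e n - 1))) = 0 :=
        hderiv.unique hderiv0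
      -- factor out the constant -(2 σ r) * e n
      have hr0 : (0 : ℝ) < r := hIsub hr
      have hfac : (∑ k, a k * c k ^ n * ((-(σ * (2 * r) * c k)) * e n *
            (2 - σ * r ^ 2 * c k) ^ (e n - 1)))
          = (-(2 * σ * r) * e n) *
            ∑ k, a k * c k ^ (n + 1) * (2 - σ * r ^ 2 * c k) ^ (e (n + 1)) := by
        rw [Finset.mul_sum]
        apply Finset.sum_congr rfl
        intro k _
        have hexp : e n - 1 = e (n + 1) := by
          simp [he]
          push_cast
          ring
        rw [← hexp]
        ring
      rw [hfac] at hsum0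
      have hc : (-(2 * σ * r) * e n) ≠ 0 := by
        apply mul_ne_zero _ (hen n)
        simp only [neg_ne_zero]
        positivity
      exact (mul_eq_zero.mp hsum0).resolve_left hc
  -- now evaluate at a fixed point r0
  obtain ⟨r0, hr0⟩ := hIne
  set u : Fin M → ℝ := fun k => 2 - σ * r0 ^ 2 * c k with hu
  have hupos : ∀ k, 0 < u k := fun k => hpos r0 hr0 k
  set b : Fin M → ℝ := fun k => a k * (u k) ^ (-(3 : ℝ) / 2) with hb
  set x : Fin M → ℝ := fun k => c k / u k with hx
  have hxinj : Function.Injective x := by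
    intro i j hij
    apply hcinj
    have hui := (hupos i).ne'
    have huj := (hupos j).ne'
    have hij' : c i / u i = c j / u j := hij
    rw [div_eq_div_iff hui huj] at hij'
    replace hij : c i * (2 - σ * r0 ^ 2 * c j) = c j * (2 - σ * r0 ^ 2 * c i) := hij'
    -- c i * (2 - σ r0² c j) = c j * (2 - σ r0² c i)
    nlinarith [hij]
  have hmain : ∀ n : ℕ, ∑ k, b k * x k ^ n = 0 := by
    intro n
    have := key n r0 hr0
    rw [← this]
    apply Finset.sum_congr rfl
    intro k _
    have huk := hupos k
    have h1 : (u k) ^ (e n) = (u k) ^ (-(3 : ℝ) / 2) * ((u k) ^ n)⁻¹ := by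
      rw [← Real.rpow_natCast (u k) n, ← Real.rpow_neg huk.le, ← Real.rpow_add huk]
      congr 1 <;> simp [he, sub_eq_add_neg]
    show a k * (u k) ^ (-(3 : ℝ) / 2) * (c k / u k) ^ n = a k * c k ^ n * (u k) ^ (e n)
    rw [h1, div_pow]
    have hun : (u k ^ n) ≠ 0 := pow_ne_zero _ huk.ne'
    field_simp
  have hbz := aux_vandermonde b x hxinj hmain
  intro k
  have := hbz k
  have hne : (u k) ^ (-(3 : ℝ) / 2) ≠ 0 :=
    ne_of_gt (Real.rpow_pos_of_pos (hupos k) _)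
  simp only [hb] at this
  exact (mul_eq_zero.mp this).resolve_right hne
end

section
/- Let σ ∈ {1,−1}, n ≥ 2, m > 0 and r > 0, and assume r < 1 in case σ = 1. Set α_i = 2π(i−1)/n for i = 1,…,n and z = √(1 − σr²). Then there exists a constant A > 0 such that the curves q_i(t) = (r·cos(At+α_i), r·sin(At+α_i), 0, z), i = 1,…,n, form a solution of the curved n-body problem with all n masses equal to m; in particular, polygonal positive elliptic (σ=1) and negative elliptic (σ=−1) relative equilibria with equal masses and with q_{i3}, q_{i4} independent of i exist for every n ≥ 2. -/
open Real Finset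

lemma hasDerivAt_bcos (b A c t : ℝ) :
    HasDerivAt (fun s => b * Real.cos (A*s+c)) (-(b*A)*Real.sin (A*t+c)) t := by
  have h1 : HasDerivAt (fun s : ℝ => A*s + c) A t := by
    simpa using ((hasDerivAt_id t).const_mul A).add_const c
  have := ((Real.hasDerivAt_cos (A*t+c)).comp t h1).const_mul b
  exact this.congr_deriv (by ring)

lemma hasDerivAt_bsin (b A c t : ℝ) :
    HasDerivAt (fun s => b * Real.sin (A*s+c)) (b*A*Real.cos (A*t+c)) t := by
  have h1 : HasDerivAt (fun s : ℝ => A*s + c) A t := by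
    simpa using ((hasDerivAt_id t).const_mul A).add_const c
  have := ((Real.hasDerivAt_sin (A*t+c)).comp t h1).const_mul b
  exact this.congr_deriv (by ring)

lemma sum_shift {n : ℕ} [NeZero n] (hn : 2 ≤ n) (H : ℝ → ℝ)
    (hH : ∀ (x : ℝ) (k : ℤ), H (x + k * (2*π)) = H x) (i : Fin n) :
    ∑ j ∈ Finset.univ.erase i, H (2*π*((j:ℕ):ℝ)/n - 2*π*((i:ℕ):ℝ)/n)
      = ∑ j ∈ Finset.univ.erase (0 : Fin n), H (2*π*((j:ℕ):ℝ)/n) := by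
  have hn0 : (n:ℝ) ≠ 0 := Nat.cast_ne_zero.mpr (by omega)
  refine Finset.sum_nbij' (fun j : Fin n => j - i) (fun j : Fin n => j + i) ?_ ?_ ?_ ?_ ?_
  · intro a ha
    simp only [Finset.mem_erase, Finset.mem_univ, and_true] at ha ⊢
    rwa [sub_ne_zero]
  · intro a ha
    simp only [Finset.mem_erase, Finset.mem_univ, and_true] at ha ⊢
    intro h; exact ha (by rwa [add_eq_right] at h)
  · intro a _; exact sub_add_cancel a i
  · intro a _; exact add_sub_cancel_right a i
  · intro a _
    have hiv : (i:ℕ) < n := i.isLt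
    have h1 : ((a - i : Fin n) : ℕ) = (n - (i:ℕ) + (a:ℕ)) % n := by
      rw [Fin.sub_def]
    have h2 := Nat.div_add_mod (n - (i:ℕ) + (a:ℕ)) n
    set d := (n - (i:ℕ) + (a:ℕ)) / n with hd
    set k : ℤ := 1 - (d:ℤ) with hk
    have key : (((a - i : Fin n) : ℕ) : ℤ) = (a:ℕ) - (i:ℕ) + k * n := by
      have h2' : (n:ℤ) * d + ((a - i : Fin n) : ℕ) = (n:ℤ) - (i:ℕ) + (a:ℕ) := by
        rw [← h1] at h2
        omega
      rw [hk]; linarith [h2']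
    have keyR : ((((a - i : Fin n) : ℕ)) : ℝ) = ((a:ℕ):ℝ) - ((i:ℕ):ℝ) + (k:ℝ) * n := by
      exact_mod_cast congrArg (Int.cast : ℤ → ℝ) key
    have hangle : 2*π*(((a - i : Fin n):ℕ):ℝ)/n
        = (2*π*((a:ℕ):ℝ)/n - 2*π*((i:ℕ):ℝ)/n) + (k:ℝ) * (2*π) := by
      field_simp [keyR]; linear_combination keyR
    rw [hangle, hH]

lemma sum_sin_zero {n : ℕ} [NeZero n] (hn : 2 ≤ n) (h : ℝ → ℝ) :
    ∑ j ∈ Finset.univ.erase (0 : Fin n),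
      Real.sin (2*π*((j:ℕ):ℝ)/n) * h (Real.cos (2*π*((j:ℕ):ℝ)/n)) = 0 := by
  have hn0 : (n:ℝ) ≠ 0 := Nat.cast_ne_zero.mpr (by omega)
  have hangle : ∀ a : Fin n, a ≠ 0 →
      2*π*(((-a : Fin n):ℕ):ℝ)/n = 2*π - 2*π*((a:ℕ):ℝ)/n := by
    intro a ha
    have hv : ((-a : Fin n) : ℕ) = n - (a:ℕ) := by
      rw [Fin.neg_def]
      have h1 : 0 < (a:ℕ) := by
        rcases Nat.eq_zero_or_pos (a:ℕ) with h|h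
        · exact absurd (Fin.ext h) ha
        · exact h
      exact Nat.mod_eq_of_lt (by omega)
    rw [hv]
    have : (((n - (a:ℕ) : ℕ)):ℝ) = (n:ℝ) - ((a:ℕ):ℝ) := by
      push_cast [Nat.cast_sub (le_of_lt a.isLt)]; ring
    rw [this]; field_simp
  refine Finset.sum_involution (fun a _ => -a) ?_ ?_ ?_ ?_
  · intro a ha
    simp only [Finset.mem_erase, Finset.mem_univ, and_true] at ha
    rw [hangle a ha, Real.sin_sub, Real.cos_sub, Real.sin_two_pi, Real.cos_two_pi]
    ring
  · intro a ha hfa heq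
    simp only [Finset.mem_erase, Finset.mem_univ, and_true] at ha
    have h0 := hangle a ha
    have heq2 : -a = a := heq
    rw [heq2] at h0
    have h1 := congrArg Real.sin h0
    rw [Real.sin_sub, Real.sin_two_pi, Real.cos_two_pi] at h1
    have hs : Real.sin (2*π*((a:ℕ):ℝ)/n) = 0 := by linarith
    exact hfa (by rw [hs]; ring)
  · intro a ha
    simp only [Finset.mem_erase, Finset.mem_univ, and_true] at ha ⊢
    simpa using ha
  · intro a ha; exact neg_neg a

lemma gpos (σ r c : ℝ) (hσ : σ = 1 ∨ σ = -1) (hr : 0 < r) (hr1 : σ = 1 → r < 1)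
    (h1 : -1 ≤ c) (h2 : c < 1) : 0 < r^2*(1-c)*(2 - σ*r^2*(1-c)) := by
  have hu : 0 < r^2*(1-c) := mul_pos (pow_pos hr 2) (by linarith)
  rcases hσ with h|h <;> subst h
  · have hr' := hr1 rfl
    have hub : r^2*(1-c) < 2 := by nlinarith [sq_nonneg r]
    have : (0:ℝ) < 2 - 1*r^2*(1-c) := by nlinarith
    nlinarith
  · nlinarith

lemma cos_angle_lt_one {n : ℕ} (hn : 2 ≤ n) (i j : Fin n) (hij : i ≠ j) :
    Real.cos (2*π*((j:ℕ):ℝ)/n - 2*π*((i:ℕ):ℝ)/n) < 1 := by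
  have hn0 : (n:ℝ) ≠ 0 := Nat.cast_ne_zero.mpr (by omega)
  rcases lt_or_eq_of_le (Real.cos_le_one (2*π*((j:ℕ):ℝ)/n - 2*π*((i:ℕ):ℝ)/n)) with h|h
  · exact h
  exfalso
  obtain ⟨k, hk⟩ := (Real.cos_eq_one_iff _).mp h
  have hpi : (2*π:ℝ) ≠ 0 := by positivity
  field_simp at hk
  have h4 : ((k * n : ℤ):ℝ) = ((j:ℕ):ℝ) - ((i:ℕ):ℝ) := by
    apply mul_right_cancel₀ hpi
    push_cast
    linear_combination (2*π) * hk
  have h5 : (k*n : ℤ) = ((j:ℕ):ℤ) - ((i:ℕ):ℤ) := by exact_mod_cast h4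
  have hdvd : (n:ℤ) ∣ ((j:ℕ):ℤ) - ((i:ℕ):ℤ) := ⟨k, by linear_combination -h5⟩
  have habs : |((j:ℕ):ℤ) - ((i:ℕ):ℤ)| < n := by
    have hj := j.isLt; have hi := i.isLt
    rw [abs_lt]; omega
  have h6 := Int.eq_zero_of_abs_lt_dvd hdvd habs
  exact hij (Fin.ext (by omega)).symm

/-- Existence of polygonal positive elliptic (`σ = 1`) and negative elliptic
(`σ = −1`) relative equilibria with equal masses and third and fourth
coordinates independent of `i`: for `σ = ±1`, `n ≥ 2`, `m > 0`, `r > 0`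
(`r < 1` if `σ = 1`), setting `αᵢ = 2π(i−1)/n` (zero-based: `2πi/n`) and
`z = √(1 − σr²)`, there is `A > 0` such that the curves
`qᵢ(t) = (r cos(At+αᵢ), r sin(At+αᵢ), 0, z)` lie on `M³_σ`, avoid
singularities, and satisfy the equations of motion of the curved `n`-body
problem with all masses equal to `m`. -/
theorem polygonal_elliptic_relative_equilibria_exist
    (σ : ℝ) (hσ : σ = 1 ∨ σ = -1) (n : ℕ) (hn : 2 ≤ n)
    (m r : ℝ) (hm : 0 < m) (hr : 0 < r) (hr1 : σ = 1 → r < 1) :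
    ∃ A : ℝ, 0 < A ∧
      ∀ q : Fin n → ℝ → Fin 4 → ℝ,
        (∀ (i : Fin n) (t : ℝ),
          q i t = ![r * Real.cos (A * t + 2 * π * ((i : ℕ) : ℝ) / n),
                    r * Real.sin (A * t + 2 * π * ((i : ℕ) : ℝ) / n),
                    0, Real.sqrt (1 - σ * r ^ 2)]) →
        -- the bodies lie on `M³_σ`
        (∀ i t, odot σ (q i t) (q i t) = σ) ∧
        -- singularity avoidance: `σ - σ(q_i ⊙ q_j)² > 0` for `i ≠ j`
        (∀ i j, i ≠ j → ∀ t, 0 < σ - σ * (odot σ (q i t) (q j t)) ^ 2) ∧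
        -- the equations of motion with all masses equal to `m`
        (∀ i t k,
          deriv (deriv fun s => q i s k) t =
            (∑ j ∈ Finset.univ.erase i,
              m * (q j t k - σ * odot σ (q i t) (q j t) * q i t k) /
                (σ - σ * (odot σ (q i t) (q j t)) ^ 2) ^ ((3 : ℝ) / 2))
            - σ * odot σ (fun l => deriv (fun s => q i s l) t)
                (fun l => deriv (fun s => q i s l) t) * q i t k) := by
  haveI : NeZero n := ⟨by omega⟩
  have hσ2 : σ^2 = 1 := by rcases hσ with h|h <;> rw [h] <;> norm_num
  have hn0 : (n:ℝ) ≠ 0 := Nat.cast_ne_zero.mpr (by omega)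
  have hz0 : 0 ≤ 1 - σ*r^2 := by
    rcases hσ with h|h
    · have := hr1 h; rw [h]; nlinarith
    · rw [h]; nlinarith [sq_nonneg r]
  have hz2 : (Real.sqrt (1 - σ*r^2))^2 = 1 - σ*r^2 := Real.sq_sqrt hz0
  have hident : ∀ c : ℝ, σ - σ*(σ + r^2*(c-1))^2 = r^2*(1-c)*(2 - σ*r^2*(1-c)) := fun c => by
    linear_combination (-(σ + 2*r^2*(c-1))) * hσ2
  set S := ∑ j ∈ Finset.univ.erase (0:Fin n),
      (1 - Real.cos (2*π*((j:ℕ):ℝ)/n)) /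
        (r^2*(1-Real.cos (2*π*((j:ℕ):ℝ)/n))*(2 - σ*r^2*(1-Real.cos (2*π*((j:ℕ):ℝ)/n))))^((3:ℝ)/2)
    with hSdef
  have hS : 0 < S := by
    rw [hSdef]
    apply Finset.sum_pos
    · intro j hj
      have hj0 : j ≠ 0 := (Finset.mem_erase.mp hj).1
      have hc : Real.cos (2*π*((j:ℕ):ℝ)/n) < 1 := by
        have := cos_angle_lt_one hn 0 j (Ne.symm hj0)
        simpa using this
      exact div_pos (by linarith)
        (Real.rpow_pos_of_pos (gpos σ r _ hσ hr hr1 (Real.neg_one_le_cos _) hc) _)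
    · exact ⟨⟨1, by omega⟩, Finset.mem_erase.mpr ⟨by simp [Fin.ext_iff], Finset.mem_univ _⟩⟩
  set A := Real.sqrt (m*S) with hAdef
  have hApos : 0 < A := Real.sqrt_pos.mpr (mul_pos hm hS)
  have hA2 : A^2 = m*S := Real.sq_sqrt (le_of_lt (mul_pos hm hS))
  refine ⟨A, hApos, ?_⟩
  intro q hq
  have hodot : ∀ (i j : Fin n) (t : ℝ), odot σ (q i t) (q j t)
      = σ + r^2 * (Real.cos (2*π*((j:ℕ):ℝ)/n - 2*π*((i:ℕ):ℝ)/n) - 1) := by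
    intro i j t
    rw [hq i t, hq j t]
    show r * Real.cos (A*t + 2*π*((i:ℕ):ℝ)/n) * (r * Real.cos (A*t + 2*π*((j:ℕ):ℝ)/n))
        + r * Real.sin (A*t + 2*π*((i:ℕ):ℝ)/n) * (r * Real.sin (A*t + 2*π*((j:ℕ):ℝ)/n))
        + 0*0 + σ * Real.sqrt (1 - σ*r^2) * Real.sqrt (1 - σ*r^2)
      = σ + r^2 * (Real.cos (2*π*((j:ℕ):ℝ)/n - 2*π*((i:ℕ):ℝ)/n) - 1)
    rw [show 2*π*((j:ℕ):ℝ)/n - 2*π*((i:ℕ):ℝ)/n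
        = (A*t + 2*π*((j:ℕ):ℝ)/n) - (A*t + 2*π*((i:ℕ):ℝ)/n) by ring, Real.cos_sub]
    linear_combination σ*hz2 - r^2*hσ2
  have hqv : ∀ (i : Fin n) (t : ℝ),
      q i t 0 = r * Real.cos (A*t + 2*π*((i:ℕ):ℝ)/n) ∧
      q i t 1 = r * Real.sin (A*t + 2*π*((i:ℕ):ℝ)/n) ∧
      q i t 2 = 0 ∧ q i t 3 = Real.sqrt (1 - σ*r^2) := by
    intro i t; rw [hq i t]; exact ⟨rfl, rfl, rfl, rfl⟩
  have hScos : ∀ i : Fin n, ∑ j ∈ Finset.univ.erase i,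
      (1 - Real.cos (2*π*((j:ℕ):ℝ)/n - 2*π*((i:ℕ):ℝ)/n)) /
        (r^2*(1-Real.cos (2*π*((j:ℕ):ℝ)/n - 2*π*((i:ℕ):ℝ)/n))*(2 - σ*r^2*(1-Real.cos (2*π*((j:ℕ):ℝ)/n - 2*π*((i:ℕ):ℝ)/n))))^((3:ℝ)/2) = S := by
    intro i
    have h1 := sum_shift hn (fun x => (1 - Real.cos x) /
        (r^2*(1-Real.cos x)*(2 - σ*r^2*(1-Real.cos x)))^((3:ℝ)/2))
      (fun x k => by beta_reduce; rw [Real.cos_add_int_mul_two_pi]) i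
    exact h1.trans hSdef.symm
  have hSsin : ∀ i : Fin n, ∑ j ∈ Finset.univ.erase i,
      Real.sin (2*π*((j:ℕ):ℝ)/n - 2*π*((i:ℕ):ℝ)/n) /
        (r^2*(1-Real.cos (2*π*((j:ℕ):ℝ)/n - 2*π*((i:ℕ):ℝ)/n))*(2 - σ*r^2*(1-Real.cos (2*π*((j:ℕ):ℝ)/n - 2*π*((i:ℕ):ℝ)/n))))^((3:ℝ)/2) = 0 := by
    intro i
    have h1 := sum_shift hn (fun x => Real.sin x *
        (fun c => ((r^2*(1-c)*(2 - σ*r^2*(1-c)))^((3:ℝ)/2))⁻¹) (Real.cos x))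
      (fun x k => by beta_reduce; rw [Real.cos_add_int_mul_two_pi, Real.sin_add_int_mul_two_pi]) i
    have h2 := sum_sin_zero hn (fun c => ((r^2*(1-c)*(2 - σ*r^2*(1-c)))^((3:ℝ)/2))⁻¹)
    have e1 : (∑ j ∈ Finset.univ.erase i,
        Real.sin (2*π*((j:ℕ):ℝ)/n - 2*π*((i:ℕ):ℝ)/n) /
          (r^2*(1-Real.cos (2*π*((j:ℕ):ℝ)/n - 2*π*((i:ℕ):ℝ)/n))*(2 - σ*r^2*(1-Real.cos (2*π*((j:ℕ):ℝ)/n - 2*π*((i:ℕ):ℝ)/n))))^((3:ℝ)/2))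
        = ∑ j ∈ Finset.univ.erase i, (fun x => Real.sin x *
            (fun c => ((r^2*(1-c)*(2 - σ*r^2*(1-c)))^((3:ℝ)/2))⁻¹) (Real.cos x))
            (2*π*((j:ℕ):ℝ)/n - 2*π*((i:ℕ):ℝ)/n) :=
      Finset.sum_congr rfl (fun j _ => div_eq_mul_inv _ _)
    exact e1.trans (h1.trans h2)
  refine ⟨?_, ?_, ?_⟩
  · intro i t
    rw [hodot i i t, sub_self, Real.cos_zero]; ring
  · intro i j hij t
    rw [hodot i j t, hident]
    exact gpos σ r _ hσ hr hr1 (Real.neg_one_le_cos _) (cos_angle_lt_one hn i j hij)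
  · intro i t k
    have hf0 : (fun s => q i s 0) = (fun s => r * Real.cos (A*s + 2*π*((i:ℕ):ℝ)/n)) :=
      funext fun s => (hqv i s).1
    have hf1 : (fun s => q i s 1) = (fun s => r * Real.sin (A*s + 2*π*((i:ℕ):ℝ)/n)) :=
      funext fun s => (hqv i s).2.1
    have hf2 : (fun s => q i s 2) = (fun _ => (0:ℝ)) := funext fun s => (hqv i s).2.2.1
    have hf3 : (fun s => q i s 3) = (fun _ => Real.sqrt (1 - σ*r^2)) :=
      funext fun s => (hqv i s).2.2.2
    have hd0 : ∀ u, deriv (fun s => q i s 0) u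
        = -(r*A) * Real.sin (A*u + 2*π*((i:ℕ):ℝ)/n) := by
      intro u; rw [hf0]; exact (hasDerivAt_bcos r A _ u).deriv
    have hd1 : ∀ u, deriv (fun s => q i s 1) u
        = r*A * Real.cos (A*u + 2*π*((i:ℕ):ℝ)/n) := by
      intro u; rw [hf1]; exact (hasDerivAt_bsin r A _ u).deriv
    have hd2 : ∀ u, deriv (fun s => q i s 2) u = 0 := by
      intro u; rw [hf2]; exact deriv_const u 0
    have hd3 : ∀ u, deriv (fun s => q i s 3) u = 0 := by
      intro u; rw [hf3]; exact deriv_const u _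
    have hdd0 : deriv (deriv (fun s => q i s 0)) t
        = -(r*A^2) * Real.cos (A*t + 2*π*((i:ℕ):ℝ)/n) := by
      rw [funext hd0, (hasDerivAt_bsin (-(r*A)) A _ t).deriv]; ring
    have hdd1 : deriv (deriv (fun s => q i s 1)) t
        = -(r*A^2) * Real.sin (A*t + 2*π*((i:ℕ):ℝ)/n) := by
      rw [funext hd1, (hasDerivAt_bcos (r*A) A _ t).deriv]; ring
    have hdd2 : deriv (deriv (fun s => q i s 2)) t = 0 := by
      rw [funext hd2]; exact deriv_const t 0
    have hdd3 : deriv (deriv (fun s => q i s 3)) t = 0 := by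
      rw [funext hd3]; exact deriv_const t _
    have hodd : odot σ (fun l => deriv (fun s => q i s l) t)
        (fun l => deriv (fun s => q i s l) t) = A^2*r^2 := by
      simp only [odot]
      rw [hd0 t, hd1 t, hd2 t, hd3 t]
      linear_combination (r^2*A^2) * (Real.sin_sq_add_cos_sq (A*t + 2*π*((i:ℕ):ℝ)/n))
    have E0 : deriv (deriv (fun s => q i s 0)) t =
        (∑ j ∈ Finset.univ.erase i,
          m * (q j t 0 - σ * odot σ (q i t) (q j t) * q i t 0) /
            (σ - σ * (odot σ (q i t) (q j t)) ^ 2) ^ ((3 : ℝ) / 2))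
        - σ * odot σ (fun l => deriv (fun s => q i s l) t)
            (fun l => deriv (fun s => q i s l) t) * q i t 0 := by
      rw [hdd0, hodd, (hqv i t).1]
      have hterm : ∀ j ∈ Finset.univ.erase i,
          m * (q j t 0 - σ * odot σ (q i t) (q j t) * (r * Real.cos (A*t + 2*π*((i:ℕ):ℝ)/n))) /
            (σ - σ * (odot σ (q i t) (q j t)) ^ 2) ^ ((3 : ℝ) / 2)
          = (-(m*r*(1-σ*r^2) * Real.cos (A*t + 2*π*((i:ℕ):ℝ)/n)))
              * ((1 - Real.cos (2*π*((j:ℕ):ℝ)/n - 2*π*((i:ℕ):ℝ)/n)) /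
                (r^2*(1-Real.cos (2*π*((j:ℕ):ℝ)/n - 2*π*((i:ℕ):ℝ)/n))*(2 - σ*r^2*(1-Real.cos (2*π*((j:ℕ):ℝ)/n - 2*π*((i:ℕ):ℝ)/n))))^((3:ℝ)/2))
            + (-(m*r* Real.sin (A*t + 2*π*((i:ℕ):ℝ)/n)))
              * (Real.sin (2*π*((j:ℕ):ℝ)/n - 2*π*((i:ℕ):ℝ)/n) /
                (r^2*(1-Real.cos (2*π*((j:ℕ):ℝ)/n - 2*π*((i:ℕ):ℝ)/n))*(2 - σ*r^2*(1-Real.cos (2*π*((j:ℕ):ℝ)/n - 2*π*((i:ℕ):ℝ)/n))))^((3:ℝ)/2)) := by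
        intro j hj
        rw [hodot i j t, (hqv j t).1, hident]
        rw [show A*t + 2*π*((j:ℕ):ℝ)/n
            = (A*t + 2*π*((i:ℕ):ℝ)/n) + (2*π*((j:ℕ):ℝ)/n - 2*π*((i:ℕ):ℝ)/n) by ring,
          Real.cos_add]
        have hnum : m * (r * (Real.cos (A*t + 2*π*((i:ℕ):ℝ)/n) * Real.cos (2*π*((j:ℕ):ℝ)/n - 2*π*((i:ℕ):ℝ)/n) - Real.sin (A*t + 2*π*((i:ℕ):ℝ)/n) * Real.sin (2*π*((j:ℕ):ℝ)/n - 2*π*((i:ℕ):ℝ)/n))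
              - σ * (σ + r^2*(Real.cos (2*π*((j:ℕ):ℝ)/n - 2*π*((i:ℕ):ℝ)/n) - 1)) * (r * Real.cos (A*t + 2*π*((i:ℕ):ℝ)/n)))
            = (-(m*r*(1-σ*r^2) * Real.cos (A*t + 2*π*((i:ℕ):ℝ)/n))) * (1 - Real.cos (2*π*((j:ℕ):ℝ)/n - 2*π*((i:ℕ):ℝ)/n))
              + (-(m*r* Real.sin (A*t + 2*π*((i:ℕ):ℝ)/n))) * Real.sin (2*π*((j:ℕ):ℝ)/n - 2*π*((i:ℕ):ℝ)/n) := by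
          linear_combination (-(m*r*Real.cos (A*t + 2*π*((i:ℕ):ℝ)/n))) * hσ2
        rw [hnum]; ring
      rw [Finset.sum_congr rfl hterm, Finset.sum_add_distrib, ← Finset.mul_sum,
        ← Finset.mul_sum, hScos i, hSsin i]
      linear_combination ((σ*r^3 - r) * Real.cos (A*t + 2*π*((i:ℕ):ℝ)/n)) * hA2
    have E1 : deriv (deriv (fun s => q i s 1)) t =
        (∑ j ∈ Finset.univ.erase i,
          m * (q j t 1 - σ * odot σ (q i t) (q j t) * q i t 1) /
            (σ - σ * (odot σ (q i t) (q j t)) ^ 2) ^ ((3 : ℝ) / 2))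
        - σ * odot σ (fun l => deriv (fun s => q i s l) t)
            (fun l => deriv (fun s => q i s l) t) * q i t 1 := by
      rw [hdd1, hodd, (hqv i t).2.1]
      have hterm : ∀ j ∈ Finset.univ.erase i,
          m * (q j t 1 - σ * odot σ (q i t) (q j t) * (r * Real.sin (A*t + 2*π*((i:ℕ):ℝ)/n))) /
            (σ - σ * (odot σ (q i t) (q j t)) ^ 2) ^ ((3 : ℝ) / 2)
          = (-(m*r*(1-σ*r^2) * Real.sin (A*t + 2*π*((i:ℕ):ℝ)/n)))
              * ((1 - Real.cos (2*π*((j:ℕ):ℝ)/n - 2*π*((i:ℕ):ℝ)/n)) /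
                (r^2*(1-Real.cos (2*π*((j:ℕ):ℝ)/n - 2*π*((i:ℕ):ℝ)/n))*(2 - σ*r^2*(1-Real.cos (2*π*((j:ℕ):ℝ)/n - 2*π*((i:ℕ):ℝ)/n))))^((3:ℝ)/2))
            + ((m*r* Real.cos (A*t + 2*π*((i:ℕ):ℝ)/n)))
              * (Real.sin (2*π*((j:ℕ):ℝ)/n - 2*π*((i:ℕ):ℝ)/n) /
                (r^2*(1-Real.cos (2*π*((j:ℕ):ℝ)/n - 2*π*((i:ℕ):ℝ)/n))*(2 - σ*r^2*(1-Real.cos (2*π*((j:ℕ):ℝ)/n - 2*π*((i:ℕ):ℝ)/n))))^((3:ℝ)/2)) := by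
        intro j hj
        rw [hodot i j t, (hqv j t).2.1, hident]
        rw [show A*t + 2*π*((j:ℕ):ℝ)/n
            = (A*t + 2*π*((i:ℕ):ℝ)/n) + (2*π*((j:ℕ):ℝ)/n - 2*π*((i:ℕ):ℝ)/n) by ring,
          Real.sin_add]
        have hnum : m * (r * (Real.sin (A*t + 2*π*((i:ℕ):ℝ)/n) * Real.cos (2*π*((j:ℕ):ℝ)/n - 2*π*((i:ℕ):ℝ)/n) + Real.cos (A*t + 2*π*((i:ℕ):ℝ)/n) * Real.sin (2*π*((j:ℕ):ℝ)/n - 2*π*((i:ℕ):ℝ)/n))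
              - σ * (σ + r^2*(Real.cos (2*π*((j:ℕ):ℝ)/n - 2*π*((i:ℕ):ℝ)/n) - 1)) * (r * Real.sin (A*t + 2*π*((i:ℕ):ℝ)/n)))
            = (-(m*r*(1-σ*r^2) * Real.sin (A*t + 2*π*((i:ℕ):ℝ)/n))) * (1 - Real.cos (2*π*((j:ℕ):ℝ)/n - 2*π*((i:ℕ):ℝ)/n))
              + ((m*r* Real.cos (A*t + 2*π*((i:ℕ):ℝ)/n))) * Real.sin (2*π*((j:ℕ):ℝ)/n - 2*π*((i:ℕ):ℝ)/n) := by
          linear_combination (-(m*r*Real.sin (A*t + 2*π*((i:ℕ):ℝ)/n))) * hσ2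
        rw [hnum]; ring
      rw [Finset.sum_congr rfl hterm, Finset.sum_add_distrib, ← Finset.mul_sum,
        ← Finset.mul_sum, hScos i, hSsin i]
      linear_combination ((σ*r^3 - r) * Real.sin (A*t + 2*π*((i:ℕ):ℝ)/n)) * hA2
    have E2 : deriv (deriv (fun s => q i s 2)) t =
        (∑ j ∈ Finset.univ.erase i,
          m * (q j t 2 - σ * odot σ (q i t) (q j t) * q i t 2) /
            (σ - σ * (odot σ (q i t) (q j t)) ^ 2) ^ ((3 : ℝ) / 2))
        - σ * odot σ (fun l => deriv (fun s => q i s l) t)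
            (fun l => deriv (fun s => q i s l) t) * q i t 2 := by
      rw [hdd2, hodd, (hqv i t).2.2.1]
      have hsum0 : (∑ j ∈ Finset.univ.erase i,
          m * (q j t 2 - σ * odot σ (q i t) (q j t) * 0) /
            (σ - σ * (odot σ (q i t) (q j t)) ^ 2) ^ ((3 : ℝ) / 2)) = 0 :=
        Finset.sum_eq_zero (fun j _ => by rw [(hqv j t).2.2.1]; simp)
      rw [hsum0]; ring
    have E3 : deriv (deriv (fun s => q i s 3)) t =
        (∑ j ∈ Finset.univ.erase i,
          m * (q j t 3 - σ * odot σ (q i t) (q j t) * q i t 3) /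
            (σ - σ * (odot σ (q i t) (q j t)) ^ 2) ^ ((3 : ℝ) / 2))
        - σ * odot σ (fun l => deriv (fun s => q i s l) t)
            (fun l => deriv (fun s => q i s l) t) * q i t 3 := by
      rw [hdd3, hodd, (hqv i t).2.2.2]
      have hterm : ∀ j ∈ Finset.univ.erase i,
          m * (q j t 3 - σ * odot σ (q i t) (q j t) * Real.sqrt (1 - σ*r^2)) /
            (σ - σ * (odot σ (q i t) (q j t)) ^ 2) ^ ((3 : ℝ) / 2)
          = (m*Real.sqrt (1 - σ*r^2)*σ*r^2)
              * ((1 - Real.cos (2*π*((j:ℕ):ℝ)/n - 2*π*((i:ℕ):ℝ)/n)) /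
                (r^2*(1-Real.cos (2*π*((j:ℕ):ℝ)/n - 2*π*((i:ℕ):ℝ)/n))*(2 - σ*r^2*(1-Real.cos (2*π*((j:ℕ):ℝ)/n - 2*π*((i:ℕ):ℝ)/n))))^((3:ℝ)/2)) := by
        intro j hj
        rw [hodot i j t, (hqv j t).2.2.2, hident]
        have hnum3 : m * (Real.sqrt (1 - σ*r^2)
              - σ * (σ + r^2*(Real.cos (2*π*((j:ℕ):ℝ)/n - 2*π*((i:ℕ):ℝ)/n) - 1)) * Real.sqrt (1 - σ*r^2))
            = (m*Real.sqrt (1 - σ*r^2)*σ*r^2) * (1 - Real.cos (2*π*((j:ℕ):ℝ)/n - 2*π*((i:ℕ):ℝ)/n)) := by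
          linear_combination (-(m*Real.sqrt (1 - σ*r^2))) * hσ2
        rw [hnum3]; ring
      rw [Finset.sum_congr rfl hterm, ← Finset.mul_sum, hScos i]
      linear_combination (σ*r^2*Real.sqrt (1 - σ*r^2)) * hA2
    fin_cases k
    · exact E0
    · exact E1
    · exact E2
    · exact E3
end

section
/- Let f(x) = (x² − x⁴/4)^{−3/2} (the force–law factor of the curved n-body problem with σ = 1), defined for 0 < x < 2. Then for x ∈ (0,2), d/dx (x·f(x)) < 0 if and only if x² < 8/5; in particular x ↦ x·f(x) is strictly decreasing on (0, √(8/5)). -/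
open Real Set

/-- The reduced force-law factor of the curved n-body problem with `σ = 1`,
defined for `0 < x < 2`. -/
noncomputable def fpos (x : ℝ) : ℝ := (x ^ 2 - x ^ 4 / 4) ^ (-(3 : ℝ) / 2)

lemma xf_hasDerivAt (x : ℝ) (hx : x ∈ Set.Ioo (0 : ℝ) 2) :
    HasDerivAt (fun x : ℝ => x * fpos x)
      ((x ^ 2 - x ^ 4 / 4) ^ (-(5 : ℝ) / 2) * (5 / 4 * x ^ 4 - 2 * x ^ 2)) x := by
  obtain ⟨h0, h2⟩ := hx
  have hu : 0 < x ^ 2 - x ^ 4 / 4 := by nlinarith [mul_pos h0 h0, mul_pos (mul_pos h0 h0) (mul_pos (sub_pos.mpr h2) (by linarith : (0:ℝ) < 2 + x))]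
  have hderiv_u : HasDerivAt (fun x : ℝ => x ^ 2 - x ^ 4 / 4) (2 * x - x ^ 3) x := by
    have h := (hasDerivAt_pow 2 x).sub ((hasDerivAt_pow 4 x).div_const 4)
    exact h.congr_deriv (by norm_num)
  have hf : HasDerivAt fpos
      ((2 * x - x ^ 3) * (-(3 : ℝ) / 2) * (x ^ 2 - x ^ 4 / 4) ^ (-(3 : ℝ) / 2 - 1)) x :=
    hderiv_u.rpow_const (Or.inl hu.ne')
  have h := (hasDerivAt_id x).mul hf
  refine h.congr_deriv ?_
  have h1 : (x ^ 2 - x ^ 4 / 4) ^ (-(3 : ℝ) / 2)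
      = (x ^ 2 - x ^ 4 / 4) ^ (-(5 : ℝ) / 2) * (x ^ 2 - x ^ 4 / 4) := by
    rw [← Real.rpow_add_one hu.ne']
    norm_num
  have h2' : (x ^ 2 - x ^ 4 / 4) ^ (-(3 : ℝ) / 2 - 1)
      = (x ^ 2 - x ^ 4 / 4) ^ (-(5 : ℝ) / 2) := by
    norm_num
  simp only [fpos, h1, h2', id_eq]
  ring

/-- For `f(x) = (x² − x⁴/4)^{−3/2}` (the force-law factor with `σ = 1`) and
`x ∈ (0,2)`, the derivative of `x ↦ x f(x)` is negative iff `x² < 8/5`; in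
particular `x ↦ x f(x)` is strictly decreasing on `(0, √(8/5))`. -/
theorem xf_decreasing_iff_sigma_pos :
    (∀ x : ℝ, x ∈ Set.Ioo (0 : ℝ) 2 →
      (deriv (fun x : ℝ => x * fpos x) x < 0 ↔ x ^ 2 < 8 / 5)) ∧
    StrictAntiOn (fun x : ℝ => x * fpos x) (Set.Ioo 0 (Real.sqrt (8 / 5))) := by
  have hmain : ∀ x : ℝ, x ∈ Set.Ioo (0 : ℝ) 2 →
      (deriv (fun x : ℝ => x * fpos x) x < 0 ↔ x ^ 2 < 8 / 5) := by
    intro x hx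
    obtain ⟨h0, h2⟩ := hx
    have hu : 0 < x ^ 2 - x ^ 4 / 4 := by nlinarith [mul_pos h0 h0, mul_pos (mul_pos h0 h0) (mul_pos (sub_pos.mpr h2) (by linarith : (0:ℝ) < 2 + x))]
    have hu5 : 0 < (x ^ 2 - x ^ 4 / 4) ^ (-(5 : ℝ) / 2) := Real.rpow_pos_of_pos hu _
    rw [(xf_hasDerivAt x ⟨h0, h2⟩).deriv]
    constructor
    · intro h
      have hp : 5 / 4 * x ^ 4 - 2 * x ^ 2 < 0 := by
        by_contra h'
        push_neg at h'
        nlinarith [mul_nonneg hu5.le h']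
      nlinarith [mul_pos h0 h0]
    · intro h
      have hp : 5 / 4 * x ^ 4 - 2 * x ^ 2 < 0 := by nlinarith
      exact mul_neg_of_pos_of_neg hu5 hp
  refine ⟨hmain, ?_⟩
  have hsub : Set.Ioo (0 : ℝ) (Real.sqrt (8 / 5)) ⊆ Set.Ioo 0 2 := by
    apply Set.Ioo_subset_Ioo le_rfl
    have h4 : Real.sqrt 4 = 2 := by
      rw [show (4 : ℝ) = 2 ^ 2 by norm_num, Real.sqrt_sq (by norm_num)]
    calc Real.sqrt (8 / 5) ≤ Real.sqrt 4 := Real.sqrt_le_sqrt (by norm_num)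
      _ = 2 := h4
  apply strictAntiOn_of_deriv_neg (convex_Ioo _ _)
  · exact fun x hx => ((xf_hasDerivAt x (hsub hx)).continuousAt).continuousWithinAt
  · intro x hx
    rw [interior_Ioo] at hx
    exact (hmain x (hsub hx)).mpr ((Real.lt_sqrt hx.1.le).mp hx.2)
end
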